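/- arXiv:1209.2181 — 5 statements merged into one kernel-verified Lean document; each statement's English description precedes it below -/
import Mathlib

section
/- In the admissible-family setting, there is a constant C₁ > 0, independent of n, such that the operators W_n, X_n, Y_n on L¹(ν×θ) all have operator norm at most C₁; that is, ‖W_n f‖₁ ≤ C₁‖f‖₁, ‖X_n f‖₁ ≤ C₁‖f‖₁ and ‖Y_n f‖₁ ≤ C₁‖f‖₁ for every n and every f ∈ L¹(ν×θ). -/
open MeasureTheory Filter Set
open scoped ENNReal

/-- The Radon–Nikodym derivative `dν∘g/dν` of the action `a`, where
`(ν∘g)(A) = ν(g • A)`, i.e. the derivative of the pushforward of `ν` by `a g⁻¹`. -/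
noncomputable def rnD {Γ B : Type} [Group Γ] [MeasurableSpace B] (a : Γ → B → B)
    (ν : Measure B) (g : Γ) : B → ℝ≥0∞ :=
  (ν.map (a g⁻¹)).rnDeriv ν

/-- A nonsingular Borel action of `Γ` on `(B,ν)`. -/
def IsNonsingularAction {Γ B : Type} [Group Γ] [MeasurableSpace B] (a : Γ → B → B)
    (ν : Measure B) : Prop :=
  (∀ g : Γ, Measurable (a g)) ∧ (∀ b : B, a 1 b = b) ∧
    (∀ (g h : Γ) (b : B), a (g * h) b = a g (a h b)) ∧
    (∀ g : Γ, ν.map (a g) ≪ ν ∧ ν ≪ ν.map (a g))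

/-- The ratio set `RS(Γ ↷ (B,ν)) ⊆ [0,∞]`. -/
def ratioSet {Γ B : Type} [Group Γ] [MeasurableSpace B] (a : Γ → B → B) (ν : Measure B) :
    Set ℝ≥0∞ :=
  {t | (t ≠ ∞ ∧
      ∀ A : Set B, MeasurableSet A → 0 < ν A → ∀ ε : ℝ, 0 < ε →
        ∃ A' : Set B, A' ⊆ A ∧ MeasurableSet A' ∧ 0 < ν A' ∧
          ∃ g : Γ, g ≠ 1 ∧ (∀ b ∈ A', a g b ∈ A) ∧
            (∀ᵐ b ∂ν, b ∈ A' → rnD a ν g b ≠ ∞ ∧ |(rnD a ν g b).toReal - t.toReal| < ε)) ∨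
    (t = ∞ ∧
      ∀ A : Set B, MeasurableSet A → 0 < ν A → ∀ n : ℝ, 0 < n →
        ∃ A' : Set B, A' ⊆ A ∧ MeasurableSet A' ∧ 0 < ν A' ∧
          ∃ g : Γ, g ≠ 1 ∧ (∀ b ∈ A', a g b ∈ A) ∧
            (∀ᵐ b ∂ν, b ∈ A' → ENNReal.ofReal n < rnD a ν g b))}

/-- An admissible family of integral kernels for the nonsingular action `a` of `Γ`
on `(B,ν)`, with logarithmic Radon–Nikodym cocycle `R`; `C` is the uniform bound of
condition (3). -/
def IsAdmissibleFamily {Γ B : Type} [Group Γ] [MetricSpace B] [MeasurableSpace B]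
    (a : Γ → B → B) (ν : Measure B) (R : Γ → B → ℝ)
    (Υ : ℕ → Γ → B → B → ℝ) (C : ℝ) : Prop :=
  0 < C ∧
  (∀ (n : ℕ) (g : Γ) (b b' : B), 0 ≤ Υ n g b b') ∧
  (∀ (n : ℕ) (g : Γ), Measurable (fun p : B × B => Υ n g p.1 p.2)) ∧
  -- (1) each `Υ n (·, b, ·)` is a probability density
  (∀ (n : ℕ) (b : B), ∑' g : Γ, ∫⁻ b', ENNReal.ofReal (Υ n g b b') ∂ν = 1) ∧
  -- (2) supports shrink
  (∃ β : ℕ → ℝ, Tendsto β atTop (nhds 0) ∧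
    ∀ (n : ℕ) (g : Γ) (b b' : B), 0 < Υ n g b b' →
      dist b b' ≤ β n ∧ dist (a g⁻¹ b) (a g⁻¹ b') ≤ β n) ∧
  -- (3) uniform bound on the cocycle on the support
  (∀ (n : ℕ) (g : Γ), ∀ᵐ b ∂ν, ∀ᵐ b' ∂ν, 0 < Υ n g b b' →
      |R g⁻¹ b| + |R g⁻¹ b'| ≤ C) ∧
  -- (4) uniform integral bounds
  (∃ C₄ : ℝ, 0 < C₄ ∧
    (∀ n : ℕ, ∀ᵐ b' ∂ν,
      ∫⁻ b, ∑' g : Γ, ENNReal.ofReal (Υ n g b b') ∂ν ≤ ENNReal.ofReal C₄) ∧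
    (∀ n : ℕ, ∀ᵐ b' ∂ν,
      ∫⁻ b, ∑' g : Γ, ENNReal.ofReal (Υ n g b (a g b')) * rnD a ν g b' ∂ν
        ≤ ENNReal.ofReal C₄) ∧
    (∀ n : ℕ, ∀ᵐ b ∂ν,
      ∫⁻ b', ∑' g : Γ, ENNReal.ofReal (Υ n g (a g b) b') * rnD a ν g b ∂ν
        ≤ ENNReal.ofReal C₄))

/-- The operator `W_n`: `(W_n f)(b,t) = Σ_g ∫ f(b',t) Υ_n(g,b,b') dν(b')`. -/
noncomputable def Wop {Γ B : Type} [MeasurableSpace B] (ν : Measure B)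
    (Υ : ℕ → Γ → B → B → ℝ) (n : ℕ) (f : B × ℝ → ℝ) (p : B × ℝ) : ℝ :=
  ∑' g : Γ, ∫ b', f (b', p.2) * Υ n g p.1 b' ∂ν

/-- The operator `X_n`: `(X_n f)(b,t) = Σ_g ∫ f(g⁻¹b', t + R(g⁻¹,b')) Υ_n(g,b,b') dν(b')`. -/
noncomputable def Xop {Γ B : Type} [Group Γ] [MeasurableSpace B] (a : Γ → B → B)
    (ν : Measure B) (R : Γ → B → ℝ) (Υ : ℕ → Γ → B → B → ℝ) (n : ℕ)
    (f : B × ℝ → ℝ) (p : B × ℝ) : ℝ :=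
  ∑' g : Γ, ∫ b', f (a g⁻¹ b', p.2 + R g⁻¹ b') * Υ n g p.1 b' ∂ν

/-- The operator `Y_n`: `(Y_n f)(b,t) = Σ_g ∫ f(g⁻¹b, t + R(g⁻¹,b')) Υ_n(g,b,b') dν(b')`. -/
noncomputable def Yop {Γ B : Type} [Group Γ] [MeasurableSpace B] (a : Γ → B → B)
    (ν : Measure B) (R : Γ → B → ℝ) (Υ : ℕ → Γ → B → B → ℝ) (n : ℕ)
    (f : B × ℝ → ℝ) (p : B × ℝ) : ℝ :=
  ∑' g : Γ, ∫ b', f (a g⁻¹ p.1, p.2 + R g⁻¹ b') * Υ n g p.1 b' ∂ν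

/-- The operator `Z_n`:
`(Z_n f)(b,t) = Σ_g ∫ f(b, t + R(g⁻¹,b') − R(g⁻¹,b)) Υ_n(g,b,b') dν(b')`. -/
noncomputable def Zop {Γ B : Type} [Group Γ] [MeasurableSpace B] (a : Γ → B → B)
    (ν : Measure B) (R : Γ → B → ℝ) (Υ : ℕ → Γ → B → B → ℝ) (n : ℕ)
    (f : B × ℝ → ℝ) (p : B × ℝ) : ℝ :=
  ∑' g : Γ, ∫ b', f (p.1, p.2 + R g⁻¹ b' - R g⁻¹ p.1) * Υ n g p.1 b' ∂ν



section Helpers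

set_option linter.unusedSectionVars false

section Aux

lemma aux_enorm_tsum {ι : Type*} [Countable ι] (x : ι → ℝ) :
    (‖∑' i, x i‖₊ : ℝ≥0∞) ≤ ∑' i, (‖x i‖₊ : ℝ≥0∞) := by
  by_cases h : Summable fun i => ‖x i‖₊
  · calc (‖∑' i, x i‖₊ : ℝ≥0∞)
        ≤ ((∑' i, ‖x i‖₊ : NNReal) : ℝ≥0∞) := by exact_mod_cast nnnorm_tsum_le h
      _ = ∑' i, (‖x i‖₊ : ℝ≥0∞) := ENNReal.coe_tsum h
  · have : ∑' i, (‖x i‖₊ : ℝ≥0∞) = ⊤ := by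
      by_contra h'
      exact h (ENNReal.tsum_coe_ne_top_iff_summable.mp h')
    simp [this]

lemma aux_shift (θ : Measure ℝ) [IsProbabilityMeasure θ]
    (hθ1 : θ ≪ (volume : Measure ℝ)) (hθ2 : (volume : Measure ℝ) ≪ θ)
    (C C' : ℝ)
    (hθshift : ∀ t₀ : ℝ, |t₀| ≤ C →
      ∀ᵐ r ∂θ, (θ.map (fun s => s - t₀)).rnDeriv θ r ≤ ENNReal.ofReal C')
    (k : ℝ → ℝ≥0∞) (hk : Measurable k) (s : ℝ) (hs : |s| ≤ C) :
    ∫⁻ t, k (t + s) ∂θ ≤ ENNReal.ofReal C' * ∫⁻ t, k t ∂θ := by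
  have hmap : θ.map (fun t => t - (-s)) = θ.map (fun t => t + s) := by
    simp [sub_neg_eq_add]
  have hac : θ.map (fun t => t + s) ≪ θ := by
    refine Measure.AbsolutelyContinuous.trans ?_ hθ2
    have h1 : θ.map (fun t => t + s) ≪ volume.map (fun t => t + s) :=
      hθ1.map (measurable_add_const s)
    rwa [map_add_right_eq_self volume s] at h1
  haveI : IsProbabilityMeasure (θ.map (fun t => t + s)) :=
    Measure.isProbabilityMeasure_map (measurable_add_const s).aemeasurable
  have key := Measure.withDensity_rnDeriv_eq (θ.map (fun t => t + s)) θ hac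
  have h1 : ∫⁻ t, k (t + s) ∂θ = ∫⁻ r, k r ∂(θ.map (fun t => t + s)) :=
    (lintegral_map hk (measurable_add_const s)).symm
  rw [h1, ← key, lintegral_withDensity_eq_lintegral_mul θ
    (Measure.measurable_rnDeriv _ _) hk]
  have hbd := hθshift (-s) (by rwa [abs_neg])
  rw [hmap] at hbd
  calc ∫⁻ r, ((θ.map (fun t => t + s)).rnDeriv θ * k) r ∂θ
      ≤ ∫⁻ r, ENNReal.ofReal C' * k r ∂θ := by
        refine lintegral_mono_ae (hbd.mono fun r hr => ?_)
        exact mul_le_mul_left hr _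
    _ = ENNReal.ofReal C' * ∫⁻ r, k r ∂θ := lintegral_const_mul _ hk

lemma aux_null_shift (θ : Measure ℝ)
    (hθ1 : θ ≪ (volume : Measure ℝ)) (hθ2 : (volume : Measure ℝ) ≪ θ)
    {A : Set ℝ} (h0 : θ A = 0) (s : ℝ) : θ {t | t + s ∈ A} = 0 := by
  have hvA : (volume : Measure ℝ) A = 0 := hθ2 h0
  have hvA' : (volume : Measure ℝ) (toMeasurable volume A) = 0 := by
    rwa [measure_toMeasurable]
  have hpre : (volume : Measure ℝ) ((fun t => t + s) ⁻¹' (toMeasurable volume A)) = 0 := by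
    rw [← Measure.map_apply (measurable_add_const s) (measurableSet_toMeasurable _ _),
      map_add_right_eq_self volume s]
    exact hvA'
  refine hθ1 (measure_mono_null ?_ hpre)
  exact fun t ht => subset_toMeasurable _ _ ht

end Aux

section ActionAux

variable {Γ B : Type} [Group Γ] [MeasurableSpace B] {a : Γ → B → B} {ν : Measure B}

lemma aux_inv_cancel (hact : IsNonsingularAction a ν) (g : Γ) (x : B) :
    a g (a g⁻¹ x) = x := by
  rw [← hact.2.2.1 g g⁻¹ x, mul_inv_cancel, hact.2.1]

lemma aux_cov [IsProbabilityMeasure ν] (hact : IsNonsingularAction a ν)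
    (g : Γ) (k : B → ℝ≥0∞) (hk : Measurable k) :
    ∫⁻ b, k (a g⁻¹ b) ∂ν = ∫⁻ x, rnD a ν g x * k x ∂ν := by
  haveI : IsProbabilityMeasure (ν.map (a g⁻¹)) :=
    Measure.isProbabilityMeasure_map (hact.1 g⁻¹).aemeasurable
  have hac : ν.map (a g⁻¹) ≪ ν := (hact.2.2.2 g⁻¹).1
  rw [← lintegral_map hk (hact.1 g⁻¹),
    ← Measure.withDensity_rnDeriv_eq (ν.map (a g⁻¹)) ν hac,
    lintegral_withDensity_eq_lintegral_mul ν (Measure.measurable_rnDeriv _ _) hk]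
  rfl

lemma aux_null_pre (hact : IsNonsingularAction a ν) (g : Γ) {M : Set B}
    (hM : MeasurableSet M) (h0 : ν M = 0) : ν {b | a g⁻¹ b ∈ M} = 0 := by
  have h1 : ν.map (a g⁻¹) M = 0 := (hact.2.2.2 g⁻¹).1 h0
  rwa [Measure.map_apply (hact.1 g⁻¹) hM] at h1

end ActionAux

section BoundW

variable {Γ B : Type} [Group Γ] [Countable Γ] [MeasurableSpace B]

lemma boundW (ν : Measure B) [IsProbabilityMeasure ν]
    (θ : Measure ℝ) [IsProbabilityMeasure θ]
    (Υe : Γ → B → B → ℝ≥0∞) (hΥe : ∀ g, Measurable fun p : B × B => Υe g p.1 p.2)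
    (ψ : B × ℝ → ℝ≥0∞) (hψ : Measurable ψ) (C₄ : ℝ)
    (h4 : ∀ᵐ b' ∂ν, ∫⁻ b, ∑' g : Γ, Υe g b b' ∂ν ≤ ENNReal.ofReal C₄) :
    ∫⁻ p, ∑' g : Γ, ∫⁻ b', ψ (b', p.2) * Υe g p.1 b' ∂ν ∂(ν.prod θ)
      ≤ ENNReal.ofReal C₄ * ∫⁻ p, ψ p ∂(ν.prod θ) := by
  have hψt : ∀ t : ℝ, Measurable fun b' : B => ψ (b', t) :=
    fun t => hψ.comp (measurable_id.prodMk measurable_const)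
  have hΥ1 : ∀ (g : Γ) (b' : B), Measurable fun b => Υe g b b' :=
    fun g b' => (hΥe g).comp (measurable_id.prodMk measurable_const)
  have hΥ2 : ∀ (g : Γ) (b : B), Measurable fun b' => Υe g b b' :=
    fun g b => (hΥe g).comp (measurable_const.prodMk measurable_id)
  have hI : ∀ g : Γ, Measurable fun b' => ∫⁻ b, Υe g b b' ∂ν := fun g =>
    Measurable.lintegral_prod_left (f := fun b b' => Υe g b b') (hΥe g)
  -- measurability of the g-term as a function of p
  have hterm : ∀ g : Γ,
      Measurable fun p : B × ℝ => ∫⁻ b', ψ (b', p.2) * Υe g p.1 b' ∂ν := fun g => by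
    apply Measurable.lintegral_prod_right (f := fun (p : B × ℝ) b' => ψ (b', p.2) * Υe g p.1 b')
    exact ((hψ.comp (measurable_snd.prodMk measurable_fst.snd)).mul
      ((hΥe g).comp (measurable_fst.fst.prodMk measurable_snd)))
  have key : ∀ t : ℝ,
      ∫⁻ b, ∑' g : Γ, ∫⁻ b', ψ (b', t) * Υe g b b' ∂ν ∂ν
        ≤ ENNReal.ofReal C₄ * ∫⁻ b', ψ (b', t) ∂ν := by
    intro t
    have e1 : ∫⁻ b, ∑' g : Γ, ∫⁻ b', ψ (b', t) * Υe g b b' ∂ν ∂ν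
        = ∑' g : Γ, ∫⁻ b, ∫⁻ b', ψ (b', t) * Υe g b b' ∂ν ∂ν :=
      lintegral_tsum fun g => (Measurable.lintegral_prod_right
        (f := fun b b' => ψ (b', t) * Υe g b b')
        (((hψt t).comp measurable_snd).mul (hΥe g))).aemeasurable
    have e2 : ∀ g : Γ, ∫⁻ b, ∫⁻ b', ψ (b', t) * Υe g b b' ∂ν ∂ν
        = ∫⁻ b', ψ (b', t) * ∫⁻ b, Υe g b b' ∂ν ∂ν := by
      intro g
      rw [lintegral_lintegral_swap
        (((hψt t).comp measurable_snd).mul (hΥe g)).aemeasurable]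
      exact lintegral_congr fun b' => lintegral_const_mul _ (hΥ1 g b')
    have e3 : ∑' g : Γ, ∫⁻ b', ψ (b', t) * ∫⁻ b, Υe g b b' ∂ν ∂ν
        = ∫⁻ b', ψ (b', t) * ∑' g : Γ, ∫⁻ b, Υe g b b' ∂ν ∂ν := by
      rw [← lintegral_tsum (f := fun g b' => ψ (b', t) * ∫⁻ b, Υe g b b' ∂ν)
        fun g => ((hψt t).mul (hI g)).aemeasurable]
      exact lintegral_congr fun b' => ENNReal.tsum_mul_left
    have h4' : ∀ᵐ b' ∂ν, ∑' g : Γ, ∫⁻ b, Υe g b b' ∂ν ≤ ENNReal.ofReal C₄ := by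
      refine h4.mono fun b' hb' => ?_
      rwa [lintegral_tsum fun g => (hΥ1 g b').aemeasurable] at hb'
    calc ∫⁻ b, ∑' g : Γ, ∫⁻ b', ψ (b', t) * Υe g b b' ∂ν ∂ν
        = ∫⁻ b', ψ (b', t) * ∑' g : Γ, ∫⁻ b, Υe g b b' ∂ν ∂ν := by
          rw [e1]; rw [← e3]; exact tsum_congr e2
      _ ≤ ∫⁻ b', ψ (b', t) * ENNReal.ofReal C₄ ∂ν :=
          lintegral_mono_ae (h4'.mono fun b' hb' => mul_le_mul_right hb' _)
      _ = ENNReal.ofReal C₄ * ∫⁻ b', ψ (b', t) ∂ν := by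
          rw [lintegral_mul_const _ (hψt t), mul_comm]
  calc ∫⁻ p, ∑' g : Γ, ∫⁻ b', ψ (b', p.2) * Υe g p.1 b' ∂ν ∂(ν.prod θ)
      = ∫⁻ t, ∫⁻ b, ∑' g : Γ, ∫⁻ b', ψ (b', t) * Υe g b b' ∂ν ∂ν ∂θ :=
        lintegral_prod_symm _ (Measurable.ennreal_tsum hterm).aemeasurable
    _ ≤ ∫⁻ t, ENNReal.ofReal C₄ * ∫⁻ b', ψ (b', t) ∂ν ∂θ := lintegral_mono key
    _ = ENNReal.ofReal C₄ * ∫⁻ t, ∫⁻ b', ψ (b', t) ∂ν ∂θ :=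
        lintegral_const_mul _ (Measurable.lintegral_prod_left
          (f := fun b' t => ψ (b', t)) (by exact hψ))
    _ = ENNReal.ofReal C₄ * ∫⁻ p, ψ p ∂(ν.prod θ) := by
        rw [lintegral_prod_symm ψ hψ.aemeasurable]

end BoundW

section BoundX

variable {Γ B : Type} [Group Γ] [Countable Γ] [MeasurableSpace B]

lemma boundX (ν : Measure B) [IsProbabilityMeasure ν] (a : Γ → B → B)
    (hact : IsNonsingularAction a ν)
    (θ : Measure ℝ) [IsProbabilityMeasure θ]
    (hθ1 : θ ≪ (volume : Measure ℝ)) (hθ2 : (volume : Measure ℝ) ≪ θ)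
    (C C' : ℝ)
    (hθshift : ∀ t₀ : ℝ, |t₀| ≤ C →
      ∀ᵐ r ∂θ, (θ.map (fun s => s - t₀)).rnDeriv θ r ≤ ENNReal.ofReal C')
    (R : Γ → B → ℝ) (hR : ∀ g : Γ, Measurable (R g))
    (Υe : Γ → B → B → ℝ≥0∞) (hΥe : ∀ g, Measurable fun p : B × B => Υe g p.1 p.2)
    (hsupp : ∀ g : Γ, ∀ᵐ b' ∂ν, ¬ |R g⁻¹ b'| ≤ C → ∀ᵐ b ∂ν, Υe g b b' = 0)
    (ψ : B × ℝ → ℝ≥0∞) (hψ : Measurable ψ) (C₄ : ℝ)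
    (h4 : ∀ᵐ x ∂ν, ∑' g : Γ, (∫⁻ b, Υe g b (a g x) ∂ν) * rnD a ν g x
      ≤ ENNReal.ofReal C₄) :
    ∫⁻ p, ∑' g : Γ, ∫⁻ b', ψ (a g⁻¹ b', p.2 + R g⁻¹ b') * Υe g p.1 b' ∂ν ∂(ν.prod θ)
      ≤ ENNReal.ofReal C' * (ENNReal.ofReal C₄ * ∫⁻ p, ψ p ∂(ν.prod θ)) := by
  -- basic measurability
  have hΥ1 : ∀ (g : Γ) (b' : B), Measurable fun b => Υe g b b' :=
    fun g b' => (hΥe g).comp (measurable_id.prodMk measurable_const)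
  have hI : ∀ g : Γ, Measurable fun b' => ∫⁻ b, Υe g b b' ∂ν := fun g =>
    Measurable.lintegral_prod_left (f := fun b b' => Υe g b b') (hΥe g)
  have hF : ∀ g : Γ, Measurable fun q : B × ℝ => ψ (a g⁻¹ q.1, q.2 + R g⁻¹ q.1) :=
    fun g => hψ.comp (((hact.1 g⁻¹).comp measurable_fst).prodMk
      (measurable_snd.add ((hR g⁻¹).comp measurable_fst)))
  have hψΘ : Measurable fun x => ∫⁻ t, ψ (x, t) ∂θ :=
    Measurable.lintegral_prod_right (f := fun x t => ψ (x, t)) (by exact hψ)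
  have hrnD : ∀ g : Γ, Measurable (rnD a ν g) := fun g => Measure.measurable_rnDeriv _ _
  -- the g-term over the product space, measurable
  have hterm : ∀ g : Γ, Measurable fun p : B × ℝ =>
      ∫⁻ b', ψ (a g⁻¹ b', p.2 + R g⁻¹ b') * Υe g p.1 b' ∂ν := fun g => by
    apply Measurable.lintegral_prod_right
      (f := fun (p : B × ℝ) b' => ψ (a g⁻¹ b', p.2 + R g⁻¹ b') * Υe g p.1 b')
    exact ((hψ.comp (((hact.1 g⁻¹).comp measurable_snd).prodMk
        (measurable_fst.snd.add ((hR g⁻¹).comp measurable_snd)))).mul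
      ((hΥe g).comp (measurable_fst.fst.prodMk measurable_snd)))
  -- Step 1: exchange the sum and the product integral
  rw [lintegral_tsum fun g => (hterm g).aemeasurable]
  -- Step 2: per-g reduction
  have step2 : ∀ g : Γ,
      ∫⁻ p, ∫⁻ b', ψ (a g⁻¹ b', p.2 + R g⁻¹ b') * Υe g p.1 b' ∂ν ∂(ν.prod θ)
        = ∫⁻ b', (∫⁻ t, ψ (a g⁻¹ b', t + R g⁻¹ b') ∂θ) * ∫⁻ b, Υe g b b' ∂ν ∂ν := by
    intro g
    rw [lintegral_prod_symm _ (hterm g).aemeasurable]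
    have e1 : ∀ t : ℝ,
        ∫⁻ b, ∫⁻ b', ψ (a g⁻¹ b', t + R g⁻¹ b') * Υe g b b' ∂ν ∂ν
          = ∫⁻ b', ψ (a g⁻¹ b', t + R g⁻¹ b') * ∫⁻ b, Υe g b b' ∂ν ∂ν := by
      intro t
      rw [lintegral_lintegral_swap (f := fun b b' =>
        ψ (a g⁻¹ b', t + R g⁻¹ b') * Υe g b b')
        (((hF g).comp (measurable_snd.prodMk measurable_const)).mul
          (hΥe g)).aemeasurable]
      exact lintegral_congr fun b' => lintegral_const_mul _ (hΥ1 g b')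
    calc ∫⁻ t, ∫⁻ b, ∫⁻ b', ψ (a g⁻¹ b', t + R g⁻¹ b') * Υe g b b' ∂ν ∂ν ∂θ
        = ∫⁻ t, ∫⁻ b', ψ (a g⁻¹ b', t + R g⁻¹ b') * ∫⁻ b, Υe g b b' ∂ν ∂ν ∂θ :=
          lintegral_congr e1
      _ = ∫⁻ b', ∫⁻ t, ψ (a g⁻¹ b', t + R g⁻¹ b') * ∫⁻ b, Υe g b b' ∂ν ∂θ ∂ν := by
          exact lintegral_lintegral_swap (f := fun t b' =>
            ψ (a g⁻¹ b', t + R g⁻¹ b') * ∫⁻ b, Υe g b b' ∂ν)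
            (((hF g).comp (measurable_snd.prodMk measurable_fst)).mul
              ((hI g).comp measurable_snd)).aemeasurable
      _ = ∫⁻ b', (∫⁻ t, ψ (a g⁻¹ b', t + R g⁻¹ b') ∂θ) * ∫⁻ b, Υe g b b' ∂ν ∂ν :=
          lintegral_congr fun b' => lintegral_mul_const _
            ((hF g).comp (measurable_const.prodMk measurable_id))
  -- Step 3: a.e. bound using the shift estimate and the support condition
  have step3 : ∀ g : Γ,
      ∫⁻ b', (∫⁻ t, ψ (a g⁻¹ b', t + R g⁻¹ b') ∂θ) * ∫⁻ b, Υe g b b' ∂ν ∂ν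
        ≤ ∫⁻ b', (ENNReal.ofReal C' * ∫⁻ t, ψ (a g⁻¹ b', t) ∂θ)
            * ∫⁻ b, Υe g b b' ∂ν ∂ν := by
    intro g
    refine lintegral_mono_ae ((hsupp g).mono fun b' hb' => ?_)
    by_cases hc : |R g⁻¹ b'| ≤ C
    · refine mul_le_mul_left ?_ _
      exact aux_shift θ hθ1 hθ2 C C' hθshift (fun t => ψ (a g⁻¹ b', t))
        (hψ.comp (measurable_const.prodMk measurable_id)) (R g⁻¹ b') hc
    · have h0 : ∫⁻ b, Υe g b b' ∂ν = 0 := by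
        rw [lintegral_congr_ae (hb' hc)]
        exact lintegral_zero
      simp [h0]
  -- Step 4: change of variables b' = a g x
  have step4 : ∀ g : Γ,
      ∫⁻ b', (ENNReal.ofReal C' * ∫⁻ t, ψ (a g⁻¹ b', t) ∂θ) * ∫⁻ b, Υe g b b' ∂ν ∂ν
        = ENNReal.ofReal C' * ∫⁻ x, (∫⁻ t, ψ (x, t) ∂θ)
            * ((∫⁻ b, Υe g b (a g x) ∂ν) * rnD a ν g x) ∂ν := by
    intro g
    have e1 : ∫⁻ b', (ENNReal.ofReal C' * ∫⁻ t, ψ (a g⁻¹ b', t) ∂θ)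
          * ∫⁻ b, Υe g b b' ∂ν ∂ν
        = ∫⁻ b', (fun x => (ENNReal.ofReal C' * ∫⁻ t, ψ (x, t) ∂θ)
            * ∫⁻ b, Υe g b (a g x) ∂ν) (a g⁻¹ b') ∂ν := by
      refine lintegral_congr fun b' => ?_
      simp only [aux_inv_cancel hact g b']
    have hIg : Measurable fun x => ∫⁻ b, Υe g b (a g x) ∂ν := (hI g).comp (hact.1 g)
    have hmm : Measurable fun x => (∫⁻ t, ψ (x, t) ∂θ)
        * ((∫⁻ b, Υe g b (a g x) ∂ν) * rnD a ν g x) := hψΘ.mul (hIg.mul (hrnD g))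
    rw [e1, aux_cov hact g (fun x => (ENNReal.ofReal C' * ∫⁻ t, ψ (x, t) ∂θ)
      * ∫⁻ b, Υe g b (a g x) ∂ν) ((measurable_const.mul hψΘ).mul hIg),
      ← lintegral_const_mul _ hmm]
    refine lintegral_congr fun x => ?_
    ring
  -- Step 5: sum over g and use hypothesis (4)
  calc ∑' g : Γ, ∫⁻ p, ∫⁻ b', ψ (a g⁻¹ b', p.2 + R g⁻¹ b') * Υe g p.1 b' ∂ν ∂(ν.prod θ)
      ≤ ∑' g : Γ, ENNReal.ofReal C' * ∫⁻ x, (∫⁻ t, ψ (x, t) ∂θ)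
          * ((∫⁻ b, Υe g b (a g x) ∂ν) * rnD a ν g x) ∂ν := by
        refine ENNReal.tsum_le_tsum fun g => ?_
        rw [step2 g, ← step4 g]
        exact step3 g
    _ = ENNReal.ofReal C' * ∫⁻ x, (∫⁻ t, ψ (x, t) ∂θ)
          * ∑' g : Γ, (∫⁻ b, Υe g b (a g x) ∂ν) * rnD a ν g x ∂ν := by
        have hmm : ∀ g : Γ, Measurable fun x => (∫⁻ t, ψ (x, t) ∂θ)
            * ((∫⁻ b, Υe g b (a g x) ∂ν) * rnD a ν g x) :=
          fun g => hψΘ.mul (((hI g).comp (hact.1 g)).mul (hrnD g))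
        rw [ENNReal.tsum_mul_left, ← lintegral_tsum (f := fun (g : Γ) x =>
          (∫⁻ t, ψ (x, t) ∂θ) * ((∫⁻ b, Υe g b (a g x) ∂ν) * rnD a ν g x))
          (fun g => (hmm g).aemeasurable)]
        congr 1
        exact lintegral_congr fun x => ENNReal.tsum_mul_left
    _ ≤ ENNReal.ofReal C' * ∫⁻ x, (∫⁻ t, ψ (x, t) ∂θ) * ENNReal.ofReal C₄ ∂ν := by
        refine mul_le_mul_right (lintegral_mono_ae (h4.mono fun x hx => ?_)) _
        exact mul_le_mul_right hx _
    _ = ENNReal.ofReal C' * (ENNReal.ofReal C₄ * ∫⁻ p, ψ p ∂(ν.prod θ)) := by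
        rw [lintegral_mul_const _ hψΘ, mul_comm (∫⁻ x, (∫⁻ t, ψ (x, t) ∂θ) ∂ν),
          lintegral_prod ψ hψ.aemeasurable]

end BoundX

section BoundY

variable {Γ B : Type} [Group Γ] [Countable Γ] [MeasurableSpace B]

lemma boundY (ν : Measure B) [IsProbabilityMeasure ν] (a : Γ → B → B)
    (hact : IsNonsingularAction a ν)
    (θ : Measure ℝ) [IsProbabilityMeasure θ]
    (hθ1 : θ ≪ (volume : Measure ℝ)) (hθ2 : (volume : Measure ℝ) ≪ θ)
    (C C' : ℝ)
    (hθshift : ∀ t₀ : ℝ, |t₀| ≤ C →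
      ∀ᵐ r ∂θ, (θ.map (fun s => s - t₀)).rnDeriv θ r ≤ ENNReal.ofReal C')
    (R : Γ → B → ℝ) (hR : ∀ g : Γ, Measurable (R g))
    (Υe : Γ → B → B → ℝ≥0∞) (hΥe : ∀ g, Measurable fun p : B × B => Υe g p.1 p.2)
    (hsupp : ∀ g : Γ, ∀ᵐ b ∂ν, ∀ᵐ b' ∂ν, ¬ |R g⁻¹ b'| ≤ C → Υe g b b' = 0)
    (ψ : B × ℝ → ℝ≥0∞) (hψ : Measurable ψ) (C₄ : ℝ)
    (h4 : ∀ᵐ x ∂ν, ∑' g : Γ, (∫⁻ b', Υe g (a g x) b' ∂ν) * rnD a ν g x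
      ≤ ENNReal.ofReal C₄) :
    ∫⁻ p, ∑' g : Γ, ∫⁻ b', ψ (a g⁻¹ p.1, p.2 + R g⁻¹ b') * Υe g p.1 b' ∂ν ∂(ν.prod θ)
      ≤ ENNReal.ofReal C' * (ENNReal.ofReal C₄ * ∫⁻ p, ψ p ∂(ν.prod θ)) := by
  have hΥ2 : ∀ (g : Γ) (b : B), Measurable fun b' => Υe g b b' :=
    fun g b => (hΥe g).comp (measurable_const.prodMk measurable_id)
  have hJ : ∀ g : Γ, Measurable fun b => ∫⁻ b', Υe g b b' ∂ν := fun g =>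
    Measurable.lintegral_prod_right (f := fun b b' => Υe g b b') (hΥe g)
  have hψΘ : Measurable fun x => ∫⁻ t, ψ (x, t) ∂θ :=
    Measurable.lintegral_prod_right (f := fun x t => ψ (x, t)) (by exact hψ)
  have hrnD : ∀ g : Γ, Measurable (rnD a ν g) := fun g => Measure.measurable_rnDeriv _ _
  have hterm : ∀ g : Γ, Measurable fun p : B × ℝ =>
      ∫⁻ b', ψ (a g⁻¹ p.1, p.2 + R g⁻¹ b') * Υe g p.1 b' ∂ν := fun g => by
    apply Measurable.lintegral_prod_right
      (f := fun (p : B × ℝ) b' => ψ (a g⁻¹ p.1, p.2 + R g⁻¹ b') * Υe g p.1 b')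
    exact ((hψ.comp (((hact.1 g⁻¹).comp measurable_fst.fst).prodMk
        (measurable_fst.snd.add ((hR g⁻¹).comp measurable_snd)))).mul
      ((hΥe g).comp (measurable_fst.fst.prodMk measurable_snd)))
  rw [lintegral_tsum fun g => (hterm g).aemeasurable]
  -- per-g reduction to an iterated integral with t innermost
  have step2 : ∀ g : Γ,
      ∫⁻ p, ∫⁻ b', ψ (a g⁻¹ p.1, p.2 + R g⁻¹ b') * Υe g p.1 b' ∂ν ∂(ν.prod θ)
        = ∫⁻ b, ∫⁻ b', (∫⁻ t, ψ (a g⁻¹ b, t + R g⁻¹ b') ∂θ) * Υe g b b' ∂ν ∂ν := by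
    intro g
    rw [lintegral_prod _ (hterm g).aemeasurable]
    refine lintegral_congr fun b => ?_
    rw [lintegral_lintegral_swap (f := fun t b' =>
      ψ (a g⁻¹ b, t + R g⁻¹ b') * Υe g b b')
      ((hψ.comp (measurable_const.prodMk
        (measurable_fst.add ((hR g⁻¹).comp measurable_snd)))).mul
        ((hΥ2 g b).comp measurable_snd)).aemeasurable]
    refine lintegral_congr fun b' => ?_
    exact lintegral_mul_const _ (hψ.comp (measurable_const.prodMk
      (measurable_id.add measurable_const)))
  -- a.e. bound using the shift estimate and the support condition
  have step3 : ∀ g : Γ,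
      ∫⁻ b, ∫⁻ b', (∫⁻ t, ψ (a g⁻¹ b, t + R g⁻¹ b') ∂θ) * Υe g b b' ∂ν ∂ν
        ≤ ∫⁻ b, (ENNReal.ofReal C' * ∫⁻ t, ψ (a g⁻¹ b, t) ∂θ)
            * ∫⁻ b', Υe g b b' ∂ν ∂ν := by
    intro g
    refine lintegral_mono_ae ((hsupp g).mono fun b hb => ?_)
    have inner : ∫⁻ b', (∫⁻ t, ψ (a g⁻¹ b, t + R g⁻¹ b') ∂θ) * Υe g b b' ∂ν
        ≤ ∫⁻ b', (ENNReal.ofReal C' * ∫⁻ t, ψ (a g⁻¹ b, t) ∂θ) * Υe g b b' ∂ν := by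
      refine lintegral_mono_ae (hb.mono fun b' hb' => ?_)
      by_cases hc : |R g⁻¹ b'| ≤ C
      · refine mul_le_mul_left ?_ _
        exact aux_shift θ hθ1 hθ2 C C' hθshift (fun t => ψ (a g⁻¹ b, t))
          (hψ.comp (measurable_const.prodMk measurable_id)) (R g⁻¹ b') hc
      · simp [hb' hc]
    refine inner.trans ?_
    rw [lintegral_const_mul _ (hΥ2 g b)]
  -- change of variables b = a g x
  have step4 : ∀ g : Γ,
      ∫⁻ b, (ENNReal.ofReal C' * ∫⁻ t, ψ (a g⁻¹ b, t) ∂θ) * ∫⁻ b', Υe g b b' ∂ν ∂ν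
        = ENNReal.ofReal C' * ∫⁻ x, (∫⁻ t, ψ (x, t) ∂θ)
            * ((∫⁻ b', Υe g (a g x) b' ∂ν) * rnD a ν g x) ∂ν := by
    intro g
    have hJg : Measurable fun x => ∫⁻ b', Υe g (a g x) b' ∂ν := (hJ g).comp (hact.1 g)
    have hmm : Measurable fun x => (∫⁻ t, ψ (x, t) ∂θ)
        * ((∫⁻ b', Υe g (a g x) b' ∂ν) * rnD a ν g x) := hψΘ.mul (hJg.mul (hrnD g))
    have e1 : ∫⁻ b, (ENNReal.ofReal C' * ∫⁻ t, ψ (a g⁻¹ b, t) ∂θ)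
          * ∫⁻ b', Υe g b b' ∂ν ∂ν
        = ∫⁻ b, (fun x => (ENNReal.ofReal C' * ∫⁻ t, ψ (x, t) ∂θ)
            * ∫⁻ b', Υe g (a g x) b' ∂ν) (a g⁻¹ b) ∂ν := by
      refine lintegral_congr fun b => ?_
      simp only [aux_inv_cancel hact g b]
    rw [e1, aux_cov hact g (fun x => (ENNReal.ofReal C' * ∫⁻ t, ψ (x, t) ∂θ)
      * ∫⁻ b', Υe g (a g x) b' ∂ν) ((measurable_const.mul hψΘ).mul hJg),
      ← lintegral_const_mul _ hmm]
    refine lintegral_congr fun x => ?_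
    ring
  calc ∑' g : Γ, ∫⁻ p, ∫⁻ b', ψ (a g⁻¹ p.1, p.2 + R g⁻¹ b') * Υe g p.1 b' ∂ν ∂(ν.prod θ)
      ≤ ∑' g : Γ, ENNReal.ofReal C' * ∫⁻ x, (∫⁻ t, ψ (x, t) ∂θ)
          * ((∫⁻ b', Υe g (a g x) b' ∂ν) * rnD a ν g x) ∂ν := by
        refine ENNReal.tsum_le_tsum fun g => ?_
        rw [step2 g, ← step4 g]
        exact step3 g
    _ = ENNReal.ofReal C' * ∫⁻ x, (∫⁻ t, ψ (x, t) ∂θ)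
          * ∑' g : Γ, (∫⁻ b', Υe g (a g x) b' ∂ν) * rnD a ν g x ∂ν := by
        have hmm : ∀ g : Γ, Measurable fun x => (∫⁻ t, ψ (x, t) ∂θ)
            * ((∫⁻ b', Υe g (a g x) b' ∂ν) * rnD a ν g x) :=
          fun g => hψΘ.mul (((hJ g).comp (hact.1 g)).mul (hrnD g))
        rw [ENNReal.tsum_mul_left, ← lintegral_tsum (f := fun (g : Γ) x =>
          (∫⁻ t, ψ (x, t) ∂θ) * ((∫⁻ b', Υe g (a g x) b' ∂ν) * rnD a ν g x))
          (fun g => (hmm g).aemeasurable)]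
        congr 1
        exact lintegral_congr fun x => ENNReal.tsum_mul_left
    _ ≤ ENNReal.ofReal C' * ∫⁻ x, (∫⁻ t, ψ (x, t) ∂θ) * ENNReal.ofReal C₄ ∂ν := by
        refine mul_le_mul_right (lintegral_mono_ae (h4.mono fun x hx => ?_)) _
        exact mul_le_mul_right hx _
    _ = ENNReal.ofReal C' * (ENNReal.ofReal C₄ * ∫⁻ p, ψ p ∂(ν.prod θ)) := by
        rw [lintegral_mul_const _ hψΘ, mul_comm (∫⁻ x, (∫⁻ t, ψ (x, t) ∂θ) ∂ν),
          lintegral_prod ψ hψ.aemeasurable]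

end BoundY

section PtAux

lemma aux_pt {Γ B : Type} [Countable Γ] [MeasurableSpace B] (ν : Measure B)
    (f : B × ℝ → ℝ) (Υr : Γ → B → B → ℝ) (hnn : ∀ g b b', 0 ≤ Υr g b b')
    (v : Γ → B → B × ℝ) (b : B) :
    (‖∑' g : Γ, ∫ b', f (v g b') * Υr g b b' ∂ν‖₊ : ℝ≥0∞)
      ≤ ∑' g : Γ, ∫⁻ b', (‖f (v g b')‖₊ : ℝ≥0∞) * ENNReal.ofReal (Υr g b b') ∂ν := by
  refine le_trans (aux_enorm_tsum _) (ENNReal.tsum_le_tsum fun g => ?_)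
  refine le_trans (enorm_integral_le_lintegral_enorm _) ?_
  refine le_of_eq (lintegral_congr fun b' => ?_)
  rw [← enorm_eq_nnnorm, enorm_mul, Real.enorm_eq_ofReal (hnn g b b')]

end PtAux


end Helpers

/-- Proposition 3.5 of the paper: the operators `W_n`, `X_n`, `Y_n` are
uniformly bounded on `L¹(ν × θ)`. -/
theorem stmt5 {Γ B : Type} [Group Γ] [Countable Γ] [MetricSpace B] [CompactSpace B]
    [MeasurableSpace B] [BorelSpace B]
    (ν : Measure B) [IsProbabilityMeasure ν] (a : Γ → B → B)
    (hact : IsNonsingularAction a ν)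
    (R : Γ → B → ℝ) (hRmeas : ∀ g : Γ, Measurable (R g))
    (hRcoc : ∀ (g₁ g₂ : Γ) (b : B), R (g₂ * g₁) b = R g₂ (a g₁ b) + R g₁ b)
    (hRrn : ∀ g : Γ, ∀ᵐ b ∂ν, ENNReal.ofReal (Real.exp (R g b)) = rnD a ν g b)
    (Υ : ℕ → Γ → B → B → ℝ) (C : ℝ) (hadm : IsAdmissibleFamily a ν R Υ C)
    (θ : Measure ℝ) (hθprob : IsProbabilityMeasure θ)
    (hθeq : θ ≪ (volume : Measure ℝ) ∧ (volume : Measure ℝ) ≪ θ)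
    (C' : ℝ) (hC' : 0 < C')
    (hθshift : ∀ t₀ : ℝ, |t₀| ≤ C →
      ∀ᵐ r ∂θ, (θ.map (fun s => s - t₀)).rnDeriv θ r ≤ ENNReal.ofReal C') :
    ∃ C₁ : ℝ, 0 < C₁ ∧ ∀ (n : ℕ) (f : B × ℝ → ℝ), Integrable f (ν.prod θ) →
      eLpNorm (Wop ν Υ n f) 1 (ν.prod θ) ≤ ENNReal.ofReal C₁ * eLpNorm f 1 (ν.prod θ) ∧
      eLpNorm (Xop a ν R Υ n f) 1 (ν.prod θ) ≤ ENNReal.ofReal C₁ * eLpNorm f 1 (ν.prod θ) ∧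
      eLpNorm (Yop a ν R Υ n f) 1 (ν.prod θ) ≤ ENNReal.ofReal C₁ * eLpNorm f 1 (ν.prod θ) := by
  obtain ⟨hθ1, hθ2⟩ := hθeq
  obtain ⟨hC, hΥnn, hΥmeas, h1c, h2c, h3cond, C₄, hC₄pos, h4a, h4b, h4c⟩ := hadm
  have hactm : ∀ g : Γ, Measurable (a g) := hact.1
  refine ⟨(1 + C') * C₄, by nlinarith, fun n f hfint => ?_⟩
  have hfa : AEStronglyMeasurable f (ν.prod θ) := hfint.1
  set f₀ : B × ℝ → ℝ := hfa.mk f with hf₀def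
  have hf₀m : StronglyMeasurable f₀ := hfa.stronglyMeasurable_mk
  have heq : f =ᵐ[ν.prod θ] f₀ := hfa.ae_eq_mk
  set ψ : B × ℝ → ℝ≥0∞ := fun p => (‖f₀ p‖₊ : ℝ≥0∞) with hψdef
  have hψ : Measurable ψ := hf₀m.measurable.nnnorm.coe_nnreal_ennreal
  have hΥe : ∀ g : Γ, Measurable fun p : B × B => ENNReal.ofReal (Υ n g p.1 p.2) :=
    fun g => (hΥmeas n g).ennreal_ofReal
  have hnorm : eLpNorm f 1 (ν.prod θ) = ∫⁻ p, ψ p ∂(ν.prod θ) := by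
    rw [eLpNorm_one_eq_lintegral_enorm]
    refine lintegral_congr_ae (heq.mono fun p hp => ?_)
    rw [hψdef]; simp only [hp, enorm_eq_nnnorm]
  -- exceptional set
  set N₀ : Set (B × ℝ) := toMeasurable (ν.prod θ) {p | f p ≠ f₀ p} with hN₀def
  have hN₀m : MeasurableSet N₀ := measurableSet_toMeasurable _ _
  have hN₀0 : (ν.prod θ) N₀ = 0 := by
    rw [hN₀def, measure_toMeasurable]
    exact ae_iff.mp heq
  have hsub : ∀ p : B × ℝ, p ∉ N₀ → f p = f₀ p := by
    intro p hp
    by_contra hne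
    exact hp (subset_toMeasurable _ _ hne)
  set χ : B × ℝ → ℝ≥0∞ := N₀.indicator 1 with hχdef
  have hχm : Measurable χ := measurable_one.indicator hN₀m
  have hχ0 : ∀ p : B × ℝ, χ p = 0 → f p = f₀ p := by
    intro p hp
    refine hsub p fun hmem => ?_
    rw [hχdef] at hp
    simp [Set.indicator_of_mem hmem] at hp
  have hslice : ∀ᵐ x ∂ν, θ (Prod.mk x ⁻¹' N₀) = 0 :=
    (Measure.measure_prod_null hN₀m).mp hN₀0
  set M : Set B := {x | θ (Prod.mk x ⁻¹' N₀) ≠ 0} with hMdef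
  have hMm : MeasurableSet M :=
    ((measurable_measure_prodMk_left hN₀m) (measurableSet_singleton (0 : ℝ≥0∞))).compl
  have hM0 : ν M = 0 := by
    rw [hMdef]
    exact ae_iff.mp hslice
  have hindt : ∀ (x : B) (s : ℝ), θ (Prod.mk x ⁻¹' N₀) = 0 →
      ∫⁻ t, χ (x, t + s) ∂θ = 0 := by
    intro x s hx0
    have hA : MeasurableSet ((fun t => t + s) ⁻¹' (Prod.mk x ⁻¹' N₀)) :=
      (measurable_add_const s) (measurable_prodMk_left hN₀m)
    have e : ∫⁻ t, χ (x, t + s) ∂θ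
        = θ ((fun t => t + s) ⁻¹' (Prod.mk x ⁻¹' N₀)) := by
      rw [← lintegral_indicator_one hA]
      refine lintegral_congr fun t => ?_
      by_cases h : (x, t + s) ∈ N₀ <;> simp [hχdef, Set.indicator_apply, h]
    rw [e]
    exact aux_null_shift θ hθ1 hθ2 hx0 s
  have hMae : ∀ g : Γ, ∀ᵐ b' ∂ν, θ (Prod.mk (a g⁻¹ b') ⁻¹' N₀) = 0 := by
    intro g
    have h0 := aux_null_pre hact g hMm hM0
    have h1 : ∀ᵐ b' ∂ν, a g⁻¹ b' ∉ M := by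
      rw [ae_iff]
      simpa using h0
    refine h1.mono fun b' hb' => ?_
    have : ¬ θ (Prod.mk (a g⁻¹ b') ⁻¹' N₀) ≠ 0 := hb'
    exact not_not.mp this
  -- replacement statements
  have hWrep : ∀ᵐ p ∂(ν.prod θ), ∀ᵐ b' ∂ν, f (b', p.2) = f₀ (b', p.2) := by
    have hm : Measurable fun q : ℝ × B => χ (q.2, q.1) :=
      hχm.comp (measurable_snd.prodMk measurable_fst)
    have hzero : ∫⁻ t, ∫⁻ b', χ (b', t) ∂ν ∂θ = 0 := by
      rw [lintegral_lintegral_swap (f := fun t b' => χ (b', t)) hm.aemeasurable]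
      have hmm1 : Measurable fun b' => ∫⁻ t, χ (b', t) ∂θ :=
        Measurable.lintegral_prod_right (f := fun b' t => χ (b', t)) (by exact hχm)
      refine (lintegral_eq_zero_iff hmm1).mpr (hslice.mono fun b' hb' => ?_)
      have h2 := hindt b' 0 hb'
      simpa using h2
    have hmt : Measurable fun t => ∫⁻ b', χ (b', t) ∂ν :=
      Measurable.lintegral_prod_left (f := fun b' t => χ (b', t)) (by exact hχm)
    have hae0 := (lintegral_eq_zero_iff hmt).mp hzero
    have hkey : ∀ᵐ t ∂θ, ∀ᵐ b' ∂ν, f (b', t) = f₀ (b', t) := by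
      refine hae0.mono fun t ht => ?_
      have hm2 : Measurable fun b' => χ (b', t) :=
        hχm.comp (measurable_id.prodMk measurable_const)
      have := (lintegral_eq_zero_iff hm2).mp ht
      exact this.mono fun b' hb' => hχ0 _ hb'
    exact Measure.quasiMeasurePreserving_snd.tendsto_ae.eventually hkey
  have hXrep : ∀ᵐ p ∂(ν.prod θ), ∀ g : Γ, ∀ᵐ b' ∂ν,
      f (a g⁻¹ b', p.2 + R g⁻¹ b') = f₀ (a g⁻¹ b', p.2 + R g⁻¹ b') := by
    have hkey : ∀ᵐ t ∂θ, ∀ g : Γ, ∀ᵐ b' ∂ν,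
        f (a g⁻¹ b', t + R g⁻¹ b') = f₀ (a g⁻¹ b', t + R g⁻¹ b') := by
      rw [ae_all_iff]
      intro g
      have hm : Measurable fun q : B × ℝ => χ (a g⁻¹ q.1, q.2 + R g⁻¹ q.1) :=
        hχm.comp (((hactm g⁻¹).comp measurable_fst).prodMk
          (measurable_snd.add ((hRmeas g⁻¹).comp measurable_fst)))
      have hzero : ∫⁻ t, ∫⁻ b', χ (a g⁻¹ b', t + R g⁻¹ b') ∂ν ∂θ = 0 := by
        rw [lintegral_lintegral_swap (f := fun t b' => χ (a g⁻¹ b', t + R g⁻¹ b'))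
          (hχm.comp (((hactm g⁻¹).comp measurable_snd).prodMk
            (measurable_fst.add ((hRmeas g⁻¹).comp measurable_snd)))).aemeasurable]
        have hmm1 : Measurable fun b' => ∫⁻ t, χ (a g⁻¹ b', t + R g⁻¹ b') ∂θ :=
          Measurable.lintegral_prod_right
            (f := fun b' t => χ (a g⁻¹ b', t + R g⁻¹ b')) hm
        refine (lintegral_eq_zero_iff hmm1).mpr ((hMae g).mono fun b' hb' => ?_)
        exact hindt _ _ hb'
      have hmt : Measurable fun t => ∫⁻ b', χ (a g⁻¹ b', t + R g⁻¹ b') ∂ν :=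
        Measurable.lintegral_prod_left
          (f := fun b' t => χ (a g⁻¹ b', t + R g⁻¹ b')) hm
      have hae0 := (lintegral_eq_zero_iff hmt).mp hzero
      refine hae0.mono fun t ht => ?_
      have hm2 : Measurable fun b' => χ (a g⁻¹ b', t + R g⁻¹ b') :=
        hχm.comp ((hactm g⁻¹).prodMk (measurable_const.add (hRmeas g⁻¹)))
      have := (lintegral_eq_zero_iff hm2).mp ht
      exact this.mono fun b' hb' => hχ0 _ hb'
    exact Measure.quasiMeasurePreserving_snd.tendsto_ae.eventually hkey
  have hYrep : ∀ᵐ p ∂(ν.prod θ), ∀ g : Γ, ∀ᵐ b' ∂ν,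
      f (a g⁻¹ p.1, p.2 + R g⁻¹ b') = f₀ (a g⁻¹ p.1, p.2 + R g⁻¹ b') := by
    rw [ae_all_iff]
    intro g
    have hm : Measurable fun q : (B × ℝ) × B => χ (a g⁻¹ q.1.1, q.1.2 + R g⁻¹ q.2) :=
      hχm.comp (((hactm g⁻¹).comp measurable_fst.fst).prodMk
        (measurable_fst.snd.add ((hRmeas g⁻¹).comp measurable_snd)))
    have hmY : Measurable fun p : B × ℝ => ∫⁻ b', χ (a g⁻¹ p.1, p.2 + R g⁻¹ b') ∂ν :=
      Measurable.lintegral_prod_right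
        (f := fun (p : B × ℝ) b' => χ (a g⁻¹ p.1, p.2 + R g⁻¹ b')) hm
    have hzero : ∫⁻ p, ∫⁻ b', χ (a g⁻¹ p.1, p.2 + R g⁻¹ b') ∂ν ∂(ν.prod θ) = 0 := by
      rw [lintegral_prod _ hmY.aemeasurable]
      have hmout : Measurable fun b => ∫⁻ t, ∫⁻ b', χ (a g⁻¹ b, t + R g⁻¹ b') ∂ν ∂θ :=
        Measurable.lintegral_prod_right
          (f := fun (b : B) t => ∫⁻ b', χ (a g⁻¹ b, t + R g⁻¹ b') ∂ν) hmY
      have hnull : ∀ᵐ b ∂ν, θ (Prod.mk (a g⁻¹ b) ⁻¹' N₀) = 0 := hMae g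
      refine (lintegral_eq_zero_iff hmout).mpr (hnull.mono fun b hb => ?_)
      have hm3 : Measurable fun q : ℝ × B => χ (a g⁻¹ b, q.1 + R g⁻¹ q.2) :=
        hχm.comp (measurable_const.prodMk
          (measurable_fst.add ((hRmeas g⁻¹).comp measurable_snd)))
      show ∫⁻ t, ∫⁻ b', χ (a g⁻¹ b, t + R g⁻¹ b') ∂ν ∂θ = 0
      rw [lintegral_lintegral_swap (f := fun t b' => χ (a g⁻¹ b, t + R g⁻¹ b'))
        hm3.aemeasurable]
      have hm4 : Measurable fun b' => ∫⁻ t, χ (a g⁻¹ b, t + R g⁻¹ b') ∂θ :=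
        Measurable.lintegral_prod_right
          (f := fun (b' : B) t => χ (a g⁻¹ b, t + R g⁻¹ b'))
          (hχm.comp (measurable_const.prodMk
            (measurable_snd.add ((hRmeas g⁻¹).comp measurable_fst))))
      refine (lintegral_eq_zero_iff hm4).mpr (Filter.Eventually.of_forall fun b' => ?_)
      exact hindt _ _ hb
    have hae0 := (lintegral_eq_zero_iff hmY).mp hzero
    refine hae0.mono fun p hp => ?_
    have hm2 : Measurable fun b' => χ (a g⁻¹ p.1, p.2 + R g⁻¹ b') :=
      hχm.comp (measurable_const.prodMk (measurable_const.add (hRmeas g⁻¹)))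
    have := (lintegral_eq_zero_iff hm2).mp hp
    exact this.mono fun b' hb' => hχ0 _ hb'
  -- support conditions
  have hsuppY : ∀ g : Γ, ∀ᵐ b ∂ν, ∀ᵐ b' ∂ν, ¬ |R g⁻¹ b'| ≤ C →
      ENNReal.ofReal (Υ n g b b') = 0 := by
    intro g
    refine (h3cond n g).mono fun b hb => hb.mono fun b' hb' hc => ?_
    refine ENNReal.ofReal_eq_zero.mpr (le_of_not_gt fun hpos => hc ?_)
    exact le_trans (le_add_of_nonneg_left (abs_nonneg _)) (hb' hpos)
  have hsuppX : ∀ g : Γ, ∀ᵐ b' ∂ν, ¬ |R g⁻¹ b'| ≤ C →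
      ∀ᵐ b ∂ν, ENNReal.ofReal (Υ n g b b') = 0 := by
    intro g
    set Q : Set (B × B) :=
      {q | 0 < Υ n g q.1 q.2} ∩ {q | C < |R g⁻¹ q.1| + |R g⁻¹ q.2|} with hQdef
    have hQm : MeasurableSet Q :=
      (measurableSet_lt measurable_const (hΥmeas n g)).inter
        (measurableSet_lt measurable_const
          (((hRmeas g⁻¹).comp measurable_fst).abs.add
            ((hRmeas g⁻¹).comp measurable_snd).abs))
    have hQ0 : (ν.prod ν) Q = 0 := by
      rw [Measure.measure_prod_null hQm]
      refine (h3cond n g).mono fun b hb => ?_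
      show ν (Prod.mk b ⁻¹' Q) = 0
      refine measure_eq_zero_iff_ae_notMem.mpr (hb.mono fun b' hb' hmem => ?_)
      exact absurd (hb' hmem.1) (not_le.mpr hmem.2)
    have hQs0 : (ν.prod ν) (Prod.swap ⁻¹' Q) = 0 := by
      rw [← Measure.map_apply measurable_swap hQm, Measure.prod_swap]
      exact hQ0
    have hsw := (Measure.measure_prod_null (measurable_swap hQm)).mp hQs0
    refine hsw.mono fun b' hb' hc => ?_
    have hae : ∀ᵐ b ∂ν, b ∉ Prod.mk b' ⁻¹' (Prod.swap ⁻¹' Q) :=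
      measure_eq_zero_iff_ae_notMem.mp hb'
    refine hae.mono fun b hbQ => ?_
    refine ENNReal.ofReal_eq_zero.mpr (le_of_not_gt fun hpos => hbQ ?_)
    exact ⟨hpos, lt_of_lt_of_le (not_le.mp hc) (le_add_of_nonneg_left (abs_nonneg _))⟩
  -- integral bound hypotheses in summed form
  have h4X : ∀ᵐ x ∂ν, ∑' g : Γ, (∫⁻ b, ENNReal.ofReal (Υ n g b (a g x)) ∂ν)
      * rnD a ν g x ≤ ENNReal.ofReal C₄ := by
    refine (h4b n).mono fun x hx => ?_
    have hmg : ∀ g : Γ, Measurable fun b => ENNReal.ofReal (Υ n g b (a g x)) :=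
      fun g => ((hΥmeas n g).comp (measurable_id.prodMk measurable_const)).ennreal_ofReal
    rw [lintegral_tsum (f := fun g b => ENNReal.ofReal (Υ n g b (a g x)) * rnD a ν g x)
      (fun g => ((hmg g).mul measurable_const).aemeasurable)] at hx
    refine le_trans (le_of_eq (tsum_congr fun g => ?_)) hx
    exact (lintegral_mul_const _ (hmg g)).symm
  have h4Y : ∀ᵐ x ∂ν, ∑' g : Γ, (∫⁻ b', ENNReal.ofReal (Υ n g (a g x) b') ∂ν)
      * rnD a ν g x ≤ ENNReal.ofReal C₄ := by
    refine (h4c n).mono fun x hx => ?_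
    have hmg : ∀ g : Γ, Measurable fun b' => ENNReal.ofReal (Υ n g (a g x) b') :=
      fun g => ((hΥmeas n g).comp (measurable_const.prodMk measurable_id)).ennreal_ofReal
    rw [lintegral_tsum (f := fun g b' => ENNReal.ofReal (Υ n g (a g x) b') * rnD a ν g x)
      (fun g => ((hmg g).mul measurable_const).aemeasurable)] at hx
    refine le_trans (le_of_eq (tsum_congr fun g => ?_)) hx
    exact (lintegral_mul_const _ (hmg g)).symm
  -- pointwise bounds
  have hptW : ∀ᵐ p ∂(ν.prod θ), (‖Wop ν Υ n f p‖₊ : ℝ≥0∞)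
      ≤ ∑' g : Γ, ∫⁻ b', ψ (b', p.2) * ENNReal.ofReal (Υ n g p.1 b') ∂ν := by
    refine hWrep.mono fun p hp => ?_
    refine le_trans (aux_pt ν f (fun g b b' => Υ n g b b') (fun g b b' => hΥnn n g b b')
      (fun g b' => (b', p.2)) p.1) (le_of_eq (tsum_congr fun g => ?_))
    refine lintegral_congr_ae (hp.mono fun b' hb' => ?_)
    simp only [hb', hψdef]
  have hptX : ∀ᵐ p ∂(ν.prod θ), (‖Xop a ν R Υ n f p‖₊ : ℝ≥0∞)
      ≤ ∑' g : Γ, ∫⁻ b', ψ (a g⁻¹ b', p.2 + R g⁻¹ b')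
        * ENNReal.ofReal (Υ n g p.1 b') ∂ν := by
    refine hXrep.mono fun p hp => ?_
    refine le_trans (aux_pt ν f (fun g b b' => Υ n g b b') (fun g b b' => hΥnn n g b b')
      (fun g b' => (a g⁻¹ b', p.2 + R g⁻¹ b')) p.1) (le_of_eq (tsum_congr fun g => ?_))
    refine lintegral_congr_ae ((hp g).mono fun b' hb' => ?_)
    simp only [hb', hψdef]
  have hptY : ∀ᵐ p ∂(ν.prod θ), (‖Yop a ν R Υ n f p‖₊ : ℝ≥0∞)
      ≤ ∑' g : Γ, ∫⁻ b', ψ (a g⁻¹ p.1, p.2 + R g⁻¹ b')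
        * ENNReal.ofReal (Υ n g p.1 b') ∂ν := by
    refine hYrep.mono fun p hp => ?_
    refine le_trans (aux_pt ν f (fun g b b' => Υ n g b b') (fun g b b' => hΥnn n g b b')
      (fun g b' => (a g⁻¹ p.1, p.2 + R g⁻¹ b')) p.1) (le_of_eq (tsum_congr fun g => ?_))
    refine lintegral_congr_ae ((hp g).mono fun b' hb' => ?_)
    simp only [hb', hψdef]
  -- main bounds
  have hWbound : eLpNorm (Wop ν Υ n f) 1 (ν.prod θ)
      ≤ ENNReal.ofReal C₄ * ∫⁻ p, ψ p ∂(ν.prod θ) := by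
    rw [eLpNorm_one_eq_lintegral_enorm]
    refine le_trans (lintegral_mono_ae hptW) ?_
    exact boundW ν θ (fun g b b' => ENNReal.ofReal (Υ n g b b')) hΥe ψ hψ C₄ (h4a n)
  have hXbound : eLpNorm (Xop a ν R Υ n f) 1 (ν.prod θ)
      ≤ ENNReal.ofReal C' * (ENNReal.ofReal C₄ * ∫⁻ p, ψ p ∂(ν.prod θ)) := by
    rw [eLpNorm_one_eq_lintegral_enorm]
    refine le_trans (lintegral_mono_ae hptX) ?_
    exact boundX ν a hact θ hθ1 hθ2 C C' hθshift R hRmeas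
      (fun g b b' => ENNReal.ofReal (Υ n g b b')) hΥe hsuppX ψ hψ C₄ h4X
  have hYbound : eLpNorm (Yop a ν R Υ n f) 1 (ν.prod θ)
      ≤ ENNReal.ofReal C' * (ENNReal.ofReal C₄ * ∫⁻ p, ψ p ∂(ν.prod θ)) := by
    rw [eLpNorm_one_eq_lintegral_enorm]
    refine le_trans (lintegral_mono_ae hptY) ?_
    exact boundY ν a hact θ hθ1 hθ2 C C' hθshift R hRmeas
      (fun g b b' => ENNReal.ofReal (Υ n g b b')) hΥe hsuppY ψ hψ C₄ h4Y
  rw [hnorm]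
  have hle1 : ENNReal.ofReal C₄ ≤ ENNReal.ofReal ((1 + C') * C₄) :=
    ENNReal.ofReal_le_ofReal (by nlinarith)
  have hle2 : ENNReal.ofReal C' * ENNReal.ofReal C₄ ≤ ENNReal.ofReal ((1 + C') * C₄) := by
    rw [← ENNReal.ofReal_mul (le_of_lt hC')]
    exact ENNReal.ofReal_le_ofReal (by nlinarith)
  refine ⟨le_trans hWbound (mul_le_mul_left hle1 _), ?_, ?_⟩
  · refine le_trans hXbound ?_
    rw [← mul_assoc]
    exact mul_le_mul_left hle2 _
  · refine le_trans hYbound ?_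
    rw [← mul_assoc]
    exact mul_le_mul_left hle2 _
end

section
/- In the admissible-family setting, let f ∈ L¹(ν×θ) be invariant for the Γ-action on B×ℝ given by g·(b,t) = (gb, t + R(g,b)) (i.e. f(g·(b,t)) = f(b,t) for every g ∈ Γ and (ν×θ)-a.e. (b,t)). Then lim_{n→∞} ‖f − Z_n f‖₁ = 0. -/
open MeasureTheory Filter Set
open scoped ENNReal

section MyAux

variable {B : Type} [MeasurableSpace B]

/-- θ-shift bound. -/
lemma lint_shift (θ : Measure ℝ) [IsProbabilityMeasure θ]
    (hθeq : θ ≪ (volume : Measure ℝ) ∧ (volume : Measure ℝ) ≪ θ)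
    {C C' : ℝ}
    (hθshift : ∀ t₀ : ℝ, |t₀| ≤ C →
      ∀ᵐ r ∂θ, (θ.map (fun s => s - t₀)).rnDeriv θ r ≤ ENNReal.ofReal C')
    {φ : ℝ → ℝ≥0∞} (hφ : Measurable φ) {c : ℝ} (hc : |c| ≤ C) :
    ∫⁻ t, φ (t + c) ∂θ ≤ ENNReal.ofReal C' * ∫⁻ t, φ t ∂θ := by
  have hmapeq : θ.map (fun s : ℝ => s - (-c)) = θ.map (fun s : ℝ => s + c) := by
    simp [sub_neg_eq_add]
  have hTm : Measurable (fun s : ℝ => s + c) := measurable_id.add_const _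
  have hac : θ.map (fun s : ℝ => s + c) ≪ θ := by
    have h1 : θ.map (fun s : ℝ => s + c) ≪ (volume : Measure ℝ).map (fun s : ℝ => s + c) :=
      hθeq.1.map hTm
    rw [map_add_right_eq_self volume c] at h1
    exact h1.trans hθeq.2
  have : IsProbabilityMeasure (θ.map (fun s : ℝ => s + c)) :=
    Measure.isProbabilityMeasure_map hTm.aemeasurable
  have key : ∫⁻ t, φ (t + c) ∂θ = ∫⁻ t, φ t ∂(θ.map (fun s : ℝ => s + c)) :=
    (lintegral_map hφ hTm).symm
  rw [key, ← Measure.withDensity_rnDeriv_eq _ _ hac,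
    lintegral_withDensity_eq_lintegral_mul _ (Measure.measurable_rnDeriv _ _) hφ]
  have hb := hθshift (-c) (by rwa [abs_neg])
  rw [hmapeq] at hb
  calc ∫⁻ t, ((θ.map (fun s : ℝ => s + c)).rnDeriv θ * φ) t ∂θ
      ≤ ∫⁻ t, ENNReal.ofReal C' * φ t ∂θ := by
        refine lintegral_mono_ae ?_
        filter_upwards [hb] with t ht
        exact mul_le_mul_left ht _
    _ = ENNReal.ofReal C' * ∫⁻ t, φ t ∂θ := lintegral_const_mul _ hφ

/-- Quasi-measure-preservation of maps of the form `(x,t) ↦ (w x, t + c x)`. -/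
lemma qmp {X : Type} [MeasurableSpace X] (ν : Measure B) [IsProbabilityMeasure ν]
    (θ : Measure ℝ) [IsProbabilityMeasure θ]
    (hθeq : θ ≪ (volume : Measure ℝ) ∧ (volume : Measure ℝ) ≪ θ)
    (μX : Measure X) [SFinite μX] {w : X → B} {c : X → ℝ}
    (hw : Measurable w) (hc : Measurable c) (hmap : μX.map w ≪ ν) :
    (μX.prod θ).map (fun p : X × ℝ => (w p.1, p.2 + c p.1)) ≪ ν.prod θ := by
  have hT : Measurable (fun p : X × ℝ => (w p.1, p.2 + c p.1)) :=
    ((hw.comp measurable_fst)).prodMk (measurable_snd.add (hc.comp measurable_fst))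
  refine Measure.AbsolutelyContinuous.mk (fun N hN h0 => ?_)
  rw [Measure.map_apply hT hN, Measure.prod_apply (hT hN)]
  have hae : ∀ᵐ y ∂ν, θ (Prod.mk y ⁻¹' N) = 0 := by
    filter_upwards [Measure.measure_ae_null_of_prod_null h0] with y hy using hy
  have hmeasset : MeasurableSet {y : B | θ (Prod.mk y ⁻¹' N) = 0} :=
    (measurable_measure_prodMk_left hN) (measurableSet_singleton 0)
  have hae2 : ∀ᵐ x ∂μX, θ (Prod.mk (w x) ⁻¹' N) = 0 := by
    have h1 : ∀ᵐ y ∂(μX.map w), θ (Prod.mk y ⁻¹' N) = 0 := hmap.ae_le hae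
    exact (ae_map_iff hw.aemeasurable hmeasset).1 h1
  have : ∀ᵐ x ∂μX, θ (Prod.mk x ⁻¹' ((fun p : X × ℝ => (w p.1, p.2 + c p.1)) ⁻¹' N)) = 0 := by
    filter_upwards [hae2] with x hx
    have hset : (Prod.mk x ⁻¹' ((fun p : X × ℝ => (w p.1, p.2 + c p.1)) ⁻¹' N))
        = (fun t : ℝ => t + c x) ⁻¹' (Prod.mk (w x) ⁻¹' N) := rfl
    rw [hset]
    have hS : (volume : Measure ℝ) (Prod.mk (w x) ⁻¹' N) = 0 := hθeq.2 hx
    have hvol : (volume : Measure ℝ) ((fun t : ℝ => t + c x) ⁻¹' (Prod.mk (w x) ⁻¹' N)) = 0 := by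
      rw [measure_preimage_add_right]
      exact hS
    exact hθeq.1 hvol
  rw [lintegral_congr_ae this]
  simp


end MyAux

section MyAux2

variable {B : Type} [MeasurableSpace B]

/-- Change of variables along `a g⁻¹`. -/
lemma cov {Γ : Type} [Group Γ] (a : Γ → B → B) (ν : Measure B) [IsProbabilityMeasure ν]
    (hact : IsNonsingularAction a ν) (g : Γ) {G : B → ℝ≥0∞} (hG : Measurable G) :
    ∫⁻ x, G (a g⁻¹ x) ∂ν = ∫⁻ x, G x * rnD a ν g x ∂ν := by
  have hm : Measurable (a g⁻¹) := hact.1 g⁻¹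
  have hac : ν.map (a g⁻¹) ≪ ν := (hact.2.2.2 g⁻¹).1
  have : IsProbabilityMeasure (ν.map (a g⁻¹)) := Measure.isProbabilityMeasure_map hm.aemeasurable
  have h1 : ∫⁻ x, G (a g⁻¹ x) ∂ν = ∫⁻ x, G x ∂(ν.map (a g⁻¹)) := (lintegral_map hG hm).symm
  rw [h1, ← Measure.withDensity_rnDeriv_eq _ _ hac,
    lintegral_withDensity_eq_lintegral_mul _ (Measure.measurable_rnDeriv _ _) hG]
  exact lintegral_congr fun x => mul_comm _ _

lemma a_inv_cancel {Γ : Type} [Group Γ] {a : Γ → B → B} {ν : Measure B}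
    (hact : IsNonsingularAction a ν) (g : Γ) (b : B) : a g (a g⁻¹ b) = b := by
  rw [← hact.2.2.1 g g⁻¹ b, mul_inv_cancel]
  exact hact.2.1 b

/-- Rearrangement `((x,z),y) ↦ ((x,y),z)` is measure preserving. -/
lemma mp_rearrange {X Y Z : Type} [MeasurableSpace X] [MeasurableSpace Y] [MeasurableSpace Z]
    (μ₁ : Measure X) (μ₂ : Measure Y) (μ₃ : Measure Z)
    [SFinite μ₁] [SFinite μ₂] [SFinite μ₃] :
    MeasurePreserving (fun q : (X × Z) × Y => ((q.1.1, q.2), q.1.2))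
      ((μ₁.prod μ₃).prod μ₂) ((μ₁.prod μ₂).prod μ₃) := by
  have h1 := measurePreserving_prodAssoc μ₁ μ₃ μ₂
  have h2 : MeasurePreserving (Prod.map (id : X → X) (Prod.swap : Z × Y → Y × Z))
      (μ₁.prod (μ₃.prod μ₂)) (μ₁.prod (μ₂.prod μ₃)) :=
    (MeasurePreserving.id μ₁).prod Measure.measurePreserving_swap
  have h3 : MeasurePreserving (MeasurableEquiv.prodAssoc.symm : (X × (Y × Z)) ≃ᵐ _)
      (μ₁.prod (μ₂.prod μ₃)) ((μ₁.prod μ₂).prod μ₃) :=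
    (measurePreserving_prodAssoc μ₁ μ₂ μ₃).symm MeasurableEquiv.prodAssoc
  exact (h3.comp (h2.comp h1))


end MyAux2

section MyAux3

variable {Γ B : Type} [Countable Γ] [MeasurableSpace B]

/-- Iterated sum-integral functional. -/
noncomputable def Tsum3 (ν : Measure B) (θ : Measure ℝ) (K : Γ → B → B → ℝ → ℝ≥0∞) : ℝ≥0∞ :=
  ∑' g : Γ, ∫⁻ b, ∫⁻ b', ∫⁻ t, K g b b' t ∂θ ∂ν ∂ν

variable (ν : Measure B) (θ : Measure ℝ) [SFinite ν] [SFinite θ]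

lemma meas3 {K : B → B → ℝ → ℝ≥0∞}
    (hK : Measurable (fun q : (B × B) × ℝ => K q.1.1 q.1.2 q.2)) :
    (∀ b b', Measurable (fun t => K b b' t)) ∧
    (∀ b, Measurable (fun b' => ∫⁻ t, K b b' t ∂θ)) ∧
    Measurable (fun b => ∫⁻ b', (∫⁻ t, K b b' t ∂θ) ∂ν) := by
  have h1 : ∀ b b', Measurable (fun t => K b b' t) := by
    intro b b'
    exact hK.comp (measurable_prodMk_left (x := (b, b')))
  have huncur : Measurable (Function.uncurry (fun (q : B × B) (t : ℝ) => K q.1 q.2 t)) := by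
    exact hK.comp ((measurable_fst.fst.prodMk measurable_fst.snd).prodMk measurable_snd)
  have h2' : Measurable (fun q : B × B => ∫⁻ t, K q.1 q.2 t ∂θ) :=
    Measurable.lintegral_prod_right huncur
  have h2 : ∀ b, Measurable (fun b' => ∫⁻ t, K b b' t ∂θ) := by
    intro b
    exact h2'.comp measurable_prodMk_left
  refine ⟨h1, h2, ?_⟩
  have huncur2 : Measurable (Function.uncurry (fun (b b' : B) => ∫⁻ t, K b b' t ∂θ)) := h2'
  exact Measurable.lintegral_prod_right huncur2

lemma Tsum3_mono_ae {K₁ K₂ : Γ → B → B → ℝ → ℝ≥0∞}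
    (h : ∀ g : Γ, ∀ᵐ b ∂ν, ∀ᵐ b' ∂ν, ∀ᵐ t ∂θ, K₁ g b b' t ≤ K₂ g b b' t) :
    Tsum3 ν θ K₁ ≤ Tsum3 ν θ K₂ := by
  refine ENNReal.tsum_le_tsum (fun g => ?_)
  refine lintegral_mono_ae ?_
  filter_upwards [h g] with b hb
  refine lintegral_mono_ae ?_
  filter_upwards [hb] with b' hb'
  exact lintegral_mono_ae (hb'.mono fun t ht => ht)

lemma Tsum3_add {K₁ K₂ : Γ → B → B → ℝ → ℝ≥0∞}
    (h1 : ∀ g : Γ, Measurable (fun q : (B × B) × ℝ => K₁ g q.1.1 q.1.2 q.2))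
    (h2 : ∀ g : Γ, Measurable (fun q : (B × B) × ℝ => K₂ g q.1.1 q.1.2 q.2)) :
    Tsum3 ν θ (fun g b b' t => K₁ g b b' t + K₂ g b b' t)
      = Tsum3 ν θ K₁ + Tsum3 ν θ K₂ := by
  unfold Tsum3
  rw [← ENNReal.tsum_add]
  congr 1
  funext g
  obtain ⟨m1t, m1b, m1bb⟩ := meas3 ν θ (h1 g)
  obtain ⟨m2t, m2b, m2bb⟩ := meas3 ν θ (h2 g)
  rw [← lintegral_add_left m1bb]
  congr 1
  funext b
  rw [← lintegral_add_left (m1b b)]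
  congr 1
  funext b'
  rw [← lintegral_add_left (m1t b b')]


end MyAux3


section MyPullback
variable {B : Type} [MeasurableSpace B]

lemma ae_pullback2 (ν : Measure B) [IsProbabilityMeasure ν]
    (θ : Measure ℝ) [IsProbabilityMeasure θ]
    (hθeq : θ ≪ (volume : Measure ℝ) ∧ (volume : Measure ℝ) ≪ θ)
    {w : B → B} {c : B → ℝ} (hw : Measurable w) (hc : Measurable c)
    (hmap : ν.map w ≪ ν)
    {Φ : B × ℝ → Prop} (hΦ : ∀ᵐ q ∂(ν.prod θ), Φ q) :
    ∀ᵐ p ∂(ν.prod θ), Φ (w p.1, p.2 + c p.1) := by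
  have hq : Measure.QuasiMeasurePreserving
      (fun p : B × ℝ => (w p.1, p.2 + c p.1)) (ν.prod θ) (ν.prod θ) :=
    ⟨(hw.comp measurable_fst).prodMk (measurable_snd.add (hc.comp measurable_fst)),
      qmp ν θ hθeq ν hw hc hmap⟩
  exact hq.ae hΦ

lemma ae_pullback (ν : Measure B) [IsProbabilityMeasure ν]
    (θ : Measure ℝ) [IsProbabilityMeasure θ]
    (hθeq : θ ≪ (volume : Measure ℝ) ∧ (volume : Measure ℝ) ≪ θ)
    {w : B × B → B} {c : B × B → ℝ} (hw : Measurable w) (hc : Measurable c)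
    (hmap : (ν.prod ν).map w ≪ ν)
    {Φ : B × ℝ → Prop} (hΦ : ∀ᵐ q ∂(ν.prod θ), Φ q) :
    ∀ᵐ p ∂(ν.prod θ), ∀ᵐ b' ∂ν, Φ (w (p.1, b'), p.2 + c (p.1, b')) := by
  have hq1 : Measure.QuasiMeasurePreserving
      (fun q : (B × B) × ℝ => (w q.1, q.2 + c q.1)) ((ν.prod ν).prod θ) (ν.prod θ) :=
    ⟨(hw.comp measurable_fst).prodMk (measurable_snd.add (hc.comp measurable_fst)),
      qmp ν θ hθeq (ν.prod ν) hw hc hmap⟩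
  have hq2 : Measure.QuasiMeasurePreserving
      (fun q : (B × ℝ) × B => ((q.1.1, q.2), q.1.2)) ((ν.prod θ).prod ν) ((ν.prod ν).prod θ) :=
    (mp_rearrange ν ν θ).quasiMeasurePreserving
  exact Measure.ae_ae_of_ae_prod ((hq1.comp hq2).ae hΦ)

lemma ae_pullback3 (ν : Measure B) [IsProbabilityMeasure ν]
    (θ : Measure ℝ) [IsProbabilityMeasure θ]
    (hθeq : θ ≪ (volume : Measure ℝ) ∧ (volume : Measure ℝ) ≪ θ)
    {w : B × B → B} {c : B × B → ℝ} (hw : Measurable w) (hc : Measurable c)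
    (hmap : (ν.prod ν).map w ≪ ν)
    {Φ : B × ℝ → Prop} (hΦ : ∀ᵐ q ∂(ν.prod θ), Φ q) :
    ∀ᵐ b ∂ν, ∀ᵐ b' ∂ν, ∀ᵐ t ∂θ, Φ (w (b, b'), t + c (b, b')) := by
  have hq1 : Measure.QuasiMeasurePreserving
      (fun q : (B × B) × ℝ => (w q.1, q.2 + c q.1)) ((ν.prod ν).prod θ) (ν.prod θ) :=
    ⟨(hw.comp measurable_fst).prodMk (measurable_snd.add (hc.comp measurable_fst)),
      qmp ν θ hθeq (ν.prod ν) hw hc hmap⟩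
  exact Measure.ae_ae_of_ae_prod (Measure.ae_ae_of_ae_prod (hq1.ae hΦ))

lemma iter_rearrange {Γ : Type} [Countable Γ]
    (ν : Measure B) [SFinite ν] (θ : Measure ℝ) [SFinite θ]
    (k : Γ → (B × ℝ) → B → ℝ≥0∞)
    (hk : ∀ g, Measurable (fun q : (B × ℝ) × B => k g q.1 q.2)) :
    ∫⁻ p, (∑' g : Γ, ∫⁻ b', k g p b' ∂ν) ∂(ν.prod θ)
      = ∑' g : Γ, ∫⁻ b, ∫⁻ b', ∫⁻ t, k g (b, t) b' ∂θ ∂ν ∂ν := by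
  have hinner : ∀ g, Measurable (fun p : B × ℝ => ∫⁻ b', k g p b' ∂ν) :=
    fun g => Measurable.lintegral_prod_right (hk g)
  rw [lintegral_tsum (fun g => (hinner g).aemeasurable)]
  congr 1; funext g
  rw [lintegral_prod _ (hinner g).aemeasurable]
  congr 1; funext b
  refine lintegral_lintegral_swap ?_
  exact ((hk g).comp ((measurable_const.prodMk measurable_fst).prodMk measurable_snd)).aemeasurable

end MyPullback

section MyStep12
variable {Γ B : Type} [Group Γ] [Countable Γ] [MeasurableSpace B]

lemma step12
    (ν : Measure B) [IsProbabilityMeasure ν] (a : Γ → B → B)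
    (R : Γ → B → ℝ) (hRmeas : ∀ g : Γ, Measurable (R g))
    (Υ : ℕ → Γ → B → B → ℝ)
    (hΥnn : ∀ (n : ℕ) (g : Γ) (b b' : B), 0 ≤ Υ n g b b')
    (hΥmeas : ∀ (n : ℕ) (g : Γ), Measurable (fun p : B × B => Υ n g p.1 p.2))
    (hΥ1 : ∀ (n : ℕ) (b : B), ∑' g : Γ, ∫⁻ b', ENNReal.ofReal (Υ n g b b') ∂ν = 1)
    {C : ℝ}
    (hΥ3 : ∀ (n : ℕ) (g : Γ), ∀ᵐ b ∂ν, ∀ᵐ b' ∂ν, 0 < Υ n g b b' →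
      |R g⁻¹ b| + |R g⁻¹ b'| ≤ C)
    (θ : Measure ℝ) [IsProbabilityMeasure θ]
    (hθeq : θ ≪ (volume : Measure ℝ) ∧ (volume : Measure ℝ) ≪ θ)
    {C' : ℝ}
    (hθshift : ∀ t₀ : ℝ, |t₀| ≤ C →
      ∀ᵐ r ∂θ, (θ.map (fun s => s - t₀)).rnDeriv θ r ≤ ENNReal.ofReal C')
    (f f₀ : B × ℝ → ℝ) (hf₀meas : Measurable f₀) (hff₀ : f =ᵐ[ν.prod θ] f₀)
    (hf₀int : Integrable f₀ (ν.prod θ)) (n : ℕ) :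
    eLpNorm (fun p => f p - Zop a ν R Υ n f p) 1 (ν.prod θ) ≤
      Tsum3 ν θ (fun g b b' t =>
        (↑‖f₀ (b, t) - f₀ (b, t + (R g⁻¹ b' - R g⁻¹ b))‖₊) * ENNReal.ofReal (Υ n g b b')) := by
  classical
  set μ := ν.prod θ with hμdef
  have hUm : ∀ g : Γ, Measurable (fun q : B × B => ENNReal.ofReal (Υ n g q.1 q.2)) :=
    fun g => (hΥmeas n g).ennreal_ofReal
  have hUb : ∀ (g : Γ) (b : B), Measurable (fun b' => ENNReal.ofReal (Υ n g b b')) :=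
    fun g b => (hUm g).comp (measurable_prodMk_left (x := b))
  have hUle1 : ∀ (g : Γ) (b : B), ∫⁻ b', ENNReal.ofReal (Υ n g b b') ∂ν ≤ 1 := fun g b =>
    (ENNReal.le_tsum g).trans (le_of_eq (hΥ1 n b))
  -- the shifted-kernel measurability
  have hφmeas : ∀ g : Γ, Measurable (fun q : (B × ℝ) × B =>
      f₀ (q.1.1, q.1.2 + (R g⁻¹ q.2 - R g⁻¹ q.1.1))) := by
    intro g
    apply hf₀meas.comp
    exact (measurable_fst.fst).prodMk (measurable_fst.snd.add
      (((hRmeas g⁻¹).comp measurable_snd).sub ((hRmeas g⁻¹).comp measurable_fst.fst)))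
  -- kernels
  set kabs : Γ → (B × ℝ) → B → ℝ≥0∞ := fun g p b' =>
    (↑‖f₀ (p.1, p.2 + (R g⁻¹ b' - R g⁻¹ p.1))‖₊) * ENNReal.ofReal (Υ n g p.1 b') with hkabs
  set k : Γ → (B × ℝ) → B → ℝ≥0∞ := fun g p b' =>
    (↑‖f₀ p - f₀ (p.1, p.2 + (R g⁻¹ b' - R g⁻¹ p.1))‖₊) * ENNReal.ofReal (Υ n g p.1 b') with hk
  have hkabsm : ∀ g : Γ, Measurable (fun q : (B × ℝ) × B => kabs g q.1 q.2) := by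
    intro g
    exact ((hφmeas g).nnnorm.coe_nnreal_ennreal).mul
      ((hUm g).comp ((measurable_fst.fst).prodMk measurable_snd))
  have hkm : ∀ g : Γ, Measurable (fun q : (B × ℝ) × B => k g q.1 q.2) := by
    intro g
    exact (((hf₀meas.comp measurable_fst).sub (hφmeas g)).nnnorm.coe_nnreal_ennreal).mul
      ((hUm g).comp ((measurable_fst.fst).prodMk measurable_snd))
  -- finiteness of the absolute kernel
  have hF0meas : Measurable (fun b => ∫⁻ t, (↑‖f₀ (b, t)‖₊) ∂θ) := by
    refine Measurable.lintegral_prod_right ?_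
    exact (hf₀meas.nnnorm.coe_nnreal_ennreal)
  have hF0int : ∫⁻ b, (∫⁻ t, (↑‖f₀ (b, t)‖₊) ∂θ) ∂ν = ∫⁻ p, (↑‖f₀ p‖₊) ∂μ :=
    (lintegral_prod _ (hf₀meas.nnnorm.coe_nnreal_ennreal).aemeasurable).symm
  have hf₀fin : ∫⁻ p, (↑‖f₀ p‖₊) ∂μ < ∞ := hf₀int.2
  have habsbound : ∀ g : Γ, ∫⁻ b, ∫⁻ b', ∫⁻ t, kabs g (b, t) b' ∂θ ∂ν ∂ν ≤
      ∫⁻ b, (ENNReal.ofReal C' * ∫⁻ t, (↑‖f₀ (b, t)‖₊) ∂θ) *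
        (∫⁻ b', ENNReal.ofReal (Υ n g b b') ∂ν) ∂ν := by
    intro g
    have hswap : ∀ b, Measurable (fun b' => ∫⁻ t, kabs g (b, t) b' ∂θ) := by
      intro b
      have := (meas3 ν θ (K := fun b b' t => kabs g (b, t) b')
        (((hkabsm g).comp (((measurable_fst.fst).prodMk measurable_snd).prodMk
          measurable_fst.snd)))).2.1
      exact this b
    refine lintegral_mono_ae ?_
    filter_upwards [hΥ3 n g] with b hb
    calc ∫⁻ b', ∫⁻ t, kabs g (b, t) b' ∂θ ∂ν
        ≤ ∫⁻ b', (ENNReal.ofReal C' * ∫⁻ t, (↑‖f₀ (b, t)‖₊) ∂θ) *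
            ENNReal.ofReal (Υ n g b b') ∂ν := by
          refine lintegral_mono_ae ?_
          filter_upwards [hb] with b' hb'
          by_cases hpos : 0 < Υ n g b b'
          · have hC : |R g⁻¹ b' - R g⁻¹ b| ≤ C := by
              have h1 := hb' hpos
              have h2 : |R g⁻¹ b' - R g⁻¹ b| ≤ |R g⁻¹ b'| + |R g⁻¹ b| := by
                rw [sub_eq_add_neg]
                exact (abs_add_le _ _).trans (by rw [abs_neg])
              linarith
            have hshift := lint_shift θ hθeq hθshift
              (φ := fun s => (↑‖f₀ (b, s)‖₊ : ℝ≥0∞))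
              (hf₀meas.nnnorm.coe_nnreal_ennreal.comp (measurable_prodMk_left (x := b)))
              hC
            have hmt : Measurable (fun t : ℝ =>
                (‖f₀ (b, t + (R g⁻¹ b' - R g⁻¹ b))‖₊ : ℝ≥0∞)) :=
              ((hf₀meas.comp ((measurable_const (a := b)).prodMk
                (measurable_id.add_const _))).nnnorm).coe_nnreal_ennreal
            calc ∫⁻ t, kabs g (b, t) b' ∂θ
                = (∫⁻ t, (↑‖f₀ (b, t + (R g⁻¹ b' - R g⁻¹ b))‖₊) ∂θ) *
                    ENNReal.ofReal (Υ n g b b') := by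
                  rw [← lintegral_mul_const _ hmt]
              _ ≤ (ENNReal.ofReal C' * ∫⁻ t, (↑‖f₀ (b, t)‖₊) ∂θ) *
                    ENNReal.ofReal (Υ n g b b') := mul_le_mul_left hshift _
          · have h0 : Υ n g b b' ≤ 0 := not_lt.1 hpos
            have hz : ENNReal.ofReal (Υ n g b b') = 0 := by
              simpa [ENNReal.ofReal_eq_zero] using h0
            simp [hkabs, hz]
      _ = (ENNReal.ofReal C' * ∫⁻ t, (↑‖f₀ (b, t)‖₊) ∂θ) *
            (∫⁻ b', ENNReal.ofReal (Υ n g b b') ∂ν) := lintegral_const_mul _ (hUb g b)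
  have habstotal : ∑' g : Γ, ∫⁻ b, ∫⁻ b', ∫⁻ t, kabs g (b, t) b' ∂θ ∂ν ∂ν ≤
      ENNReal.ofReal C' * ∫⁻ p, (↑‖f₀ p‖₊) ∂μ := by
    calc ∑' g : Γ, ∫⁻ b, ∫⁻ b', ∫⁻ t, kabs g (b, t) b' ∂θ ∂ν ∂ν
        ≤ ∑' g : Γ, ∫⁻ b, (ENNReal.ofReal C' * ∫⁻ t, (↑‖f₀ (b, t)‖₊) ∂θ) *
            (∫⁻ b', ENNReal.ofReal (Υ n g b b') ∂ν) ∂ν := ENNReal.tsum_le_tsum habsbound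
      _ = ∫⁻ b, ∑' g : Γ, (ENNReal.ofReal C' * ∫⁻ t, (↑‖f₀ (b, t)‖₊) ∂θ) *
            (∫⁻ b', ENNReal.ofReal (Υ n g b b') ∂ν) ∂ν := by
          refine (lintegral_tsum (fun g => ?_)).symm
          exact ((measurable_const.mul hF0meas).mul
            (Measurable.lintegral_prod_right
              (f := fun b b' => ENNReal.ofReal (Υ n g b b')) (hUm g))).aemeasurable
      _ = ∫⁻ b, (ENNReal.ofReal C' * ∫⁻ t, (↑‖f₀ (b, t)‖₊) ∂θ) *
            (∑' g : Γ, ∫⁻ b', ENNReal.ofReal (Υ n g b b') ∂ν) ∂ν := by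
          congr 1; funext b; rw [ENNReal.tsum_mul_left]
      _ = ∫⁻ b, ENNReal.ofReal C' * ∫⁻ t, (↑‖f₀ (b, t)‖₊) ∂θ ∂ν := by
          congr 1; funext b; rw [hΥ1 n b, mul_one]
      _ = ENNReal.ofReal C' * ∫⁻ b, ∫⁻ t, (↑‖f₀ (b, t)‖₊) ∂θ ∂ν :=
          lintegral_const_mul _ hF0meas
      _ = ENNReal.ofReal C' * ∫⁻ p, (↑‖f₀ p‖₊) ∂μ := by rw [hF0int]
  have hDabsint : ∫⁻ p, (∑' g : Γ, ∫⁻ b', kabs g p b' ∂ν) ∂μ < ∞ := by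
    rw [iter_rearrange ν θ kabs hkabsm]
    exact lt_of_le_of_lt habstotal (ENNReal.mul_lt_top ENNReal.ofReal_lt_top hf₀fin)
  have hDabsmeas : Measurable (fun p : B × ℝ => ∑' g : Γ, ∫⁻ b', kabs g p b' ∂ν) :=
    Measurable.ennreal_tsum (fun g => Measurable.lintegral_prod_right (hkabsm g))
  have hDabsae : ∀ᵐ p ∂μ, (∑' g : Γ, ∫⁻ b', kabs g p b' ∂ν) < ∞ :=
    ae_lt_top hDabsmeas hDabsint.ne
  -- transfer f = f₀ through the shift maps
  have htrans : ∀ᵐ p ∂μ, ∀ g : Γ, ∀ᵐ b' ∂ν,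
      f (p.1, p.2 + (R g⁻¹ b' - R g⁻¹ p.1)) = f₀ (p.1, p.2 + (R g⁻¹ b' - R g⁻¹ p.1)) := by
    rw [ae_all_iff]
    intro g
    have hmapfst : (ν.prod ν).map Prod.fst ≪ ν := by
      rw [Measure.map_fst_prod, measure_univ, one_smul]
    exact ae_pullback ν θ hθeq measurable_fst
      (((hRmeas g⁻¹).comp measurable_snd).sub ((hRmeas g⁻¹).comp measurable_fst)) hmapfst hff₀
  -- pointwise domination
  have hpoint : ∀ᵐ p ∂μ, (↑‖f p - Zop a ν R Υ n f p‖₊ : ℝ≥0∞) ≤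
      ∑' g : Γ, ∫⁻ b', k g p b' ∂ν := by
    filter_upwards [hff₀, htrans, hDabsae] with p hp1 hp2 hp3
    -- integrability of the kernels at p
    have hφb : ∀ g : Γ, Measurable (fun b' => f₀ (p.1, p.2 + (R g⁻¹ b' - R g⁻¹ p.1))) :=
      fun g => (hφmeas g).comp (measurable_prodMk_left (x := p))
    have hΥb : ∀ g : Γ, Measurable (fun b' => Υ n g p.1 b') :=
      fun g => (hΥmeas n g).comp (measurable_prodMk_left (x := p.1))
    have hIntΥ : ∀ g : Γ, Integrable (fun b' => Υ n g p.1 b') ν := by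
      intro g
      refine ⟨(hΥb g).aestronglyMeasurable, ?_⟩
      have : ∫⁻ b', (↑‖Υ n g p.1 b'‖₊) ∂ν = ∫⁻ b', ENNReal.ofReal (Υ n g p.1 b') ∂ν := by
        congr 1; funext b'
        rw [← Real.enorm_eq_ofReal (hΥnn n g p.1 b'), enorm_eq_nnnorm]
      rw [HasFiniteIntegral]
      exact lt_of_le_of_lt (this.le.trans (hUle1 g p.1)) ENNReal.one_lt_top
    have hkabs_eq : ∀ (g : Γ) (b' : B), (↑‖f₀ (p.1, p.2 + (R g⁻¹ b' - R g⁻¹ p.1)) *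
          Υ n g p.1 b'‖₊ : ℝ≥0∞) = kabs g p b' := by
      intro g b'
      rw [nnnorm_mul, ENNReal.coe_mul, ← enorm_eq_nnnorm (Υ n g p.1 b'), Real.enorm_eq_ofReal (hΥnn n g p.1 b')]
    have hkabslt : ∀ g : Γ, ∫⁻ b', kabs g p b' ∂ν < ∞ :=
      fun g => lt_of_le_of_lt (ENNReal.le_tsum g) hp3
    have hInt2 : ∀ g : Γ, Integrable
        (fun b' => f₀ (p.1, p.2 + (R g⁻¹ b' - R g⁻¹ p.1)) * Υ n g p.1 b') ν := by
      intro g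
      refine ⟨((hφb g).mul (hΥb g)).aestronglyMeasurable, ?_⟩
      rw [HasFiniteIntegral]
      calc ∫⁻ b', (↑‖f₀ (p.1, p.2 + (R g⁻¹ b' - R g⁻¹ p.1)) * Υ n g p.1 b'‖₊) ∂ν
          = ∫⁻ b', kabs g p b' ∂ν := by
            congr 1; funext b'; exact hkabs_eq g b'
        _ < ∞ := hkabslt g
    have hIntc : ∀ g : Γ, Integrable (fun b' => f₀ p * Υ n g p.1 b') ν :=
      fun g => (hIntΥ g).const_mul _
    -- the total mass is one
    set u : Γ → ℝ := fun g => ∫ b', Υ n g p.1 b' ∂ν with hu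
    have hu_eq : ∀ g : Γ, ENNReal.ofReal (u g) = ∫⁻ b', ENNReal.ofReal (Υ n g p.1 b') ∂ν :=
      fun g => ofReal_integral_eq_lintegral_ofReal (hIntΥ g)
        (Eventually.of_forall fun b' => hΥnn n g p.1 b')
    have hu_nn : ∀ g : Γ, 0 ≤ u g := fun g => integral_nonneg fun b' => hΥnn n g p.1 b'
    have hu_toReal : ∀ g : Γ, u g = (∫⁻ b', ENNReal.ofReal (Υ n g p.1 b') ∂ν).toReal := by
      intro g
      rw [← hu_eq g, ENNReal.toReal_ofReal (hu_nn g)]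
    have hSumu : Summable u := by
      have := ENNReal.summable_toReal (f := fun g : Γ => ∫⁻ b', ENNReal.ofReal (Υ n g p.1 b') ∂ν)
        (by rw [hΥ1 n p.1]; exact ENNReal.one_ne_top)
      refine this.congr fun g => ?_
      rw [hu_toReal g]
    have hTsumu : ∑' g : Γ, u g = 1 := by
      have h1 : ∑' g : Γ, u g =
          (∑' g : Γ, ∫⁻ b', ENNReal.ofReal (Υ n g p.1 b') ∂ν).toReal := by
        rw [ENNReal.tsum_toReal_eq (fun g => (lt_of_le_of_lt (hUle1 g p.1)
          ENNReal.one_lt_top).ne)]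
        exact tsum_congr fun g => hu_toReal g
      rw [h1, hΥ1 n p.1, ENNReal.toReal_one]
    -- summability of the integral sequences
    set M : Γ → ℝ := fun g => (∫⁻ b', kabs g p b' ∂ν).toReal with hM
    have hSumM : Summable M := ENNReal.summable_toReal hp3.ne
    have hIbound : ∀ g : Γ,
        ‖∫ b', f₀ (p.1, p.2 + (R g⁻¹ b' - R g⁻¹ p.1)) * Υ n g p.1 b' ∂ν‖ ≤ M g := by
      intro g
      refine (norm_integral_le_lintegral_norm _).trans ?_
      refine ENNReal.toReal_mono (hkabslt g).ne ?_
      refine le_of_eq ?_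
      congr 1; funext b'
      rw [ofReal_norm, enorm_eq_nnnorm, hkabs_eq g b']
    have hSum2 : Summable (fun g : Γ =>
        ∫ b', f₀ (p.1, p.2 + (R g⁻¹ b' - R g⁻¹ p.1)) * Υ n g p.1 b' ∂ν) :=
      Summable.of_norm_bounded hSumM hIbound
    have hS1 : Summable (fun g : Γ => ∫ b', f₀ p * Υ n g p.1 b' ∂ν) := by
      have : (fun g : Γ => ∫ b', f₀ p * Υ n g p.1 b' ∂ν) = fun g => f₀ p * u g := by
        funext g; exact integral_const_mul _ _
      rw [this]
      exact hSumu.mul_left _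
    -- the Z operator at p in terms of f₀
    have hZ : Zop a ν R Υ n f p =
        ∑' g : Γ, ∫ b', f₀ (p.1, p.2 + (R g⁻¹ b' - R g⁻¹ p.1)) * Υ n g p.1 b' ∂ν := by
      unfold Zop
      refine tsum_congr fun g => ?_
      refine integral_congr_ae ?_
      filter_upwards [hp2 g] with b' hb'
      rw [add_sub_assoc, hb']
    -- the key decomposition
    have key : f p - Zop a ν R Υ n f p = ∑' g : Γ,
        ∫ b', (f₀ p - f₀ (p.1, p.2 + (R g⁻¹ b' - R g⁻¹ p.1))) * Υ n g p.1 b' ∂ν := by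
      have h1 : f p = ∑' g : Γ, ∫ b', f₀ p * Υ n g p.1 b' ∂ν := by
        calc f p = f₀ p := hp1
          _ = f₀ p * ∑' g : Γ, u g := by rw [hTsumu, mul_one]
          _ = ∑' g : Γ, f₀ p * u g := tsum_mul_left.symm
          _ = ∑' g : Γ, ∫ b', f₀ p * Υ n g p.1 b' ∂ν :=
              tsum_congr fun g => (integral_const_mul _ _).symm
      rw [hZ, h1, ← Summable.tsum_sub hS1 hSum2]
      refine tsum_congr fun g => ?_
      rw [← integral_sub (hIntc g) (hInt2 g)]
      refine integral_congr_ae (Eventually.of_forall fun b' => ?_)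
      ring
    -- summability of norms
    have hxg_eq : ∀ g : Γ, ∫ b', (f₀ p - f₀ (p.1, p.2 + (R g⁻¹ b' - R g⁻¹ p.1))) *
        Υ n g p.1 b' ∂ν = (∫ b', f₀ p * Υ n g p.1 b' ∂ν) -
        ∫ b', f₀ (p.1, p.2 + (R g⁻¹ b' - R g⁻¹ p.1)) * Υ n g p.1 b' ∂ν := by
      intro g
      rw [← integral_sub (hIntc g) (hInt2 g)]
      refine integral_congr_ae (Eventually.of_forall fun b' => ?_)
      ring
    have hSumN : Summable (fun g : Γ =>
        ‖∫ b', (f₀ p - f₀ (p.1, p.2 + (R g⁻¹ b' - R g⁻¹ p.1))) * Υ n g p.1 b' ∂ν‖) := by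
      refine Summable.of_nonneg_of_le (fun g => norm_nonneg _)
        (fun g => ?_) (((hSumu.mul_left |f₀ p|).add hSumM))
      rw [hxg_eq g]
      refine (norm_sub_le _ _).trans ?_
      gcongr
      · rw [integral_const_mul, norm_mul, Real.norm_eq_abs, Real.norm_eq_abs,
          abs_of_nonneg (hu_nn g)]
      · exact (hIbound g)
    -- conclude
    rw [key]
    calc (↑‖∑' g : Γ, ∫ b', (f₀ p - f₀ (p.1, p.2 + (R g⁻¹ b' - R g⁻¹ p.1))) *
          Υ n g p.1 b' ∂ν‖₊ : ℝ≥0∞)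
        = ENNReal.ofReal ‖∑' g : Γ, ∫ b', (f₀ p - f₀ (p.1, p.2 + (R g⁻¹ b' - R g⁻¹ p.1))) *
            Υ n g p.1 b' ∂ν‖ := (ofReal_norm _).symm
      _ ≤ ENNReal.ofReal (∑' g : Γ, ‖∫ b', (f₀ p - f₀ (p.1, p.2 + (R g⁻¹ b' - R g⁻¹ p.1))) *
            Υ n g p.1 b' ∂ν‖) := ENNReal.ofReal_le_ofReal (norm_tsum_le_tsum_norm hSumN)
      _ = ∑' g : Γ, ENNReal.ofReal ‖∫ b', (f₀ p - f₀ (p.1, p.2 + (R g⁻¹ b' - R g⁻¹ p.1))) *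
            Υ n g p.1 b' ∂ν‖ := ENNReal.ofReal_tsum_of_nonneg (fun g => norm_nonneg _) hSumN
      _ ≤ ∑' g : Γ, ∫⁻ b', k g p b' ∂ν := by
          refine ENNReal.tsum_le_tsum fun g => ?_
          rw [ofReal_norm]
          refine (enorm_integral_le_lintegral_enorm _).trans ?_
          refine le_of_eq ?_
          congr 1; funext b'
          rw [enorm_eq_nnnorm, nnnorm_mul, ENNReal.coe_mul, ← enorm_eq_nnnorm (Υ n g p.1 b'), Real.enorm_eq_ofReal (hΥnn n g p.1 b')]
  -- assemble
  rw [eLpNorm_one_eq_lintegral_enorm]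
  calc ∫⁻ p, (↑‖f p - Zop a ν R Υ n f p‖₊) ∂μ
      ≤ ∫⁻ p, (∑' g : Γ, ∫⁻ b', k g p b' ∂ν) ∂μ := lintegral_mono_ae hpoint
    _ = ∑' g : Γ, ∫⁻ b, ∫⁻ b', ∫⁻ t, k g (b, t) b' ∂θ ∂ν ∂ν := iter_rearrange ν θ k hkm
    _ = Tsum3 ν θ (fun g b b' t =>
        (↑‖f₀ (b, t) - f₀ (b, t + (R g⁻¹ b' - R g⁻¹ b))‖₊) * ENNReal.ofReal (Υ n g b b')) := rfl

end MyStep12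

section MyStep2
variable {Γ B : Type} [Group Γ] [Countable Γ] [MeasurableSpace B]

lemma step2
    (ν : Measure B) [IsProbabilityMeasure ν] (a : Γ → B → B)
    (hact : IsNonsingularAction a ν)
    (R : Γ → B → ℝ) (hRmeas : ∀ g : Γ, Measurable (R g))
    (Υ : ℕ → Γ → B → B → ℝ)
    (hΥmeas : ∀ (n : ℕ) (g : Γ), Measurable (fun p : B × B => Υ n g p.1 p.2))
    (θ : Measure ℝ) [IsProbabilityMeasure θ]
    (hθeq : θ ≪ (volume : Measure ℝ) ∧ (volume : Measure ℝ) ≪ θ)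
    (f₀ : B × ℝ → ℝ) (hf₀meas : Measurable f₀)
    (hS : ∀ g : Γ, ∀ᵐ q ∂(ν.prod θ), f₀ (a g⁻¹ q.1, q.2 + R g⁻¹ q.1) = f₀ q)
    (n : ℕ) :
    Tsum3 ν θ (fun g b b' t =>
        (↑‖f₀ (b, t) - f₀ (b, t + (R g⁻¹ b' - R g⁻¹ b))‖₊) * ENNReal.ofReal (Υ n g b b'))
      ≤ Tsum3 ν θ (fun g b b' t =>
          (↑‖f₀ (b, t) - f₀ (b', t)‖₊) * ENNReal.ofReal (Υ n g b b'))
        + Tsum3 ν θ (fun g b b' t =>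
          (↑‖f₀ (a g⁻¹ b', t + R g⁻¹ b') - f₀ (a g⁻¹ b, t + R g⁻¹ b')‖₊) *
            ENNReal.ofReal (Υ n g b b')) := by
  have hE1 : ∀ g : Γ, ∀ᵐ b ∂ν, ∀ᵐ b' ∂ν, ∀ᵐ t ∂θ,
      f₀ (b', t) = f₀ (a g⁻¹ b', t + R g⁻¹ b') := by
    intro g
    have hmapsnd : (ν.prod ν).map Prod.snd ≪ ν := by
      rw [Measure.map_snd_prod, measure_univ, one_smul]
    have := ae_pullback3 ν θ hθeq (w := Prod.snd) (c := fun _ => 0)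
      measurable_snd measurable_const hmapsnd (hS g)
    filter_upwards [this] with b hb
    filter_upwards [hb] with b' hb'
    filter_upwards [hb'] with t ht
    simpa using ht.symm
  have hE2 : ∀ g : Γ, ∀ᵐ b ∂ν, ∀ᵐ b' ∂ν, ∀ᵐ t ∂θ,
      f₀ (b, t + (R g⁻¹ b' - R g⁻¹ b)) = f₀ (a g⁻¹ b, t + R g⁻¹ b') := by
    intro g
    have hmapfst : (ν.prod ν).map Prod.fst ≪ ν := by
      rw [Measure.map_fst_prod, measure_univ, one_smul]
    have := ae_pullback3 ν θ hθeq (w := Prod.fst)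
      (c := fun q : B × B => R g⁻¹ q.2 - R g⁻¹ q.1)
      measurable_fst (((hRmeas g⁻¹).comp measurable_snd).sub
        ((hRmeas g⁻¹).comp measurable_fst)) hmapfst (hS g)
    filter_upwards [this] with b hb
    filter_upwards [hb] with b' hb'
    filter_upwards [hb'] with t ht
    have harg : t + (R g⁻¹ b' - R g⁻¹ b) + R g⁻¹ b = t + R g⁻¹ b' := by ring
    rw [harg] at ht
    exact ht.symm
  have hmono := Tsum3_mono_ae ν θ
    (K₁ := fun g b b' t =>
      (↑‖f₀ (b, t) - f₀ (b, t + (R g⁻¹ b' - R g⁻¹ b))‖₊) * ENNReal.ofReal (Υ n g b b'))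
    (K₂ := fun g b b' t =>
      ((↑‖f₀ (b, t) - f₀ (b', t)‖₊)
        + (↑‖f₀ (a g⁻¹ b', t + R g⁻¹ b') - f₀ (a g⁻¹ b, t + R g⁻¹ b')‖₊)) *
        ENNReal.ofReal (Υ n g b b'))
    (by
      intro g
      filter_upwards [hE1 g, hE2 g] with b hb1 hb2
      filter_upwards [hb1, hb2] with b' hb1' hb2'
      filter_upwards [hb1', hb2'] with t h1 h2
      refine mul_le_mul_left ?_ _
      rw [← h1, ← h2]
      calc (↑‖f₀ (b, t) - f₀ (b, t + (R g⁻¹ b' - R g⁻¹ b))‖₊ : ℝ≥0∞)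
          = ↑‖(f₀ (b, t) - f₀ (b', t)) +
              (f₀ (b', t) - f₀ (b, t + (R g⁻¹ b' - R g⁻¹ b)))‖₊ := by ring_nf
        _ ≤ ↑‖f₀ (b, t) - f₀ (b', t)‖₊ +
              ↑‖f₀ (b', t) - f₀ (b, t + (R g⁻¹ b' - R g⁻¹ b))‖₊ := by
            rw [← ENNReal.coe_add]
            exact ENNReal.coe_le_coe.2 (nnnorm_add_le _ _))
  refine hmono.trans (le_of_eq ?_)
  have hK1m : ∀ g : Γ, Measurable (fun q : (B × B) × ℝ =>
      (↑‖f₀ (q.1.1, q.2) - f₀ (q.1.2, q.2)‖₊ : ℝ≥0∞) * ENNReal.ofReal (Υ n g q.1.1 q.1.2)) := by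
    intro g
    refine Measurable.fun_mul ?_ ?_
    · exact ((hf₀meas.comp (measurable_fst.fst.prodMk measurable_snd)).sub
        (hf₀meas.comp (measurable_fst.snd.prodMk measurable_snd))).nnnorm.coe_nnreal_ennreal
    · exact ((hΥmeas n g).comp (measurable_fst.fst.prodMk measurable_fst.snd)).ennreal_ofReal
  have hK2m : ∀ g : Γ, Measurable (fun q : (B × B) × ℝ =>
      (↑‖f₀ (a g⁻¹ q.1.2, q.2 + R g⁻¹ q.1.2) - f₀ (a g⁻¹ q.1.1, q.2 + R g⁻¹ q.1.2)‖₊ : ℝ≥0∞) *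
        ENNReal.ofReal (Υ n g q.1.1 q.1.2)) := by
    intro g
    have ham : Measurable (a g⁻¹) := hact.1 g⁻¹
    refine Measurable.fun_mul ?_ ?_
    · refine Measurable.coe_nnreal_ennreal (Measurable.nnnorm ?_)
      refine Measurable.sub ?_ ?_
      · exact hf₀meas.comp ((ham.comp measurable_fst.snd).prodMk
          (measurable_snd.add ((hRmeas g⁻¹).comp measurable_fst.snd)))
      · exact hf₀meas.comp ((ham.comp measurable_fst.fst).prodMk
          (measurable_snd.add ((hRmeas g⁻¹).comp measurable_fst.snd)))
    · exact ((hΥmeas n g).comp (measurable_fst.fst.prodMk measurable_fst.snd)).ennreal_ofReal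
  have := Tsum3_add ν θ
    (K₁ := fun g b b' t =>
      (↑‖f₀ (b, t) - f₀ (b', t)‖₊) * ENNReal.ofReal (Υ n g b b'))
    (K₂ := fun g b b' t =>
      (↑‖f₀ (a g⁻¹ b', t + R g⁻¹ b') - f₀ (a g⁻¹ b, t + R g⁻¹ b')‖₊) *
        ENNReal.ofReal (Υ n g b b')) hK1m hK2m
  rw [← this]
  congr 1
  funext g b b' t
  ring

end MyStep2

section MyStep3
variable {Γ B : Type} [Group Γ] [Countable Γ] [MeasurableSpace B]

lemma Tsum3_mass (ν : Measure B) [IsProbabilityMeasure ν]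
    (θ : Measure ℝ) [IsProbabilityMeasure θ]
    (Υ : ℕ → Γ → B → B → ℝ)
    (hΥmeas : ∀ (n : ℕ) (g : Γ), Measurable (fun p : B × B => Υ n g p.1 p.2))
    (hΥ1 : ∀ (n : ℕ) (b : B), ∑' g : Γ, ∫⁻ b', ENNReal.ofReal (Υ n g b b') ∂ν = 1)
    (n : ℕ) (c : ℝ≥0∞) :
    Tsum3 ν θ (fun g b b' _t => c * ENNReal.ofReal (Υ n g b b')) = c := by
  unfold Tsum3
  have hUb : ∀ (g : Γ) (b : B), Measurable (fun b' => ENNReal.ofReal (Υ n g b b')) :=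
    fun g b => ((hΥmeas n g).ennreal_ofReal).comp (measurable_prodMk_left (x := b))
  have h1 : ∀ (g : Γ) (b : B), (∫⁻ b', ∫⁻ _t, c * ENNReal.ofReal (Υ n g b b') ∂θ ∂ν)
      = c * ∫⁻ b', ENNReal.ofReal (Υ n g b b') ∂ν := by
    intro g b
    rw [← lintegral_const_mul _ (hUb g b)]
    congr 1; funext b'
    rw [lintegral_const, measure_univ, mul_one]
  calc ∑' g : Γ, ∫⁻ b, ∫⁻ b', ∫⁻ _t, c * ENNReal.ofReal (Υ n g b b') ∂θ ∂ν ∂ν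
      = ∑' g : Γ, ∫⁻ b, c * ∫⁻ b', ENNReal.ofReal (Υ n g b b') ∂ν ∂ν := by
        refine tsum_congr fun g => ?_
        congr 1; funext b; exact h1 g b
    _ = ∫⁻ b, ∑' g : Γ, c * ∫⁻ b', ENNReal.ofReal (Υ n g b b') ∂ν ∂ν := by
        refine (lintegral_tsum fun g => ?_).symm
        exact (measurable_const.mul (Measurable.lintegral_prod_right
          (f := fun b b' => ENNReal.ofReal (Υ n g b b'))
          ((hΥmeas n g).ennreal_ofReal))).aemeasurable
    _ = ∫⁻ b, c * ∑' g : Γ, ∫⁻ b', ENNReal.ofReal (Υ n g b b') ∂ν ∂ν := by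
        congr 1; funext b; rw [ENNReal.tsum_mul_left]
    _ = ∫⁻ (_b : B), c ∂ν := by
        congr 1; funext b; rw [hΥ1 n b, mul_one]
    _ = c := by rw [lintegral_const, measure_univ, mul_one]

lemma step3_Pe1 (ν : Measure B) [IsProbabilityMeasure ν]
    (θ : Measure ℝ) [IsProbabilityMeasure θ]
    (Υ : ℕ → Γ → B → B → ℝ)
    (hΥmeas : ∀ (n : ℕ) (g : Γ), Measurable (fun p : B × B => Υ n g p.1 p.2))
    (hΥ1 : ∀ (n : ℕ) (b : B), ∑' g : Γ, ∫⁻ b', ENNReal.ofReal (Υ n g b b') ∂ν = 1)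
    (n : ℕ) (e : B × ℝ → ℝ) (he : Measurable e) :
    Tsum3 ν θ (fun g b b' t => (↑‖e (b, t)‖₊) * ENNReal.ofReal (Υ n g b b'))
      = ∫⁻ p, (↑‖e p‖₊) ∂(ν.prod θ) := by
  unfold Tsum3
  have hUb : ∀ (g : Γ) (b : B), Measurable (fun b' => ENNReal.ofReal (Υ n g b b')) :=
    fun g b => ((hΥmeas n g).ennreal_ofReal).comp (measurable_prodMk_left (x := b))
  have hFe : Measurable (fun b => ∫⁻ t, (↑‖e (b, t)‖₊) ∂θ) :=
    Measurable.lintegral_prod_right (he.nnnorm.coe_nnreal_ennreal)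
  have hemt : ∀ b : B, Measurable (fun t => (↑‖e (b, t)‖₊ : ℝ≥0∞)) :=
    fun b => (he.nnnorm.coe_nnreal_ennreal).comp (measurable_prodMk_left (x := b))
  have h1 : ∀ (g : Γ) (b : B), (∫⁻ b', ∫⁻ t, (↑‖e (b, t)‖₊) *
      ENNReal.ofReal (Υ n g b b') ∂θ ∂ν)
      = (∫⁻ t, (↑‖e (b, t)‖₊) ∂θ) * ∫⁻ b', ENNReal.ofReal (Υ n g b b') ∂ν := by
    intro g b
    rw [← lintegral_const_mul _ (hUb g b)]
    congr 1; funext b'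
    rw [← lintegral_mul_const _ (hemt b)]
  calc ∑' g : Γ, ∫⁻ b, ∫⁻ b', ∫⁻ t, (↑‖e (b, t)‖₊) * ENNReal.ofReal (Υ n g b b') ∂θ ∂ν ∂ν
      = ∑' g : Γ, ∫⁻ b, (∫⁻ t, (↑‖e (b, t)‖₊) ∂θ) *
          ∫⁻ b', ENNReal.ofReal (Υ n g b b') ∂ν ∂ν := by
        refine tsum_congr fun g => ?_
        congr 1; funext b; exact h1 g b
    _ = ∫⁻ b, ∑' g : Γ, (∫⁻ t, (↑‖e (b, t)‖₊) ∂θ) *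
          ∫⁻ b', ENNReal.ofReal (Υ n g b b') ∂ν ∂ν := by
        refine (lintegral_tsum fun g => ?_).symm
        exact (hFe.mul (Measurable.lintegral_prod_right
          (f := fun b b' => ENNReal.ofReal (Υ n g b b'))
          ((hΥmeas n g).ennreal_ofReal))).aemeasurable
    _ = ∫⁻ b, (∫⁻ t, (↑‖e (b, t)‖₊) ∂θ) *
          ∑' g : Γ, ∫⁻ b', ENNReal.ofReal (Υ n g b b') ∂ν ∂ν := by
        congr 1; funext b; rw [ENNReal.tsum_mul_left]
    _ = ∫⁻ b, ∫⁻ t, (↑‖e (b, t)‖₊) ∂θ ∂ν := by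
        congr 1; funext b; rw [hΥ1 n b, mul_one]
    _ = ∫⁻ p, (↑‖e p‖₊) ∂(ν.prod θ) :=
        (lintegral_prod _ (he.nnnorm.coe_nnreal_ennreal).aemeasurable).symm

end MyStep3

section MyStep3b
variable {Γ B : Type} [Group Γ] [Countable Γ] [MeasurableSpace B]

lemma step3_Pe2 (ν : Measure B) [IsProbabilityMeasure ν]
    (θ : Measure ℝ) [IsProbabilityMeasure θ]
    (Υ : ℕ → Γ → B → B → ℝ)
    (hΥmeas : ∀ (n : ℕ) (g : Γ), Measurable (fun p : B × B => Υ n g p.1 p.2))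
    {C₄ : ℝ} (n : ℕ)
    (h4a : ∀ᵐ b' ∂ν, ∫⁻ b, ∑' g : Γ, ENNReal.ofReal (Υ n g b b') ∂ν ≤ ENNReal.ofReal C₄)
    (e : B × ℝ → ℝ) (he : Measurable e) :
    Tsum3 ν θ (fun g b b' t => (↑‖e (b', t)‖₊) * ENNReal.ofReal (Υ n g b b'))
      ≤ ENNReal.ofReal C₄ * ∫⁻ p, (↑‖e p‖₊) ∂(ν.prod θ) := by
  unfold Tsum3
  have hFe : Measurable (fun b => ∫⁻ t, (↑‖e (b, t)‖₊) ∂θ) :=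
    Measurable.lintegral_prod_right (he.nnnorm.coe_nnreal_ennreal)
  have hemt : ∀ b : B, Measurable (fun t => (↑‖e (b, t)‖₊ : ℝ≥0∞)) :=
    fun b => (he.nnnorm.coe_nnreal_ennreal).comp (measurable_prodMk_left (x := b))
  have hUb' : ∀ (g : Γ) (b' : B), Measurable (fun b => ENNReal.ofReal (Υ n g b b')) :=
    fun g b' => ((hΥmeas n g).ennreal_ofReal).comp (measurable_id.prodMk measurable_const)
  have h1 : ∀ g : Γ, (∫⁻ b, ∫⁻ b', ∫⁻ t, (↑‖e (b', t)‖₊) *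
      ENNReal.ofReal (Υ n g b b') ∂θ ∂ν ∂ν)
      = ∫⁻ b', (∫⁻ t, (↑‖e (b', t)‖₊) ∂θ) *
          ∫⁻ b, ENNReal.ofReal (Υ n g b b') ∂ν ∂ν := by
    intro g
    have hstep : ∀ b : B, (∫⁻ b', ∫⁻ t, (↑‖e (b', t)‖₊) *
        ENNReal.ofReal (Υ n g b b') ∂θ ∂ν)
        = ∫⁻ b', (∫⁻ t, (↑‖e (b', t)‖₊) ∂θ) * ENNReal.ofReal (Υ n g b b') ∂ν := by
      intro b
      congr 1; funext b'
      rw [← lintegral_mul_const _ (hemt b')]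
    calc ∫⁻ b, ∫⁻ b', ∫⁻ t, (↑‖e (b', t)‖₊) * ENNReal.ofReal (Υ n g b b') ∂θ ∂ν ∂ν
        = ∫⁻ b, ∫⁻ b', (∫⁻ t, (↑‖e (b', t)‖₊) ∂θ) * ENNReal.ofReal (Υ n g b b') ∂ν ∂ν := by
          congr 1; funext b; exact hstep b
      _ = ∫⁻ b', ∫⁻ b, (∫⁻ t, (↑‖e (b', t)‖₊) ∂θ) * ENNReal.ofReal (Υ n g b b') ∂ν ∂ν := by
          refine lintegral_lintegral_swap ?_
          exact ((hFe.comp measurable_snd).mul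
            (((hΥmeas n g).ennreal_ofReal).comp
              (measurable_fst.prodMk measurable_snd))).aemeasurable
      _ = ∫⁻ b', (∫⁻ t, (↑‖e (b', t)‖₊) ∂θ) *
            ∫⁻ b, ENNReal.ofReal (Υ n g b b') ∂ν ∂ν := by
          congr 1; funext b'
          rw [lintegral_const_mul _ (hUb' g b')]
  calc ∑' g : Γ, ∫⁻ b, ∫⁻ b', ∫⁻ t, (↑‖e (b', t)‖₊) * ENNReal.ofReal (Υ n g b b') ∂θ ∂ν ∂ν
      = ∑' g : Γ, ∫⁻ b', (∫⁻ t, (↑‖e (b', t)‖₊) ∂θ) *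
          ∫⁻ b, ENNReal.ofReal (Υ n g b b') ∂ν ∂ν := tsum_congr h1
    _ = ∫⁻ b', ∑' g : Γ, (∫⁻ t, (↑‖e (b', t)‖₊) ∂θ) *
          ∫⁻ b, ENNReal.ofReal (Υ n g b b') ∂ν ∂ν := by
        refine (lintegral_tsum fun g => ?_).symm
        refine (hFe.mul ?_).aemeasurable
        exact Measurable.lintegral_prod_left
          (f := fun b b' => ENNReal.ofReal (Υ n g b b')) ((hΥmeas n g).ennreal_ofReal)
    _ = ∫⁻ b', (∫⁻ t, (↑‖e (b', t)‖₊) ∂θ) *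
          ∑' g : Γ, ∫⁻ b, ENNReal.ofReal (Υ n g b b') ∂ν ∂ν := by
        congr 1; funext b'; rw [ENNReal.tsum_mul_left]
    _ ≤ ∫⁻ b', (∫⁻ t, (↑‖e (b', t)‖₊) ∂θ) * ENNReal.ofReal C₄ ∂ν := by
        refine lintegral_mono_ae ?_
        filter_upwards [h4a] with b' hb'
        refine mul_le_mul_right ?_ _
        rw [← lintegral_tsum (fun g => (hUb' g b').aemeasurable)]
        exact hb'
    _ = ENNReal.ofReal C₄ * ∫⁻ b', ∫⁻ t, (↑‖e (b', t)‖₊) ∂θ ∂ν := by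
        rw [← lintegral_const_mul _ hFe]
        congr 1; funext b'; rw [mul_comm]
    _ = ENNReal.ofReal C₄ * ∫⁻ p, (↑‖e p‖₊) ∂(ν.prod θ) := by
        rw [(lintegral_prod _ (he.nnnorm.coe_nnreal_ennreal).aemeasurable).symm]

end MyStep3b

section MyStep3c
variable {Γ B : Type} [Group Γ] [Countable Γ] [MeasurableSpace B]

lemma step3_Qe1 (ν : Measure B) [IsProbabilityMeasure ν] (a : Γ → B → B)
    (hact : IsNonsingularAction a ν)
    (R : Γ → B → ℝ) (hRmeas : ∀ g : Γ, Measurable (R g))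
    (Υ : ℕ → Γ → B → B → ℝ)
    (hΥmeas : ∀ (n : ℕ) (g : Γ), Measurable (fun p : B × B => Υ n g p.1 p.2))
    {C : ℝ} (n : ℕ)
    (hΥ3 : ∀ g : Γ, ∀ᵐ b ∂ν, ∀ᵐ b' ∂ν, 0 < Υ n g b b' →
      |R g⁻¹ b| + |R g⁻¹ b'| ≤ C)
    (θ : Measure ℝ) [IsProbabilityMeasure θ]
    (hθeq : θ ≪ (volume : Measure ℝ) ∧ (volume : Measure ℝ) ≪ θ)
    {C' : ℝ}
    (hθshift : ∀ t₀ : ℝ, |t₀| ≤ C →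
      ∀ᵐ r ∂θ, (θ.map (fun s => s - t₀)).rnDeriv θ r ≤ ENNReal.ofReal C')
    {C₄ : ℝ}
    (h4b : ∀ᵐ b' ∂ν, ∫⁻ b, ∑' g : Γ, ENNReal.ofReal (Υ n g b (a g b')) * rnD a ν g b' ∂ν
      ≤ ENNReal.ofReal C₄)
    (e : B × ℝ → ℝ) (he : Measurable e) :
    Tsum3 ν θ (fun g b b' t =>
        (↑‖e (a g⁻¹ b', t + R g⁻¹ b')‖₊) * ENNReal.ofReal (Υ n g b b'))
      ≤ ENNReal.ofReal C' * (ENNReal.ofReal C₄ * ∫⁻ p, (↑‖e p‖₊) ∂(ν.prod θ)) := by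
  unfold Tsum3
  have hFe : Measurable (fun x => ∫⁻ t, (↑‖e (x, t)‖₊) ∂θ) :=
    Measurable.lintegral_prod_right (he.nnnorm.coe_nnreal_ennreal)
  have hUb' : ∀ (g : Γ) (b' : B), Measurable (fun b => ENNReal.ofReal (Υ n g b b')) :=
    fun g b' => ((hΥmeas n g).ennreal_ofReal).comp (measurable_id.prodMk measurable_const)
  have hHg : ∀ g : Γ, Measurable (fun y => ∫⁻ b, ENNReal.ofReal (Υ n g b y) ∂ν) :=
    fun g => Measurable.lintegral_prod_left
      (f := fun b y => ENNReal.ofReal (Υ n g b y)) ((hΥmeas n g).ennreal_ofReal)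
  -- step A
  have hA : ∀ g : Γ,
      (∫⁻ b, ∫⁻ b', ∫⁻ t, (↑‖e (a g⁻¹ b', t + R g⁻¹ b')‖₊) *
        ENNReal.ofReal (Υ n g b b') ∂θ ∂ν ∂ν)
      ≤ ∫⁻ b, ∫⁻ b', (ENNReal.ofReal C' * ∫⁻ t, (↑‖e (a g⁻¹ b', t)‖₊) ∂θ) *
          ENNReal.ofReal (Υ n g b b') ∂ν ∂ν := by
    intro g
    refine lintegral_mono_ae ?_
    filter_upwards [hΥ3 g] with b hb
    refine lintegral_mono_ae ?_
    filter_upwards [hb] with b' hb'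
    by_cases hpos : 0 < Υ n g b b'
    · have hC : |R g⁻¹ b'| ≤ C := by
        have h1 := hb' hpos
        have h2 := abs_nonneg (R g⁻¹ b)
        linarith
      have hmt : Measurable (fun t : ℝ => (‖e (a g⁻¹ b', t + R g⁻¹ b')‖₊ : ℝ≥0∞)) :=
        (he.nnnorm.coe_nnreal_ennreal).comp
          ((measurable_const (a := a g⁻¹ b')).prodMk (measurable_id.add_const _))
      rw [lintegral_mul_const _ hmt]
      refine mul_le_mul_left ?_ _
      exact lint_shift θ hθeq hθshift (φ := fun s => (↑‖e (a g⁻¹ b', s)‖₊ : ℝ≥0∞))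
        ((he.nnnorm.coe_nnreal_ennreal).comp (measurable_prodMk_left (x := a g⁻¹ b'))) hC
    · have hz : ENNReal.ofReal (Υ n g b b') = 0 := by
        simpa [ENNReal.ofReal_eq_zero] using not_lt.1 hpos
      simp [hz]
  -- step B and C
  have hBC : ∀ g : Γ,
      (∫⁻ b, ∫⁻ b', (ENNReal.ofReal C' * ∫⁻ t, (↑‖e (a g⁻¹ b', t)‖₊) ∂θ) *
        ENNReal.ofReal (Υ n g b b') ∂ν ∂ν)
      = ENNReal.ofReal C' * ∫⁻ x, (∫⁻ t, (↑‖e (x, t)‖₊) ∂θ) *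
          ((∫⁻ b, ENNReal.ofReal (Υ n g b (a g x)) ∂ν) * rnD a ν g x) ∂ν := by
    intro g
    have hswap : (∫⁻ b, ∫⁻ b', (ENNReal.ofReal C' * ∫⁻ t, (↑‖e (a g⁻¹ b', t)‖₊) ∂θ) *
        ENNReal.ofReal (Υ n g b b') ∂ν ∂ν)
        = ∫⁻ b', ∫⁻ b, (ENNReal.ofReal C' * ∫⁻ t, (↑‖e (a g⁻¹ b', t)‖₊) ∂θ) *
          ENNReal.ofReal (Υ n g b b') ∂ν ∂ν := by
      refine lintegral_lintegral_swap ?_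
      refine ((measurable_const.mul ((hFe.comp ((hact.1 g⁻¹).comp measurable_snd)))).mul
        (((hΥmeas n g).ennreal_ofReal).comp
          (measurable_fst.prodMk measurable_snd))).aemeasurable
    rw [hswap]
    have hG : Measurable (fun x => (∫⁻ t, (↑‖e (x, t)‖₊) ∂θ) *
        ((∫⁻ b, ENNReal.ofReal (Υ n g b (a g x)) ∂ν))) :=
      hFe.mul ((hHg g).comp (hact.1 g))
    calc ∫⁻ b', ∫⁻ b, (ENNReal.ofReal C' * ∫⁻ t, (↑‖e (a g⁻¹ b', t)‖₊) ∂θ) *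
          ENNReal.ofReal (Υ n g b b') ∂ν ∂ν
        = ∫⁻ b', ENNReal.ofReal C' * ((∫⁻ t, (↑‖e (a g⁻¹ b', t)‖₊) ∂θ) *
            ((∫⁻ b, ENNReal.ofReal (Υ n g b (a g (a g⁻¹ b'))) ∂ν))) ∂ν := by
          congr 1; funext b'
          rw [lintegral_const_mul _ (hUb' g b'), a_inv_cancel hact g b', mul_assoc]
      _ = ENNReal.ofReal C' * ∫⁻ b', (∫⁻ t, (↑‖e (a g⁻¹ b', t)‖₊) ∂θ) *
            ((∫⁻ b, ENNReal.ofReal (Υ n g b (a g (a g⁻¹ b'))) ∂ν)) ∂ν :=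
          lintegral_const_mul _ (hG.comp (hact.1 g⁻¹))
      _ = ENNReal.ofReal C' * ∫⁻ x, (∫⁻ t, (↑‖e (x, t)‖₊) ∂θ) *
            ((∫⁻ b, ENNReal.ofReal (Υ n g b (a g x)) ∂ν) * rnD a ν g x) ∂ν := by
          congr 1
          rw [cov a ν hact g hG]
          congr 1; funext x
          rw [mul_assoc]
  -- assemble
  calc ∑' g : Γ, ∫⁻ b, ∫⁻ b', ∫⁻ t, (↑‖e (a g⁻¹ b', t + R g⁻¹ b')‖₊) *
        ENNReal.ofReal (Υ n g b b') ∂θ ∂ν ∂ν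
      ≤ ∑' g : Γ, ∫⁻ b, ∫⁻ b', (ENNReal.ofReal C' * ∫⁻ t, (↑‖e (a g⁻¹ b', t)‖₊) ∂θ) *
          ENNReal.ofReal (Υ n g b b') ∂ν ∂ν := ENNReal.tsum_le_tsum hA
    _ = ∑' g : Γ, ENNReal.ofReal C' * ∫⁻ x, (∫⁻ t, (↑‖e (x, t)‖₊) ∂θ) *
          ((∫⁻ b, ENNReal.ofReal (Υ n g b (a g x)) ∂ν) * rnD a ν g x) ∂ν := tsum_congr hBC
    _ = ENNReal.ofReal C' * ∑' g : Γ, ∫⁻ x, (∫⁻ t, (↑‖e (x, t)‖₊) ∂θ) *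
          ((∫⁻ b, ENNReal.ofReal (Υ n g b (a g x)) ∂ν) * rnD a ν g x) ∂ν :=
        ENNReal.tsum_mul_left
    _ = ENNReal.ofReal C' * ∫⁻ x, (∫⁻ t, (↑‖e (x, t)‖₊) ∂θ) *
          ∑' g : Γ, ((∫⁻ b, ENNReal.ofReal (Υ n g b (a g x)) ∂ν) * rnD a ν g x) ∂ν := by
        congr 1
        rw [← lintegral_tsum]
        · congr 1; funext x; rw [ENNReal.tsum_mul_left]
        · intro g
          exact (hFe.mul (((hHg g).comp (hact.1 g)).mul
            (Measure.measurable_rnDeriv _ _))).aemeasurable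
    _ ≤ ENNReal.ofReal C' * ∫⁻ x, (∫⁻ t, (↑‖e (x, t)‖₊) ∂θ) * ENNReal.ofReal C₄ ∂ν := by
        refine mul_le_mul_right ?_ _
        refine lintegral_mono_ae ?_
        filter_upwards [h4b] with x hx
        refine mul_le_mul_right ?_ _
        calc ∑' g : Γ, (∫⁻ b, ENNReal.ofReal (Υ n g b (a g x)) ∂ν) * rnD a ν g x
            = ∑' g : Γ, ∫⁻ b, ENNReal.ofReal (Υ n g b (a g x)) * rnD a ν g x ∂ν := by
              refine tsum_congr fun g => ?_
              rw [lintegral_mul_const _ (hUb' g (a g x))]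
          _ = ∫⁻ b, ∑' g : Γ, ENNReal.ofReal (Υ n g b (a g x)) * rnD a ν g x ∂ν := by
              refine (lintegral_tsum fun g => ?_).symm
              exact ((hUb' g (a g x)).mul measurable_const).aemeasurable
          _ ≤ ENNReal.ofReal C₄ := hx
    _ = ENNReal.ofReal C' * (ENNReal.ofReal C₄ * ∫⁻ p, (↑‖e p‖₊) ∂(ν.prod θ)) := by
        congr 1
        rw [lintegral_prod _ (he.nnnorm.coe_nnreal_ennreal).aemeasurable,
          ← lintegral_const_mul _ hFe]
        congr 1; funext x; rw [mul_comm]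

end MyStep3c

section MyStep3d
variable {Γ B : Type} [Group Γ] [Countable Γ] [MeasurableSpace B]

lemma step3_Qe2 (ν : Measure B) [IsProbabilityMeasure ν] (a : Γ → B → B)
    (hact : IsNonsingularAction a ν)
    (R : Γ → B → ℝ) (hRmeas : ∀ g : Γ, Measurable (R g))
    (Υ : ℕ → Γ → B → B → ℝ)
    (hΥmeas : ∀ (n : ℕ) (g : Γ), Measurable (fun p : B × B => Υ n g p.1 p.2))
    {C : ℝ} (n : ℕ)
    (hΥ3 : ∀ g : Γ, ∀ᵐ b ∂ν, ∀ᵐ b' ∂ν, 0 < Υ n g b b' →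
      |R g⁻¹ b| + |R g⁻¹ b'| ≤ C)
    (θ : Measure ℝ) [IsProbabilityMeasure θ]
    (hθeq : θ ≪ (volume : Measure ℝ) ∧ (volume : Measure ℝ) ≪ θ)
    {C' : ℝ}
    (hθshift : ∀ t₀ : ℝ, |t₀| ≤ C →
      ∀ᵐ r ∂θ, (θ.map (fun s => s - t₀)).rnDeriv θ r ≤ ENNReal.ofReal C')
    {C₄ : ℝ}
    (h4c : ∀ᵐ b ∂ν, ∫⁻ b', ∑' g : Γ, ENNReal.ofReal (Υ n g (a g b) b') * rnD a ν g b ∂ν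
      ≤ ENNReal.ofReal C₄)
    (e : B × ℝ → ℝ) (he : Measurable e) :
    Tsum3 ν θ (fun g b b' t =>
        (↑‖e (a g⁻¹ b, t + R g⁻¹ b')‖₊) * ENNReal.ofReal (Υ n g b b'))
      ≤ ENNReal.ofReal C' * (ENNReal.ofReal C₄ * ∫⁻ p, (↑‖e p‖₊) ∂(ν.prod θ)) := by
  unfold Tsum3
  have hFe : Measurable (fun x => ∫⁻ t, (↑‖e (x, t)‖₊) ∂θ) :=
    Measurable.lintegral_prod_right (he.nnnorm.coe_nnreal_ennreal)
  have hUb : ∀ (g : Γ) (b : B), Measurable (fun b' => ENNReal.ofReal (Υ n g b b')) :=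
    fun g b => ((hΥmeas n g).ennreal_ofReal).comp (measurable_prodMk_left (x := b))
  have hKg : ∀ g : Γ, Measurable (fun b => ∫⁻ b', ENNReal.ofReal (Υ n g b b') ∂ν) :=
    fun g => Measurable.lintegral_prod_right
      (f := fun b b' => ENNReal.ofReal (Υ n g b b')) ((hΥmeas n g).ennreal_ofReal)
  -- step A
  have hA : ∀ g : Γ,
      (∫⁻ b, ∫⁻ b', ∫⁻ t, (↑‖e (a g⁻¹ b, t + R g⁻¹ b')‖₊) *
        ENNReal.ofReal (Υ n g b b') ∂θ ∂ν ∂ν)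
      ≤ ∫⁻ b, ∫⁻ b', (ENNReal.ofReal C' * ∫⁻ t, (↑‖e (a g⁻¹ b, t)‖₊) ∂θ) *
          ENNReal.ofReal (Υ n g b b') ∂ν ∂ν := by
    intro g
    refine lintegral_mono_ae ?_
    filter_upwards [hΥ3 g] with b hb
    refine lintegral_mono_ae ?_
    filter_upwards [hb] with b' hb'
    by_cases hpos : 0 < Υ n g b b'
    · have hC : |R g⁻¹ b'| ≤ C := by
        have h1 := hb' hpos
        have h2 := abs_nonneg (R g⁻¹ b)
        linarith
      have hmt : Measurable (fun t : ℝ => (‖e (a g⁻¹ b, t + R g⁻¹ b')‖₊ : ℝ≥0∞)) :=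
        (he.nnnorm.coe_nnreal_ennreal).comp
          ((measurable_const (a := a g⁻¹ b)).prodMk (measurable_id.add_const _))
      rw [lintegral_mul_const _ hmt]
      refine mul_le_mul_left ?_ _
      exact lint_shift θ hθeq hθshift (φ := fun s => (↑‖e (a g⁻¹ b, s)‖₊ : ℝ≥0∞))
        ((he.nnnorm.coe_nnreal_ennreal).comp (measurable_prodMk_left (x := a g⁻¹ b))) hC
    · have hz : ENNReal.ofReal (Υ n g b b') = 0 := by
        simpa [ENNReal.ofReal_eq_zero] using not_lt.1 hpos
      simp [hz]
  -- step B and C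
  have hBC : ∀ g : Γ,
      (∫⁻ b, ∫⁻ b', (ENNReal.ofReal C' * ∫⁻ t, (↑‖e (a g⁻¹ b, t)‖₊) ∂θ) *
        ENNReal.ofReal (Υ n g b b') ∂ν ∂ν)
      = ENNReal.ofReal C' * ∫⁻ x, (∫⁻ t, (↑‖e (x, t)‖₊) ∂θ) *
          ((∫⁻ b', ENNReal.ofReal (Υ n g (a g x) b') ∂ν) * rnD a ν g x) ∂ν := by
    intro g
    have hG : Measurable (fun x => (∫⁻ t, (↑‖e (x, t)‖₊) ∂θ) *
        ((∫⁻ b', ENNReal.ofReal (Υ n g (a g x) b') ∂ν))) :=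
      hFe.mul ((hKg g).comp (hact.1 g))
    calc ∫⁻ b, ∫⁻ b', (ENNReal.ofReal C' * ∫⁻ t, (↑‖e (a g⁻¹ b, t)‖₊) ∂θ) *
          ENNReal.ofReal (Υ n g b b') ∂ν ∂ν
        = ∫⁻ b, ENNReal.ofReal C' * ((∫⁻ t, (↑‖e (a g⁻¹ b, t)‖₊) ∂θ) *
            ((∫⁻ b', ENNReal.ofReal (Υ n g (a g (a g⁻¹ b)) b') ∂ν))) ∂ν := by
          congr 1; funext b
          rw [lintegral_const_mul _ (hUb g b), a_inv_cancel hact g b, mul_assoc]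
      _ = ENNReal.ofReal C' * ∫⁻ b, (∫⁻ t, (↑‖e (a g⁻¹ b, t)‖₊) ∂θ) *
            ((∫⁻ b', ENNReal.ofReal (Υ n g (a g (a g⁻¹ b)) b') ∂ν)) ∂ν :=
          lintegral_const_mul _ (hG.comp (hact.1 g⁻¹))
      _ = ENNReal.ofReal C' * ∫⁻ x, (∫⁻ t, (↑‖e (x, t)‖₊) ∂θ) *
            ((∫⁻ b', ENNReal.ofReal (Υ n g (a g x) b') ∂ν) * rnD a ν g x) ∂ν := by
          congr 1
          rw [cov a ν hact g hG]
          congr 1; funext x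
          rw [mul_assoc]
  -- assemble
  calc ∑' g : Γ, ∫⁻ b, ∫⁻ b', ∫⁻ t, (↑‖e (a g⁻¹ b, t + R g⁻¹ b')‖₊) *
        ENNReal.ofReal (Υ n g b b') ∂θ ∂ν ∂ν
      ≤ ∑' g : Γ, ∫⁻ b, ∫⁻ b', (ENNReal.ofReal C' * ∫⁻ t, (↑‖e (a g⁻¹ b, t)‖₊) ∂θ) *
          ENNReal.ofReal (Υ n g b b') ∂ν ∂ν := ENNReal.tsum_le_tsum hA
    _ = ∑' g : Γ, ENNReal.ofReal C' * ∫⁻ x, (∫⁻ t, (↑‖e (x, t)‖₊) ∂θ) *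
          ((∫⁻ b', ENNReal.ofReal (Υ n g (a g x) b') ∂ν) * rnD a ν g x) ∂ν := tsum_congr hBC
    _ = ENNReal.ofReal C' * ∑' g : Γ, ∫⁻ x, (∫⁻ t, (↑‖e (x, t)‖₊) ∂θ) *
          ((∫⁻ b', ENNReal.ofReal (Υ n g (a g x) b') ∂ν) * rnD a ν g x) ∂ν :=
        ENNReal.tsum_mul_left
    _ = ENNReal.ofReal C' * ∫⁻ x, (∫⁻ t, (↑‖e (x, t)‖₊) ∂θ) *
          ∑' g : Γ, ((∫⁻ b', ENNReal.ofReal (Υ n g (a g x) b') ∂ν) * rnD a ν g x) ∂ν := by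
        congr 1
        rw [← lintegral_tsum]
        · congr 1; funext x; rw [ENNReal.tsum_mul_left]
        · intro g
          exact (hFe.mul (((hKg g).comp (hact.1 g)).mul
            (Measure.measurable_rnDeriv _ _))).aemeasurable
    _ ≤ ENNReal.ofReal C' * ∫⁻ x, (∫⁻ t, (↑‖e (x, t)‖₊) ∂θ) * ENNReal.ofReal C₄ ∂ν := by
        refine mul_le_mul_right ?_ _
        refine lintegral_mono_ae ?_
        filter_upwards [h4c] with x hx
        refine mul_le_mul_right ?_ _
        calc ∑' g : Γ, (∫⁻ b', ENNReal.ofReal (Υ n g (a g x) b') ∂ν) * rnD a ν g x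
            = ∑' g : Γ, ∫⁻ b', ENNReal.ofReal (Υ n g (a g x) b') * rnD a ν g x ∂ν := by
              refine tsum_congr fun g => ?_
              rw [lintegral_mul_const _ (hUb g (a g x))]
          _ = ∫⁻ b', ∑' g : Γ, ENNReal.ofReal (Υ n g (a g x) b') * rnD a ν g x ∂ν := by
              refine (lintegral_tsum fun g => ?_).symm
              exact ((hUb g (a g x)).mul measurable_const).aemeasurable
          _ ≤ ENNReal.ofReal C₄ := hx
    _ = ENNReal.ofReal C' * (ENNReal.ofReal C₄ * ∫⁻ p, (↑‖e p‖₊) ∂(ν.prod θ)) := by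
        congr 1
        rw [lintegral_prod _ (he.nnnorm.coe_nnreal_ennreal).aemeasurable,
          ← lintegral_const_mul _ hFe]
        congr 1; funext x; rw [mul_comm]

end MyStep3d

/-- Proposition 3.4 of the paper: if `f ∈ L¹(ν × θ)` is invariant for the
Maharam-type action `g·(b,t) = (gb, t + R(g,b))`, then `‖f − Z_n f‖₁ → 0`. -/
theorem stmt7 {Γ B : Type} [Group Γ] [Countable Γ] [MetricSpace B] [CompactSpace B]
    [MeasurableSpace B] [BorelSpace B]
    (ν : Measure B) [IsProbabilityMeasure ν] (a : Γ → B → B)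
    (hact : IsNonsingularAction a ν)
    (R : Γ → B → ℝ) (hRmeas : ∀ g : Γ, Measurable (R g))
    (hRcoc : ∀ (g₁ g₂ : Γ) (b : B), R (g₂ * g₁) b = R g₂ (a g₁ b) + R g₁ b)
    (hRrn : ∀ g : Γ, ∀ᵐ b ∂ν, ENNReal.ofReal (Real.exp (R g b)) = rnD a ν g b)
    (Υ : ℕ → Γ → B → B → ℝ) (C : ℝ) (hadm : IsAdmissibleFamily a ν R Υ C)
    (θ : Measure ℝ) (hθprob : IsProbabilityMeasure θ)
    (hθeq : θ ≪ (volume : Measure ℝ) ∧ (volume : Measure ℝ) ≪ θ)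
    (C' : ℝ) (hC' : 0 < C')
    (hθshift : ∀ t₀ : ℝ, |t₀| ≤ C →
      ∀ᵐ r ∂θ, (θ.map (fun s => s - t₀)).rnDeriv θ r ≤ ENNReal.ofReal C')
    (f : B × ℝ → ℝ) (hf : Integrable f (ν.prod θ))
    (hinv : ∀ g : Γ, ∀ᵐ p ∂(ν.prod θ), f (a g p.1, p.2 + R g p.1) = f p) :
    Tendsto (fun n => eLpNorm (fun p => f p - Zop a ν R Υ n f p) 1 (ν.prod θ))
      atTop (nhds 0) := by
  classical
  obtain ⟨hC0, hΥnn, hΥmeas, hΥ1, ⟨β, hβ0, hβsupp⟩, hΥ3, C₄, hC₄0, h4a, h4b, h4c⟩ := hadm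
  have hfm := hf.aestronglyMeasurable
  set f₀ : B × ℝ → ℝ := hfm.mk f with hf₀def
  have hf₀meas : Measurable f₀ := hfm.stronglyMeasurable_mk.measurable
  have hff₀ : f =ᵐ[ν.prod θ] f₀ := hfm.ae_eq_mk
  have hf₀int : Integrable f₀ (ν.prod θ) := hf.congr hff₀
  -- invariance for the measurable representative
  have hS : ∀ g : Γ, ∀ᵐ q ∂(ν.prod θ), f₀ (a g⁻¹ q.1, q.2 + R g⁻¹ q.1) = f₀ q := by
    intro g
    have h2 : ∀ᵐ q ∂(ν.prod θ),
        f (a g⁻¹ q.1, q.2 + R g⁻¹ q.1) = f₀ (a g⁻¹ q.1, q.2 + R g⁻¹ q.1) :=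
      ae_pullback2 ν θ hθeq (hact.1 g⁻¹) (hRmeas g⁻¹) (hact.2.2.2 g⁻¹).1 hff₀
    filter_upwards [hinv g⁻¹, h2, hff₀] with q hq1 hq2 hq3
    rw [← hq2, hq1, hq3]
  rw [ENNReal.tendsto_nhds_zero]
  intro ε hε
  obtain ⟨c, hc0, hcε⟩ := exists_between hε
  have hcne : c ≠ ∞ := (lt_of_lt_of_le hcε le_top).ne
  set κ : ℝ≥0∞ := 3 + ENNReal.ofReal C₄ + 2 * (ENNReal.ofReal C' * ENNReal.ofReal C₄)
    with hκdef
  have h3κ : (3 : ℝ≥0∞) ≤ κ := le_self_add.trans le_self_add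
  have hκ0 : κ ≠ 0 := by
    intro hzero
    rw [hzero] at h3κ
    simp at h3κ
  have hκtop : κ ≠ ∞ := by
    rw [hκdef]
    refine ENNReal.add_ne_top.2 ⟨ENNReal.add_ne_top.2 ⟨by simp, ENNReal.ofReal_ne_top⟩, ?_⟩
    exact ENNReal.mul_ne_top (by simp) (ENNReal.mul_ne_top ENNReal.ofReal_ne_top
      ENNReal.ofReal_ne_top)
  set d : ℝ≥0∞ := c / κ with hddef
  have hd0 : d ≠ 0 := by
    rw [hddef]
    simp [ENNReal.div_eq_zero_iff, hc0.ne', hκtop]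
  have hdtop : d ≠ ∞ := (ENNReal.div_lt_top hcne hκ0).ne
  -- continuous compactly supported approximation
  obtain ⟨h, hhsupp, hhapprox, hhcont, hhint⟩ :=
    hf₀int.exists_hasCompactSupport_lintegral_sub_le (ε := d) hd0
  have hhmeas : Measurable h := hhcont.measurable
  have hemeas : Measurable (fun p : B × ℝ => f₀ p - h p) := hf₀meas.sub hhmeas
  have hebound : ∫⁻ p, (↑‖f₀ p - h p‖₊) ∂(ν.prod θ) ≤ d := hhapprox
  have hrd0 : 0 < d.toReal := ENNReal.toReal_pos hd0 hdtop
  have huc : UniformContinuous h := hhsupp.uniformContinuous_of_continuous hhcont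
  obtain ⟨δ, hδ0, hδ⟩ := Metric.uniformContinuous_iff.1 huc d.toReal hrd0
  rw [eventually_atTop]
  obtain ⟨N, hN⟩ := Metric.tendsto_atTop.1 hβ0 δ hδ0
  refine ⟨N, fun n hn => ?_⟩
  have hβn : |β n| < δ := by
    have := hN n hn
    rwa [Real.dist_eq, sub_zero] at this
  -- the two main reductions
  have h1 := step12 ν a R hRmeas Υ hΥnn hΥmeas hΥ1 hΥ3 θ hθeq hθshift f f₀
    hf₀meas hff₀ hf₀int n
  have h2 := step2 ν a hact R hRmeas Υ hΥmeas θ hθeq f₀ hf₀meas hS n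
  -- split P
  have hPsplit : Tsum3 ν θ (fun g b b' t =>
      (↑‖f₀ (b, t) - f₀ (b', t)‖₊) * ENNReal.ofReal (Υ n g b b'))
      ≤ Tsum3 ν θ (fun g b b' t =>
          (↑‖h (b, t) - h (b', t)‖₊) * ENNReal.ofReal (Υ n g b b'))
        + (Tsum3 ν θ (fun g b b' t =>
            (↑‖f₀ (b, t) - h (b, t)‖₊) * ENNReal.ofReal (Υ n g b b'))
          + Tsum3 ν θ (fun g b b' t =>
            (↑‖f₀ (b', t) - h (b', t)‖₊) * ENNReal.ofReal (Υ n g b b'))) := by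
    have hmono := Tsum3_mono_ae ν θ
      (K₁ := fun g b b' t =>
        (↑‖f₀ (b, t) - f₀ (b', t)‖₊) * ENNReal.ofReal (Υ n g b b'))
      (K₂ := fun g b b' t =>
        (↑‖h (b, t) - h (b', t)‖₊) * ENNReal.ofReal (Υ n g b b')
        + ((↑‖f₀ (b, t) - h (b, t)‖₊) * ENNReal.ofReal (Υ n g b b')
          + (↑‖f₀ (b', t) - h (b', t)‖₊) * ENNReal.ofReal (Υ n g b b')))
      (by
        intro g
        refine Eventually.of_forall fun b => Eventually.of_forall fun b' =>
          Eventually.of_forall fun t => ?_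
        have htri : (↑‖f₀ (b, t) - f₀ (b', t)‖₊ : ℝ≥0∞)
            ≤ ↑‖h (b, t) - h (b', t)‖₊
              + (↑‖f₀ (b, t) - h (b, t)‖₊ + ↑‖f₀ (b', t) - h (b', t)‖₊) := by
          have hdecomp : f₀ (b, t) - f₀ (b', t) =
              (h (b, t) - h (b', t)) + ((f₀ (b, t) - h (b, t)) - (f₀ (b', t) - h (b', t))) := by
            ring
          rw [hdecomp]
          calc (↑‖(h (b, t) - h (b', t)) + ((f₀ (b, t) - h (b, t)) -
                (f₀ (b', t) - h (b', t)))‖₊ : ℝ≥0∞)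
              ≤ ↑‖h (b, t) - h (b', t)‖₊ + ↑‖(f₀ (b, t) - h (b, t)) -
                (f₀ (b', t) - h (b', t))‖₊ := by
                rw [← ENNReal.coe_add]; exact ENNReal.coe_le_coe.2 (nnnorm_add_le _ _)
            _ ≤ ↑‖h (b, t) - h (b', t)‖₊ + (↑‖f₀ (b, t) - h (b, t)‖₊ +
                ↑‖f₀ (b', t) - h (b', t)‖₊) := by
                refine add_le_add_right ?_ _
                rw [← ENNReal.coe_add]; exact ENNReal.coe_le_coe.2 (nnnorm_sub_le _ _)
        calc (↑‖f₀ (b, t) - f₀ (b', t)‖₊ : ℝ≥0∞) * ENNReal.ofReal (Υ n g b b')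
            ≤ (↑‖h (b, t) - h (b', t)‖₊
              + (↑‖f₀ (b, t) - h (b, t)‖₊ + ↑‖f₀ (b', t) - h (b', t)‖₊)) *
                ENNReal.ofReal (Υ n g b b') := mul_le_mul_left htri _
          _ = _ := by ring)
    refine hmono.trans (le_of_eq ?_)
    have hUmq : ∀ g : Γ, Measurable (fun q : (B × B) × ℝ =>
        ENNReal.ofReal (Υ n g q.1.1 q.1.2)) :=
      fun g => ((hΥmeas n g).ennreal_ofReal).comp
        (measurable_fst.fst.prodMk measurable_fst.snd)
    have hm1 : ∀ g : Γ, Measurable (fun q : (B × B) × ℝ =>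
        (↑‖h (q.1.1, q.2) - h (q.1.2, q.2)‖₊ : ℝ≥0∞) * ENNReal.ofReal (Υ n g q.1.1 q.1.2)) :=
      fun g => (((hhmeas.comp (measurable_fst.fst.prodMk measurable_snd)).sub
        (hhmeas.comp (measurable_fst.snd.prodMk measurable_snd))).nnnorm.coe_nnreal_ennreal).mul
        (hUmq g)
    have hm2 : ∀ g : Γ, Measurable (fun q : (B × B) × ℝ =>
        (↑‖f₀ (q.1.1, q.2) - h (q.1.1, q.2)‖₊ : ℝ≥0∞) * ENNReal.ofReal (Υ n g q.1.1 q.1.2)) :=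
      fun g => ((hemeas.comp (measurable_fst.fst.prodMk measurable_snd)).nnnorm.coe_nnreal_ennreal).mul
        (hUmq g)
    have hm3 : ∀ g : Γ, Measurable (fun q : (B × B) × ℝ =>
        (↑‖f₀ (q.1.2, q.2) - h (q.1.2, q.2)‖₊ : ℝ≥0∞) * ENNReal.ofReal (Υ n g q.1.1 q.1.2)) :=
      fun g => ((hemeas.comp (measurable_fst.snd.prodMk measurable_snd)).nnnorm.coe_nnreal_ennreal).mul
        (hUmq g)
    rw [Tsum3_add ν θ hm1 (fun g => (hm2 g).add (hm3 g)),
      Tsum3_add ν θ hm2 hm3]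

  -- bounds for the three P-pieces
  have hPh : Tsum3 ν θ (fun g b b' t =>
      (↑‖h (b, t) - h (b', t)‖₊) * ENNReal.ofReal (Υ n g b b')) ≤ d := by
    have hmono := Tsum3_mono_ae ν θ
      (K₁ := fun g b b' t => (↑‖h (b, t) - h (b', t)‖₊) * ENNReal.ofReal (Υ n g b b'))
      (K₂ := fun g b b' _t => d * ENNReal.ofReal (Υ n g b b'))
      (by
        intro g
        refine Eventually.of_forall fun b => Eventually.of_forall fun b' =>
          Eventually.of_forall fun t => ?_
        by_cases hpos : 0 < Υ n g b b'
        · refine mul_le_mul_left ?_ _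
          have hdist : dist ((b, t) : B × ℝ) ((b', t) : B × ℝ) < δ := by
            rw [Prod.dist_eq]
            simp only [dist_self]
            rw [max_eq_left dist_nonneg]
            exact lt_of_le_of_lt ((hβsupp n g b b' hpos).1.trans (le_abs_self _)) hβn
          have hd2 := hδ hdist
          rw [Real.dist_eq] at hd2
          calc (↑‖h (b, t) - h (b', t)‖₊ : ℝ≥0∞)
              = ENNReal.ofReal |h (b, t) - h (b', t)| := by
                rw [← enorm_eq_nnnorm, ← ofReal_norm, Real.norm_eq_abs]
            _ ≤ ENNReal.ofReal d.toReal := ENNReal.ofReal_le_ofReal hd2.le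
            _ = d := ENNReal.ofReal_toReal hdtop
        · have hz : ENNReal.ofReal (Υ n g b b') = 0 := by
            simpa [ENNReal.ofReal_eq_zero] using not_lt.1 hpos
          simp [hz])
    exact hmono.trans (le_of_eq (Tsum3_mass ν θ Υ hΥmeas hΥ1 n d))
  have hPe1 : Tsum3 ν θ (fun g b b' t =>
      (↑‖f₀ (b, t) - h (b, t)‖₊) * ENNReal.ofReal (Υ n g b b')) ≤ d :=
    (step3_Pe1 ν θ Υ hΥmeas hΥ1 n (fun p => f₀ p - h p) hemeas).le.trans hebound
  have hPe2 : Tsum3 ν θ (fun g b b' t =>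
      (↑‖f₀ (b', t) - h (b', t)‖₊) * ENNReal.ofReal (Υ n g b b'))
      ≤ ENNReal.ofReal C₄ * d :=
    (step3_Pe2 ν θ Υ hΥmeas (n := n) (h4a n) (fun p => f₀ p - h p) hemeas).trans
      (mul_le_mul_right hebound _)
  -- split Q
  have hQsplit : Tsum3 ν θ (fun g b b' t =>
      (↑‖f₀ (a g⁻¹ b', t + R g⁻¹ b') - f₀ (a g⁻¹ b, t + R g⁻¹ b')‖₊) *
        ENNReal.ofReal (Υ n g b b'))
      ≤ Tsum3 ν θ (fun g b b' t =>
          (↑‖h (a g⁻¹ b', t + R g⁻¹ b') - h (a g⁻¹ b, t + R g⁻¹ b')‖₊) *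
            ENNReal.ofReal (Υ n g b b'))
        + (Tsum3 ν θ (fun g b b' t =>
            (↑‖f₀ (a g⁻¹ b', t + R g⁻¹ b') - h (a g⁻¹ b', t + R g⁻¹ b')‖₊) *
              ENNReal.ofReal (Υ n g b b'))
          + Tsum3 ν θ (fun g b b' t =>
            (↑‖f₀ (a g⁻¹ b, t + R g⁻¹ b') - h (a g⁻¹ b, t + R g⁻¹ b')‖₊) *
              ENNReal.ofReal (Υ n g b b'))) := by
    have hmono := Tsum3_mono_ae ν θ
      (K₁ := fun g b b' t =>
        (↑‖f₀ (a g⁻¹ b', t + R g⁻¹ b') - f₀ (a g⁻¹ b, t + R g⁻¹ b')‖₊) *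
          ENNReal.ofReal (Υ n g b b'))
      (K₂ := fun g b b' t =>
        (↑‖h (a g⁻¹ b', t + R g⁻¹ b') - h (a g⁻¹ b, t + R g⁻¹ b')‖₊) *
          ENNReal.ofReal (Υ n g b b')
        + ((↑‖f₀ (a g⁻¹ b', t + R g⁻¹ b') - h (a g⁻¹ b', t + R g⁻¹ b')‖₊) *
            ENNReal.ofReal (Υ n g b b')
          + (↑‖f₀ (a g⁻¹ b, t + R g⁻¹ b') - h (a g⁻¹ b, t + R g⁻¹ b')‖₊) *
            ENNReal.ofReal (Υ n g b b')))
      (by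
        intro g
        refine Eventually.of_forall fun b => Eventually.of_forall fun b' =>
          Eventually.of_forall fun t => ?_
        set x : B × ℝ := (a g⁻¹ b', t + R g⁻¹ b')
        set y : B × ℝ := (a g⁻¹ b, t + R g⁻¹ b')
        have htri : (↑‖f₀ x - f₀ y‖₊ : ℝ≥0∞)
            ≤ ↑‖h x - h y‖₊ + (↑‖f₀ x - h x‖₊ + ↑‖f₀ y - h y‖₊) := by
          have hdecomp : f₀ x - f₀ y = (h x - h y) + ((f₀ x - h x) - (f₀ y - h y)) := by ring
          rw [hdecomp]
          calc (↑‖(h x - h y) + ((f₀ x - h x) - (f₀ y - h y))‖₊ : ℝ≥0∞)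
              ≤ ↑‖h x - h y‖₊ + ↑‖(f₀ x - h x) - (f₀ y - h y)‖₊ := by
                rw [← ENNReal.coe_add]; exact ENNReal.coe_le_coe.2 (nnnorm_add_le _ _)
            _ ≤ ↑‖h x - h y‖₊ + (↑‖f₀ x - h x‖₊ + ↑‖f₀ y - h y‖₊) := by
                refine add_le_add_right ?_ _
                rw [← ENNReal.coe_add]; exact ENNReal.coe_le_coe.2 (nnnorm_sub_le _ _)
        calc (↑‖f₀ x - f₀ y‖₊ : ℝ≥0∞) * ENNReal.ofReal (Υ n g b b')
            ≤ (↑‖h x - h y‖₊ + (↑‖f₀ x - h x‖₊ + ↑‖f₀ y - h y‖₊)) *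
              ENNReal.ofReal (Υ n g b b') := mul_le_mul_left htri _
          _ = _ := by ring)
    refine hmono.trans (le_of_eq ?_)
    have hUmq : ∀ g : Γ, Measurable (fun q : (B × B) × ℝ =>
        ENNReal.ofReal (Υ n g q.1.1 q.1.2)) :=
      fun g => ((hΥmeas n g).ennreal_ofReal).comp
        (measurable_fst.fst.prodMk measurable_fst.snd)
    have hargm1 : ∀ g : Γ, Measurable (fun q : (B × B) × ℝ =>
        ((a g⁻¹ q.1.2, q.2 + R g⁻¹ q.1.2) : B × ℝ)) :=
      fun g => ((hact.1 g⁻¹).comp measurable_fst.snd).prodMk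
        (measurable_snd.add ((hRmeas g⁻¹).comp measurable_fst.snd))
    have hargm2 : ∀ g : Γ, Measurable (fun q : (B × B) × ℝ =>
        ((a g⁻¹ q.1.1, q.2 + R g⁻¹ q.1.2) : B × ℝ)) :=
      fun g => ((hact.1 g⁻¹).comp measurable_fst.fst).prodMk
        (measurable_snd.add ((hRmeas g⁻¹).comp measurable_fst.snd))
    have hm1 : ∀ g : Γ, Measurable (fun q : (B × B) × ℝ =>
        (↑‖h (a g⁻¹ q.1.2, q.2 + R g⁻¹ q.1.2) - h (a g⁻¹ q.1.1, q.2 + R g⁻¹ q.1.2)‖₊ : ℝ≥0∞) *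
          ENNReal.ofReal (Υ n g q.1.1 q.1.2)) :=
      fun g => (((hhmeas.comp (hargm1 g)).sub
        (hhmeas.comp (hargm2 g))).nnnorm.coe_nnreal_ennreal).mul (hUmq g)
    have hm2 : ∀ g : Γ, Measurable (fun q : (B × B) × ℝ =>
        (↑‖f₀ (a g⁻¹ q.1.2, q.2 + R g⁻¹ q.1.2) - h (a g⁻¹ q.1.2, q.2 + R g⁻¹ q.1.2)‖₊ : ℝ≥0∞) *
          ENNReal.ofReal (Υ n g q.1.1 q.1.2)) :=
      fun g => ((hemeas.comp (hargm1 g)).nnnorm.coe_nnreal_ennreal).mul (hUmq g)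
    have hm3 : ∀ g : Γ, Measurable (fun q : (B × B) × ℝ =>
        (↑‖f₀ (a g⁻¹ q.1.1, q.2 + R g⁻¹ q.1.2) - h (a g⁻¹ q.1.1, q.2 + R g⁻¹ q.1.2)‖₊ : ℝ≥0∞) *
          ENNReal.ofReal (Υ n g q.1.1 q.1.2)) :=
      fun g => ((hemeas.comp (hargm2 g)).nnnorm.coe_nnreal_ennreal).mul (hUmq g)
    rw [Tsum3_add ν θ hm1 (fun g => (hm2 g).add (hm3 g)), Tsum3_add ν θ hm2 hm3]
  -- bounds for the three Q-pieces
  have hQh : Tsum3 ν θ (fun g b b' t =>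
      (↑‖h (a g⁻¹ b', t + R g⁻¹ b') - h (a g⁻¹ b, t + R g⁻¹ b')‖₊) *
        ENNReal.ofReal (Υ n g b b')) ≤ d := by
    have hmono := Tsum3_mono_ae ν θ
      (K₁ := fun g b b' t =>
        (↑‖h (a g⁻¹ b', t + R g⁻¹ b') - h (a g⁻¹ b, t + R g⁻¹ b')‖₊) *
          ENNReal.ofReal (Υ n g b b'))
      (K₂ := fun g b b' _t => d * ENNReal.ofReal (Υ n g b b'))
      (by
        intro g
        refine Eventually.of_forall fun b => Eventually.of_forall fun b' =>
          Eventually.of_forall fun t => ?_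
        by_cases hpos : 0 < Υ n g b b'
        · refine mul_le_mul_left ?_ _
          have hdist : dist ((a g⁻¹ b', t + R g⁻¹ b') : B × ℝ)
              ((a g⁻¹ b, t + R g⁻¹ b') : B × ℝ) < δ := by
            rw [Prod.dist_eq]
            simp only [dist_self]
            rw [max_eq_left dist_nonneg, dist_comm]
            exact lt_of_le_of_lt ((hβsupp n g b b' hpos).2.trans (le_abs_self _)) hβn
          have hd2 := hδ hdist
          rw [Real.dist_eq] at hd2
          calc (↑‖h (a g⁻¹ b', t + R g⁻¹ b') - h (a g⁻¹ b, t + R g⁻¹ b')‖₊ : ℝ≥0∞)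
              = ENNReal.ofReal |h (a g⁻¹ b', t + R g⁻¹ b') - h (a g⁻¹ b, t + R g⁻¹ b')| := by
                rw [← enorm_eq_nnnorm, ← ofReal_norm, Real.norm_eq_abs]
            _ ≤ ENNReal.ofReal d.toReal := ENNReal.ofReal_le_ofReal hd2.le
            _ = d := ENNReal.ofReal_toReal hdtop
        · have hz : ENNReal.ofReal (Υ n g b b') = 0 := by
            simpa [ENNReal.ofReal_eq_zero] using not_lt.1 hpos
          simp [hz])
    exact hmono.trans (le_of_eq (Tsum3_mass ν θ Υ hΥmeas hΥ1 n d))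
  have hQe1 : Tsum3 ν θ (fun g b b' t =>
      (↑‖f₀ (a g⁻¹ b', t + R g⁻¹ b') - h (a g⁻¹ b', t + R g⁻¹ b')‖₊) *
        ENNReal.ofReal (Υ n g b b'))
      ≤ ENNReal.ofReal C' * (ENNReal.ofReal C₄ * d) :=
    (step3_Qe1 ν a hact R hRmeas Υ hΥmeas n (fun g => hΥ3 n g) θ hθeq hθshift (h4b n)
      (fun p => f₀ p - h p) hemeas).trans
      (mul_le_mul_right (mul_le_mul_right hebound _) _)
  have hQe2 : Tsum3 ν θ (fun g b b' t =>
      (↑‖f₀ (a g⁻¹ b, t + R g⁻¹ b') - h (a g⁻¹ b, t + R g⁻¹ b')‖₊) *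
        ENNReal.ofReal (Υ n g b b'))
      ≤ ENNReal.ofReal C' * (ENNReal.ofReal C₄ * d) :=
    (step3_Qe2 ν a hact R hRmeas Υ hΥmeas n (fun g => hΥ3 n g) θ hθeq hθshift (h4c n)
      (fun p => f₀ p - h p) hemeas).trans
      (mul_le_mul_right (mul_le_mul_right hebound _) _)
  -- final assembly
  calc eLpNorm (fun p => f p - Zop a ν R Υ n f p) 1 (ν.prod θ)
      ≤ Tsum3 ν θ (fun g b b' t =>
          (↑‖f₀ (b, t) - f₀ (b, t + (R g⁻¹ b' - R g⁻¹ b))‖₊) *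
            ENNReal.ofReal (Υ n g b b')) := h1
    _ ≤ Tsum3 ν θ (fun g b b' t =>
          (↑‖f₀ (b, t) - f₀ (b', t)‖₊) * ENNReal.ofReal (Υ n g b b'))
        + Tsum3 ν θ (fun g b b' t =>
          (↑‖f₀ (a g⁻¹ b', t + R g⁻¹ b') - f₀ (a g⁻¹ b, t + R g⁻¹ b')‖₊) *
            ENNReal.ofReal (Υ n g b b')) := h2
    _ ≤ (d + (d + ENNReal.ofReal C₄ * d))
        + (d + (ENNReal.ofReal C' * (ENNReal.ofReal C₄ * d)
          + ENNReal.ofReal C' * (ENNReal.ofReal C₄ * d))) :=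
        add_le_add (hPsplit.trans (add_le_add hPh (add_le_add hPe1 hPe2)))
          (hQsplit.trans (add_le_add hQh (add_le_add hQe1 hQe2)))
    _ = κ * d := by rw [hκdef]; ring
    _ = c := by rw [hddef]; exact ENNReal.mul_div_cancel hκ0 hκtop
    _ ≤ ε := hcε.le
end

section
/- Let (X,μ) be a finite measure space, n ∈ ℕ, with μ(X) ≥ 2^{−n−1}, and let β be a finite measurable partition of X such that μ(B) ≤ 2^{−n−1} for every B ∈ β. Then there exists a finite measurable partition α of X, each of whose atoms is a union of atoms of β, such that |μ(A) − 2^{−n}| ≤ 2^{−n−1} for every A ∈ α. -/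
open MeasureTheory Set ENNReal

-- disjointness of unions of disjoint subfamilies
lemma sUnion_disjoint_aux {X : Type} {β s t : Finset (Set X)}
    (hdisj : ∀ B ∈ β, ∀ B' ∈ β, B ≠ B' → Disjoint B B')
    (hs : s ⊆ β) (ht : t ⊆ β) (hst : ∀ B, B ∈ s → B ∉ t) :
    Disjoint (⋃₀ (s : Set (Set X))) (⋃₀ (t : Set (Set X))) := by
  rw [Set.disjoint_sUnion_left]
  intro B hB
  rw [Set.disjoint_sUnion_right]
  intro B' hB'
  simp only [Finset.mem_coe] at hB hB'
  exact hdisj B (hs hB) B' (ht hB') (fun h => hst B hB (h ▸ hB'))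

-- minimal subset with measure ≥ c
lemma exists_subset_between {X : Type} [MeasurableSpace X] (μ : Measure X) (c : ℝ≥0∞)
    (hc0 : 0 < c) (hctop : c ≠ ⊤) (β : Finset (Set X))
    (hsmall : ∀ B ∈ β, μ B ≤ c) (hbig : c ≤ μ (⋃₀ (β : Set (Set X)))) :
    ∃ s : Finset (Set X), s ⊆ β ∧ s.Nonempty ∧ c ≤ μ (⋃₀ (s : Set (Set X))) ∧
      μ (⋃₀ (s : Set (Set X))) ≤ 2 * c := by
  classical
  set T := β.powerset.filter (fun s : Finset (Set X) => c ≤ μ (⋃₀ (s : Set (Set X)))) with hT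
  have hβT : β ∈ T := by
    simp [hT, Finset.mem_filter, Finset.mem_powerset, hbig]
  obtain ⟨s, hsT, hmin⟩ := T.exists_min_image Finset.card ⟨β, hβT⟩
  simp only [hT, Finset.mem_filter, Finset.mem_powerset] at hsT
  obtain ⟨hsβ, hsc⟩ := hsT
  have hsne : s.Nonempty := by
    rcases s.eq_empty_or_nonempty with h | h
    · exfalso; rw [h] at hsc; simp at hsc
      exact absurd hsc (by simpa using hc0.ne')
    · exact h
  obtain ⟨B, hB⟩ := hsne
  have herase : μ (⋃₀ ((s.erase B : Finset (Set X)) : Set (Set X))) < c := by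
    by_contra h
    push_neg at h
    have hmem : s.erase B ∈ T := by
      simp only [hT, Finset.mem_filter, Finset.mem_powerset]
      exact ⟨(s.erase_subset B).trans hsβ, h⟩
    have := hmin _ hmem
    have hlt : (s.erase B).card < s.card := Finset.card_erase_lt_of_mem hB
    omega
  refine ⟨s, hsβ, ⟨B, hB⟩, hsc, ?_⟩
  have hsplit : (⋃₀ (s : Set (Set X))) = B ∪ ⋃₀ ((s.erase B : Finset (Set X)) : Set (Set X)) := by
    rw [← Set.sUnion_insert]
    congr 1
    rw [← Finset.coe_insert, Finset.insert_erase hB]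
  calc μ (⋃₀ (s : Set (Set X))) ≤ μ B + μ (⋃₀ ((s.erase B : Finset (Set X)) : Set (Set X))) := by
        rw [hsplit]; exact measure_union_le _ _
    _ ≤ c + c := add_le_add (hsmall B (hsβ hB)) herase.le
    _ = 2 * c := (two_mul c).symm

lemma main_lemma {X : Type} [MeasurableSpace X] (μ : Measure X) (c : ℝ≥0∞)
    (hc0 : 0 < c) (hctop : c ≠ ⊤) :
    ∀ β : Finset (Set X), (∀ B ∈ β, MeasurableSet B) →
      (∀ B ∈ β, ∀ B' ∈ β, B ≠ B' → Disjoint B B') →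
      (∀ B ∈ β, μ B ≤ c) →
      c ≤ μ (⋃₀ (β : Set (Set X))) →
      μ (⋃₀ (β : Set (Set X))) ≠ ⊤ →
      ∃ α : Finset (Set X),
        (∀ A ∈ α, ∀ A' ∈ α, A ≠ A' → Disjoint A A') ∧
        ⋃₀ (α : Set (Set X)) = ⋃₀ (β : Set (Set X)) ∧
        (∀ A ∈ α, ∃ s : Finset (Set X), s ⊆ β ∧ A = ⋃₀ (s : Set (Set X))) ∧
        (∀ A ∈ α, c ≤ μ A ∧ μ A ≤ 3 * c) := by
  classical
  intro β
  induction β using Finset.strongInduction with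
  | _ β ih =>
  intro hmeas hdisj hsmall hbig hfin
  by_cases hle : μ (⋃₀ (β : Set (Set X))) ≤ 3 * c
  · refine ⟨{⋃₀ (β : Set (Set X))}, ?_, ?_, ?_, ?_⟩
    · intro A hA A' hA' hne
      simp only [Finset.mem_singleton] at hA hA'
      exact absurd (hA.trans hA'.symm) hne
    · simp
    · intro A hA
      simp only [Finset.mem_singleton] at hA
      exact ⟨β, le_refl _, hA⟩
    · intro A hA
      simp only [Finset.mem_singleton] at hA
      exact hA ▸ ⟨hbig, hle⟩
  · push_neg at hle
    obtain ⟨s, hsβ, hsne, hs1, hs2⟩ := exists_subset_between μ c hc0 hctop β hsmall hbig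
    set β' := β \ s with hβ'
    have hssub : β' ⊂ β := Finset.sdiff_ssubset hsβ hsne
    have hdisjU : Disjoint (⋃₀ (s : Set (Set X))) (⋃₀ ((β' : Finset (Set X)) : Set (Set X))) :=
      sUnion_disjoint_aux hdisj hsβ (Finset.sdiff_subset) (fun B hBs hBβ' => by
        rw [hβ', Finset.mem_sdiff] at hBβ'; exact hBβ'.2 hBs)
    have hsplit : (⋃₀ (β : Set (Set X))) = ⋃₀ (s : Set (Set X)) ∪ ⋃₀ ((β' : Finset (Set X)) : Set (Set X)) := by
      rw [← Set.sUnion_union, ← Finset.coe_union, Finset.union_sdiff_of_subset hsβ]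
    have hmeasβ' : MeasurableSet (⋃₀ ((β' : Finset (Set X)) : Set (Set X))) := by
      apply MeasurableSet.sUnion ((β' : Finset (Set X)) : Set (Set X)).to_countable
      intro B hB
      exact hmeas B (Finset.sdiff_subset (by exact_mod_cast hB))
    have hadd : μ (⋃₀ (β : Set (Set X))) =
        μ (⋃₀ (s : Set (Set X))) + μ (⋃₀ ((β' : Finset (Set X)) : Set (Set X))) := by
      rw [hsplit, measure_union hdisjU hmeasβ']
    have hβ'fin : μ (⋃₀ ((β' : Finset (Set X)) : Set (Set X))) ≠ ⊤ := by
      intro h; rw [h, add_top] at hadd; exact hfin hadd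
    have hβ'big : c ≤ μ (⋃₀ ((β' : Finset (Set X)) : Set (Set X))) := by
      by_contra h
      push_neg at h
      have : μ (⋃₀ (β : Set (Set X))) < 2 * c + c := by
        rw [hadd]
        exact ENNReal.add_lt_add_of_le_of_lt
          (ne_top_of_le_ne_top (ENNReal.mul_ne_top ENNReal.ofNat_ne_top hctop) hs2) hs2 h
      have h3 : (2 : ℝ≥0∞) * c + c = 3 * c := by ring
      rw [h3] at this
      exact absurd this (not_lt.mpr hle.le)
    obtain ⟨α', hα'disj, hα'cov, hα'sub, hα'meas⟩ := ih β' hssub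
      (fun B hB => hmeas B (Finset.sdiff_subset hB))
      (fun B hB B' hB' => hdisj B (Finset.sdiff_subset hB) B' (Finset.sdiff_subset hB'))
      (fun B hB => hsmall B (Finset.sdiff_subset hB))
      hβ'big hβ'fin
    refine ⟨insert (⋃₀ (s : Set (Set X))) α', ?_, ?_, ?_, ?_⟩
    · intro A hA A' hA' hne
      simp only [Finset.mem_insert] at hA hA'
      rcases hA with rfl | hA <;> rcases hA' with rfl | hA'
      · exact absurd rfl hne
      · exact hdisjU.mono_right (by rw [← hα'cov]; exact Set.subset_sUnion_of_mem hA')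
      · exact hdisjU.symm.mono_left (by rw [← hα'cov]; exact Set.subset_sUnion_of_mem hA)
      · exact hα'disj A hA A' hA' hne
    · rw [Finset.coe_insert, Set.sUnion_insert, hα'cov, hsplit]
    · intro A hA
      simp only [Finset.mem_insert] at hA
      rcases hA with rfl | hA
      · exact ⟨s, hsβ, rfl⟩
      · obtain ⟨t, ht, hAt⟩ := hα'sub A hA
        exact ⟨t, ht.trans Finset.sdiff_subset, hAt⟩
    · intro A hA
      simp only [Finset.mem_insert] at hA
      rcases hA with rfl | hA
      · refine ⟨hs1, hs2.trans ?_⟩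
        have : (2:ℝ≥0∞) * c ≤ 3 * c := by
          gcongr; norm_num
        exact this
      · exact hα'meas A hA


/-- partition lemma, Lemma 3.11 of the paper: if `(X,μ)` is a finite
measure space with `μ(X) ≥ 2^{-n-1}` and `β` is a finite measurable partition all of whose
atoms have measure at most `2^{-n-1}`, then there is a coarser finite partition `α` (each
atom of `α` is a union of atoms of `β`) with `|μ(A) − 2^{-n}| ≤ 2^{-n-1}` for all `A ∈ α`. -/
theorem stmt11 {X : Type} [MeasurableSpace X] (μ : Measure X) [IsFiniteMeasure μ] (n : ℕ)
    (hX : ENNReal.ofReal ((2 : ℝ) ^ (-(n : ℤ) - 1)) ≤ μ Set.univ)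
    (β : Finset (Set X))
    (hmeas : ∀ B ∈ β, MeasurableSet B)
    (hdisj : ∀ B ∈ β, ∀ B' ∈ β, B ≠ B' → Disjoint B B')
    (hcover : ⋃₀ (β : Set (Set X)) = Set.univ)
    (hsmall : ∀ B ∈ β, μ B ≤ ENNReal.ofReal ((2 : ℝ) ^ (-(n : ℤ) - 1))) :
    ∃ α : Finset (Set X),
      (∀ A ∈ α, ∀ A' ∈ α, A ≠ A' → Disjoint A A') ∧
      ⋃₀ (α : Set (Set X)) = Set.univ ∧
      (∀ A ∈ α, ∃ s : Finset (Set X), s ⊆ β ∧ A = ⋃₀ (s : Set (Set X))) ∧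
      (∀ A ∈ α, |(μ A).toReal - (2 : ℝ) ^ (-(n : ℤ))| ≤ (2 : ℝ) ^ (-(n : ℤ) - 1)) := by
  set r : ℝ := (2 : ℝ) ^ (-(n : ℤ) - 1) with hr
  have hr0 : 0 < r := zpow_pos (by norm_num) _
  set c : ℝ≥0∞ := ENNReal.ofReal r with hc
  have hc0 : 0 < c := ENNReal.ofReal_pos.mpr hr0
  have hctop : c ≠ ⊤ := ENNReal.ofReal_ne_top
  obtain ⟨α, h1, h2, h3, h4⟩ := main_lemma μ c hc0 hctop β hmeas hdisj hsmall
    (by rw [hcover]; exact hX) (by rw [hcover]; exact measure_ne_top μ _)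
  refine ⟨α, h1, by rwa [hcover] at h2, h3, ?_⟩
  intro A hA
  obtain ⟨hlo, hhi⟩ := h4 A hA
  have hAfin : μ A ≠ ⊤ := ne_top_of_le_ne_top (ENNReal.mul_ne_top (by norm_num) hctop) hhi
  have hlo' : r ≤ (μ A).toReal := by
    have := ENNReal.toReal_le_toReal hctop hAfin |>.mpr hlo
    rwa [hc, ENNReal.toReal_ofReal hr0.le] at this
  have hhi' : (μ A).toReal ≤ 3 * r := by
    have := ENNReal.toReal_le_toReal hAfin (ENNReal.mul_ne_top (by norm_num) hctop) |>.mpr hhi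
    rwa [ENNReal.toReal_mul, hc, ENNReal.toReal_ofReal hr0.le,
      show ((3 : ℝ≥0∞).toReal = 3) by norm_num] at this
  have h2r : (2 : ℝ) ^ (-(n : ℤ)) = 2 * r := by
    rw [hr, ← zpow_one_add₀ (two_ne_zero)]
    ring_nf
  rw [h2r, abs_le]
  constructor <;> [linarith; linarith]
end

section
/- Let (X,d) be a δ-hyperbolic metric space and c ≥ 0. Let p,q ∈ X and r_p, r_q > 0 satisfy |r_p − r_q| ≤ d(p,q) − 2c, and let γ : [a,b] → X be a (1,c)-quasi-geodesic with γ(a) = p and γ(b) = q. Then there exists a point x in the image of γ such that B(x, (r_p + r_q − d(p,q))/2 − 2c) ⊆ B(p,r_p) ∩ B(q,r_q) ⊆ B(x, (r_p + r_q − d(p,q))/2 + 6c + 2δ), where B(y,r) = {z ∈ X : d(y,z) ≤ r} denotes the closed ball. -/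
open Filter Set Metric
open scoped Topology

/-- The Gromov product `(x|y)_z = (d(x,z) + d(y,z) − d(x,y))/2`. -/
noncomputable def gromovProd {X : Type*} [MetricSpace X] (x y z : X) : ℝ :=
  (dist x z + dist y z - dist x y) / 2

/-- `(X,d)` is δ-hyperbolic: `(x|y)_w ≥ min((x|z)_w, (y|z)_w) − δ` for all points. -/
def IsDeltaHyperbolic (X : Type*) [MetricSpace X] (δ : ℝ) : Prop :=
  ∀ x y z w : X, min (gromovProd x z w) (gromovProd y z w) - δ ≤ gromovProd x y w

/-- A Gromov sequence (with respect to the basepoint `z`): `(x_i|x_j)_z → ∞` as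
`i, j → ∞`. -/
def IsGromovSeq {X : Type*} [MetricSpace X] (z : X) (x : ℕ → X) : Prop :=
  Tendsto (fun p : ℕ × ℕ => gromovProd (x p.1) (x p.2) z) atTop atTop

/-- `γ` is a `(1,c)`-quasi-geodesic on the set `s ⊆ ℝ`. -/
def IsQuasiGeodesicOn {X : Type*} [MetricSpace X] (γ : ℝ → X) (s : Set ℝ) (c : ℝ) : Prop :=
  ∀ u ∈ s, ∀ v ∈ s, |u - v| - c ≤ dist (γ u) (γ v) ∧ dist (γ u) (γ v) ≤ |u - v| + c

/-- Lemma 5.1 of the paper: in a δ-hyperbolic space, if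
`|r_p − r_q| ≤ d(p,q) − 2c` then there is a point `x` on any `(1,c)`-quasi-geodesic from
`p` to `q` with
`B(x, (r_p+r_q−d(p,q))/2 − 2c) ⊆ B(p,r_p) ∩ B(q,r_q) ⊆ B(x, (r_p+r_q−d(p,q))/2 + 6c + 2δ)`. -/
theorem stmt14 {X : Type} [MetricSpace X] (δ c : ℝ) (hδ : 0 < δ) (hc : 0 ≤ c)
    (hX : IsDeltaHyperbolic X δ) (p q : X) (rp rq : ℝ) (hrp : 0 < rp) (hrq : 0 < rq)
    (hsep : |rp - rq| ≤ dist p q - 2 * c)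
    (a b : ℝ) (hab : a ≤ b) (γ : ℝ → X) (hγa : γ a = p) (hγb : γ b = q)
    (hγ : IsQuasiGeodesicOn γ (Set.Icc a b) c) :
    ∃ x ∈ γ '' Set.Icc a b,
      closedBall x ((rp + rq - dist p q) / 2 - 2 * c) ⊆
        closedBall p rp ∩ closedBall q rq ∧
      closedBall p rp ∩ closedBall q rq ⊆
        closedBall x ((rp + rq - dist p q) / 2 + 6 * c + 2 * δ) := by
  obtain ⟨h1, h2⟩ := abs_le.mp hsep
  have hD0 : 0 ≤ dist p q - 2 * c := le_trans (abs_nonneg _) hsep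
  set D := dist p q with hD
  set s := (rp - rq + D) / 2 with hs
  have hsc : c ≤ s := by simp only [hs]; linarith
  have hsD : s ≤ D - c := by simp only [hs]; linarith
  have hpq := hγ a ⟨le_refl a, hab⟩ b ⟨hab, le_refl b⟩
  rw [hγa, hγb, abs_of_nonpos (by linarith : a - b ≤ 0)] at hpq
  have hab1 : D ≤ (b - a) + c := by have := hpq.1; linarith
  have hab2 : (b - a) - c ≤ D := by have := hpq.2; linarith
  set t := a + s with hts
  have ht : t ∈ Set.Icc a b := ⟨by simp only [hts]; linarith, by simp only [hts]; linarith⟩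
  refine ⟨γ t, ⟨t, ht, rfl⟩, ?_, ?_⟩
  all_goals {
    have hpx := hγ a ⟨le_refl a, hab⟩ t ht
    rw [hγa, show |a - t| = s by rw [abs_of_nonpos (by simp only [hts]; linarith)]; simp [hts]] at hpx
    have hxq := hγ t ht b ⟨hab, le_refl b⟩
    rw [hγb, show |t - b| = b - a - s by
      rw [abs_of_nonpos (by simp only [hts]; linarith)]; simp only [hts]; ring] at hxq
    intro z hz
    first
    | { -- first inclusion
        simp only [mem_closedBall, mem_inter_iff] at hz ⊢
        have t1 := dist_triangle z (γ t) p
        have t2 := dist_triangle z (γ t) q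
        have c1 : dist (γ t) p = dist p (γ t) := dist_comm _ _
        have c2 : dist (γ t) q = dist (γ t) q := rfl
        exact ⟨by linarith [hpx.2], by linarith [hxq.2]⟩ }
    | { -- second inclusion
        simp only [mem_closedBall, mem_inter_iff] at hz ⊢
        obtain ⟨hzp, hzq⟩ := hz
        have hyp := hX p q z (γ t)
        simp only [gromovProd] at hyp
        have cpz : dist p z = dist z p := dist_comm _ _
        have cqz : dist q z = dist z q := dist_comm _ _
        have cqx : dist q (γ t) = dist (γ t) q := dist_comm _ _
        rcases le_total (gromovProd p z (γ t)) (gromovProd q z (γ t)) with hm | hm <;>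
          simp only [gromovProd] at hm
        · rw [min_eq_left hm] at hyp; linarith [hpx.1, hpx.2, hxq.1, hxq.2]
        · rw [min_eq_right hm] at hyp; linarith [hpx.1, hpx.2, hxq.1, hxq.2] }
  }
end

section
/- Let (Γ,d) be a countable group with a left-invariant metric d such that (Γ,d) is a proper, δ-hyperbolic, uniformly (1,c)-quasi-geodesic metric space. Let {q_n} be a Gromov sequence in Γ and define h : Γ → ℝ by h(z) = liminf_{n→∞} (d(z,q_n) − d(q_n,e)). Then for every r > 0 and every real T ≤ r − 2c there exists x ∈ Γ such that B(x, (r+T)/2 − 2c) ⊆ B(e,r) ∩ {z ∈ Γ : h(z) ≤ T + 4δ} and B(e,r) ∩ {z ∈ Γ : h(z) ≤ T − 4δ} ⊆ B(x, (r+T)/2 + 6c + 2δ). -/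
open Filter Set Metric
open scoped Topology

/-- The horofunction of a Gromov sequence `q`, with basepoint the identity:
`h(z) = liminf_n (d(z,q_n) − d(q_n,e))`. -/
noncomputable def horofn {Γ : Type*} [Group Γ] [MetricSpace Γ] (q : ℕ → Γ) (z : Γ) : ℝ :=
  Filter.liminf (fun n => dist z (q n) - dist (q n) (1 : Γ)) Filter.atTop

lemma gromovProd_comm {X : Type*} [MetricSpace X] (x y z : X) :
    gromovProd x y z = gromovProd y x z := by
  unfold gromovProd; rw [dist_comm x y]; ring

/-- Corollary 5.2 of the paper: in a proper, δ-hyperbolic, uniformly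
`(1,c)`-quasi-geodesic group `(Γ,d)` with left-invariant metric, for any horofunction `h`
of a Gromov sequence `{q_n}`, any `r > 0` and `T ≤ r − 2c`, there is `x ∈ Γ` with
`B(x,(r+T)/2 − 2c) ⊆ B(e,r) ∩ {h ≤ T+4δ}` and
`B(e,r) ∩ {h ≤ T−4δ} ⊆ B(x,(r+T)/2 + 6c + 2δ)`. -/
theorem stmt15 {Γ : Type} [Group Γ] [Countable Γ] [MetricSpace Γ]
    (δ c : ℝ) (hδ : 0 < δ) (hc : 0 < c)
    (hleft : ∀ g x y : Γ, dist (g * x) (g * y) = dist x y)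
    (hproper : ∀ (g : Γ) (r : ℝ), (closedBall g r).Finite)
    (hhyp : IsDeltaHyperbolic Γ δ)
    (hqg : ∀ x y : Γ, ∃ (a b : ℝ) (γ : ℝ → Γ), a ≤ b ∧ γ a = x ∧ γ b = y ∧
      IsQuasiGeodesicOn γ (Set.Icc a b) c)
    (q : ℕ → Γ) (hq : IsGromovSeq (1 : Γ) q) :
    ∀ r : ℝ, 0 < r → ∀ T : ℝ, T ≤ r - 2 * c →
      ∃ x : Γ,
        closedBall x ((r + T) / 2 - 2 * c) ⊆
          closedBall (1 : Γ) r ∩ {z : Γ | horofn q z ≤ T + 4 * δ} ∧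
        closedBall (1 : Γ) r ∩ {z : Γ | horofn q z ≤ T - 4 * δ} ⊆
          closedBall x ((r + T) / 2 + 6 * c + 2 * δ) := by
  intro r hr T hT
  set s : ℝ := (r - T) / 2 with hs
  have hsc : c ≤ s := by rw [hs]; linarith
  have hs0 : 0 ≤ s := le_of_lt (lt_of_lt_of_le hc hsc)
  have hρs : (r + T) / 2 - s = T := by rw [hs]; ring
  have hρr : (r + T) / 2 + s = r := by rw [hs]; ring
  -- the key identity relating `dist` and the Gromov product with basepoint 1
  have gpid : ∀ a b : Γ, dist a b = dist a 1 + dist b 1 - 2 * gromovProd a b 1 := by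
    intro a b; unfold gromovProd; ring
  -- bounds on the horofunction summands
  have flb : ∀ (z : Γ) (n : ℕ), -(dist z 1) ≤ dist z (q n) - dist (q n) 1 := by
    intro z n
    have h1 := dist_triangle (q n) z 1
    rw [dist_comm (q n) z] at h1
    linarith
  have fub : ∀ (z : Γ) (n : ℕ), dist z (q n) - dist (q n) 1 ≤ dist z 1 := by
    intro z n
    have h1 := dist_triangle z 1 (q n)
    rw [dist_comm (1 : Γ) (q n)] at h1
    linarith
  have fbdd : ∀ z : Γ, IsBoundedUnder (· ≥ ·) atTop
      (fun n => dist z (q n) - dist (q n) (1 : Γ)) :=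
    fun z => isBoundedUnder_of ⟨-(dist z 1), fun n => flb z n⟩
  have fbdd' : ∀ z : Γ, IsBoundedUnder (· ≤ ·) atTop
      (fun n => dist z (q n) - dist (q n) (1 : Γ)) :=
    fun z => isBoundedUnder_of ⟨dist z 1, fun n => fub z n⟩
  -- threshold extraction from the Gromov sequence property
  have hqK : ∀ K : ℝ, ∃ N : ℕ, ∀ i ≥ N, ∀ j ≥ N, K ≤ gromovProd (q i) (q j) 1 := by
    intro K
    have hev : ∀ᶠ p : ℕ × ℕ in atTop, K ≤ gromovProd (q p.1) (q p.2) 1 :=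
      hq.eventually_ge_atTop K
    obtain ⟨p0, hp0⟩ := eventually_atTop.1 hev
    refine ⟨max p0.1 p0.2, fun i hi j hj => ?_⟩
    exact hp0 (i, j) ⟨le_trans (le_max_left _ _) hi, le_trans (le_max_right _ _) hj⟩
  -- dist (q n) 1 → ∞
  have hdiag : Tendsto (fun n : ℕ => ((n, n) : ℕ × ℕ)) atTop atTop :=
    tendsto_atTop_atTop.2 fun p =>
      ⟨max p.1 p.2, fun n hn =>
        ⟨le_trans (le_max_left _ _) hn, le_trans (le_max_right _ _) hn⟩⟩
  have hdq : Tendsto (fun n => dist (q n) (1 : Γ)) atTop atTop := by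
    have h1 := hq.comp hdiag
    refine h1.congr fun n => ?_
    show gromovProd (q n) (q n) 1 = dist (q n) 1
    unfold gromovProd; rw [dist_self]; ring
  obtain ⟨N₁, hN₁⟩ := eventually_atTop.1 (hdq.eventually_ge_atTop (s + c))
  -- construct candidate points on quasi-geodesics
  have hP : ∀ n : ℕ, N₁ ≤ n → ∃ x : Γ,
      dist x 1 ≤ s + c ∧ dist x (q n) ≤ dist (q n) 1 - s + 2 * c := by
    intro n hn
    obtain ⟨a, b, γ, hab, hγa, hγb, hγ⟩ := hqg 1 (q n)
    have ha : a ∈ Set.Icc a b := ⟨le_refl a, hab⟩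
    have hb : b ∈ Set.Icc a b := ⟨hab, le_refl b⟩
    have hD : dist (1 : Γ) (q n) = dist (q n) (1 : Γ) := dist_comm _ _
    have hDs : s + c ≤ dist (1 : Γ) (q n) := by rw [hD]; exact hN₁ n hn
    obtain ⟨hlow, hhigh⟩ := hγ a ha b hb
    rw [hγa, hγb] at hlow hhigh
    have habs : |a - b| = b - a := by rw [abs_sub_comm]; exact abs_of_nonneg (by linarith)
    rw [habs] at hlow hhigh
    have hba : s ≤ b - a := by linarith
    have ht : a + s ∈ Set.Icc a b := ⟨by linarith, by linarith⟩
    refine ⟨γ (a + s), ?_, ?_⟩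
    · have h2 := (hγ (a + s) ht a ha).2
      rw [hγa] at h2
      rw [show |a + s - a| = s by rw [show a + s - a = s by ring]; exact abs_of_nonneg hs0] at h2
      exact h2
    · have h2 := (hγ (a + s) ht b hb).2
      rw [hγb] at h2
      rw [show |a + s - b| = b - a - s by
        rw [abs_sub_comm]; rw [abs_of_nonneg (by linarith)]; ring] at h2
      rw [← hD]
      linarith
  classical
  -- pick the points
  set X : ℕ → Γ := fun n =>
    if h : ∃ x : Γ, dist x 1 ≤ s + c ∧ dist x (q n) ≤ dist (q n) 1 - s + 2 * c
    then h.choose else 1 with hXdef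
  have hX : ∀ n : ℕ, N₁ ≤ n →
      dist (X n) 1 ≤ s + c ∧ dist (X n) (q n) ≤ dist (q n) 1 - s + 2 * c := by
    intro n hn
    have h := hP n hn
    simp only [hXdef, dif_pos h]
    exact h.choose_spec
  -- pigeonhole: some x occurs infinitely often
  have hinf : ∃ x : Γ, x ∈ closedBall (1 : Γ) (s + c) ∧
      {n : ℕ | N₁ ≤ n ∧ X n = x}.Infinite := by
    by_contra hcon
    push_neg at hcon
    have hsub : Set.Ici N₁ ⊆ ⋃ x ∈ closedBall (1 : Γ) (s + c), {n : ℕ | N₁ ≤ n ∧ X n = x} := by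
      intro n hn
      have h := hX n hn
      exact Set.mem_biUnion (mem_closedBall.2 h.1) ⟨hn, rfl⟩
    have hfin : (Set.Ici N₁).Finite :=
      ((hproper 1 (s + c)).biUnion
        (fun x hx => hcon x hx)).subset hsub
    exact Set.Ici_infinite N₁ hfin
  obtain ⟨x, hxball, hSinf⟩ := hinf
  set S : Set ℕ := {n : ℕ | N₁ ≤ n ∧ X n = x} with hSdef
  set u : ℝ := dist x 1 with hu
  have hxfacts : ∀ n ∈ S, dist x 1 ≤ s + c ∧ dist x (q n) ≤ dist (q n) 1 - s + 2 * c := by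
    intro n hn
    have h := hX n hn.1
    rwa [hn.2] at h
  obtain ⟨n₀, hn₀S⟩ := hSinf.nonempty
  have hu1 : u ≤ s + c := by rw [hu]; exact (hxfacts n₀ hn₀S).1
  have hu2 : s - 2 * c ≤ u := by
    have h1 := (hxfacts n₀ hn₀S).2
    have h2 := dist_triangle (q n₀) x 1
    rw [dist_comm (q n₀) x] at h2
    rw [hu]
    linarith
  set B₀ : ℝ := (u + s) / 2 - c with hB₀
  -- Gromov product with x along S
  have hgS : ∀ n ∈ S, B₀ ≤ gromovProd x (q n) 1 := by
    intro n hn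
    have h1 := (hxfacts n hn).2
    have h2 := gpid x (q n)
    rw [hB₀, hu]
    linarith
  -- eventual lower bound for (x | q m)
  obtain ⟨N₀, hN₀⟩ := hqK B₀
  obtain ⟨n₁, hn₁S, hn₁⟩ := hSinf.exists_gt N₀
  have hBx : ∀ m : ℕ, N₀ ≤ m → B₀ - δ ≤ gromovProd x (q m) 1 := by
    intro m hm
    have h1 := hhyp x (q m) (q n₁) 1
    have h2 := hgS n₁ hn₁S
    have h3 := hN₀ m hm n₁ (le_of_lt hn₁)
    rw [gromovProd_comm (q m) (q n₁)] at h1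
    have h4 : B₀ ≤ min (gromovProd x (q n₁) 1) (gromovProd (q n₁) (q m) 1) := by
      refine le_min h2 ?_
      rw [gromovProd_comm]
      exact h3
    linarith
  refine ⟨x, ?_, ?_⟩
  · -- first inclusion
    intro z hz
    rw [mem_closedBall] at hz
    have hz1 : dist z 1 ≤ (r + T) / 2 - 2 * c + u := by
      have h1 := dist_triangle z x 1
      rw [hu]
      linarith
    constructor
    · rw [mem_closedBall]
      linarith
    · -- horofunction bound
      rw [Set.mem_setOf_eq]
      have hev : ∀ᶠ m in atTop, dist z (q m) - dist (q m) (1 : Γ) ≤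
          dist z 1 - 2 * min (gromovProd z x 1) (B₀ - δ) + 2 * δ := by
        rw [eventually_atTop]
        refine ⟨N₀, fun m hm => ?_⟩
        have h1 := hhyp z (q m) x 1
        rw [gromovProd_comm (q m) x] at h1
        have h2 : min (gromovProd z x 1) (B₀ - δ) ≤
            min (gromovProd z x 1) (gromovProd x (q m) 1) :=
          min_le_min (le_refl _) (hBx m hm)
        have h3 := gpid z (q m)
        linarith
      have hlim : horofn q z ≤ dist z 1 - 2 * min (gromovProd z x 1) (B₀ - δ) + 2 * δ :=
        liminf_le_of_frequently_le hev.frequently (fbdd z)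
      rcases min_cases (gromovProd z x 1) (B₀ - δ) with ⟨hmin, _⟩ | ⟨hmin, _⟩
      · rw [hmin] at hlim
        have h4 := gpid z x
        rw [← hu] at h4
        linarith
      · rw [hmin] at hlim
        rw [hB₀] at hlim
        linarith
  · -- second inclusion
    intro z hz
    obtain ⟨hz1, hz2⟩ := hz
    rw [mem_closedBall] at hz1
    rw [Set.mem_setOf_eq] at hz2
    rw [mem_closedBall]
    set V : ℝ := (dist z 1 - T + 3 * δ) / 2 with hV
    obtain ⟨N₂, hN₂⟩ := hqK V
    have hlt : Filter.liminf (fun n => dist z (q n) - dist (q n) (1 : Γ)) atTop < T - 3 * δ :=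
      lt_of_le_of_lt hz2 (by linarith)
    have hfr : ∃ᶠ m in atTop, dist z (q m) - dist (q m) (1 : Γ) < T - 3 * δ :=
      frequently_lt_of_liminf_lt (fbdd' z).isCoboundedUnder_ge hlt
    obtain ⟨m, hfm, hmge⟩ := (hfr.and_eventually (eventually_ge_atTop N₂)).exists
    -- the Gromov product (z|q_m) is at least V
    have hgm : V ≤ gromovProd z (q m) 1 := by
      have h3 := gpid z (q m)
      rw [hV]
      linarith
    obtain ⟨n, hnS, hn⟩ := hSinf.exists_gt N₂
    -- step 1 : (z|q_n) ≥ V - δ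
    have hstep1 : V - δ ≤ gromovProd z (q n) 1 := by
      have h1 := hhyp z (q n) (q m) 1
      have h2 := hN₂ n (le_of_lt hn) m hmge
      rw [gromovProd_comm (q n) (q m)] at h1
      have h4 : V ≤ min (gromovProd z (q m) 1) (gromovProd (q n) (q m) 1) := le_min hgm h2
      rw [gromovProd_comm (q n) (q m)] at h4
      linarith
    -- step 2 : (z|x) ≥ min (V - δ) B₀ - δ
    have hstep2 : min (V - δ) B₀ - δ ≤ gromovProd z x 1 := by
      have h1 := hhyp z x (q n) 1
      have h2 := hgS n hnS
      have h4 : min (V - δ) B₀ ≤ min (gromovProd z (q n) 1) (gromovProd x (q n) 1) :=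
        min_le_min hstep1 h2
      linarith
    have hdzx := gpid z x
    rw [← hu] at hdzx
    rcases min_cases (V - δ) B₀ with ⟨hmin, _⟩ | ⟨hmin, _⟩
    · rw [hmin, hV] at hstep2
      linarith
    · rw [hmin, hB₀] at hstep2
      linarith
end
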